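/- arXiv:1212.0294 — 7 statements merged into one kernel-verified Lean document; each statement's English description precedes it below -/
import Mathlib

section
/- Let p and q be coprime positive integers with q ≥ 2 and p/q ≥ 4, and write a_0 = ⌊p/q⌋ and k = p − a_0·q (so 1 ≤ k < q). The open interval ( (p/q − 3/(4·a_0·q²))² , p²/q² ) contains an integer if and only if k² ≡ 1 (mod q) and 2a_0 ≡ k·(1 − k²)/q (mod q). In that case it contains exactly one integer, namely d = (p² − 1)/q², and this d satisfies p² − q²·d = 1. -/
lemma nt_aux (A Q K : ℤ) (hQ : 0 < Q) :
    Q^2 ∣ (A*Q+K)^2 - 1 ↔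
      (Int.ModEq Q (K^2) 1 ∧ Int.ModEq Q (2*A) (K * ((1 - K^2)/Q))) := by
  constructor
  · intro h
    have h1 : Q ∣ K^2 - 1 := by
      have hQQ : Q ∣ (A*Q+K)^2 - 1 := dvd_trans ⟨Q, (sq Q)⟩ h
      rcases hQQ with ⟨c, hc⟩
      exact ⟨c - (A^2*Q + 2*A*K), by nlinarith [hc]⟩
    obtain ⟨m, hm⟩ := h1
    have hdvd : Q ∣ 2*A*K + m := by
      have h2 : (A*Q+K)^2 - 1 = Q^2*A^2 + Q*(2*A*K + m) := by nlinarith [hm, sq_nonneg Q]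
      rw [h2] at h
      have h3 : Q^2 ∣ Q*(2*A*K+m) := (dvd_add_right ⟨A^2, rfl⟩).mp h
      rcases h3 with ⟨c, hc⟩
      exact ⟨c, mul_left_cancel₀ hQ.ne' (by nlinarith [hc])⟩
    have hdiv : (1 - K^2)/Q = -m := by
      rw [show (1 : ℤ) - K^2 = Q * (-m) by linarith, Int.mul_ediv_cancel_left _ hQ.ne']
    refine ⟨Int.modEq_iff_dvd.mpr ⟨-m, by linarith⟩, ?_⟩
    rw [hdiv]
    refine Int.modEq_iff_dvd.mpr ?_
    rcases hdvd with ⟨c, hc⟩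
    exact ⟨2*A*m - K*c, by linear_combination (-K) * hc + (2*A) * hm⟩
  · rintro ⟨h1, h2⟩
    have hd1 : Q ∣ K^2 - 1 := by
      rcases Int.modEq_iff_dvd.mp h1 with ⟨c, hc⟩
      exact ⟨-c, by linarith⟩
    obtain ⟨m, hm⟩ := hd1
    have hdiv : (1 - K^2)/Q = -m := by
      rw [show (1 : ℤ) - K^2 = Q * (-m) by linarith, Int.mul_ediv_cancel_left _ hQ.ne']
    rw [hdiv] at h2
    rcases Int.modEq_iff_dvd.mp h2 with ⟨c, hc⟩
    have key : 2*A*K + m = Q*(-c*K - m*m) := by linear_combination (-K) * hc + (-m) * hm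
    exact ⟨A^2 + (-c*K - m*m), by nlinarith [key, hm]⟩

set_option maxHeartbeats 1000000 in
/-- for coprime positive integers `p, q` with `q ≥ 2`, `p/q ≥ 4`,
`a_0 = ⌊p/q⌋`, `k = p - a_0 q`, the open interval `((p/q - 3/(4 a_0 q²))², p²/q²)` contains an
integer iff `k² ≡ 1 (mod q)` and `2a_0 ≡ k (1-k²)/q (mod q)`; in that case it contains exactly
one integer, `d = (p²-1)/q²`, which satisfies `p² - q² d = 1`. -/
theorem stmt_11 (p q : ℕ) (hq : 2 ≤ q) (hcop : Nat.Coprime p q) (hpq : 4 * q ≤ p)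
    (a0 k : ℕ) (ha0 : a0 = p / q) (hk : k = p - a0 * q) :
    ((∃ d : ℤ, ((p : ℝ) / q - 3 / (4 * (a0 : ℝ) * (q : ℝ) ^ 2)) ^ 2 < (d : ℝ) ∧
        (d : ℝ) < ((p : ℝ) / q) ^ 2) ↔
      (Int.ModEq (q : ℤ) ((k : ℤ) ^ 2) 1 ∧
        Int.ModEq (q : ℤ) (2 * (a0 : ℤ)) ((k : ℤ) * ((1 - (k : ℤ) ^ 2) / (q : ℤ))))) ∧
    ∀ d : ℤ, ((p : ℝ) / q - 3 / (4 * (a0 : ℝ) * (q : ℝ) ^ 2)) ^ 2 < (d : ℝ) →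
      (d : ℝ) < ((p : ℝ) / q) ^ 2 →
      (p : ℤ) ^ 2 - (q : ℤ) ^ 2 * d = 1 := by
  have hq0 : 0 < q := by omega
  have hdle : a0 * q ≤ p := by rw [ha0]; exact Nat.div_mul_le_self p q
  have ha04 : 4 ≤ a0 := by
    rw [ha0]; exact (Nat.le_div_iff_mul_le hq0).mpr hpq
  have hkmod : k = p % q := by
    have h1 : p % q + q * (p / q) = p := Nat.mod_add_div p q
    rw [hk, ha0]
    rw [Nat.mul_comm q (p/q)] at h1
    omega
  have hkq : k < q := hkmod ▸ Nat.mod_lt p hq0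
  have hk1 : 1 ≤ k := by
    rcases Nat.eq_zero_or_pos k with h0 | h; swap; · exact h
    exfalso
    have hqd : q ∣ p := Nat.dvd_of_mod_eq_zero (by omega)
    have := (Nat.Coprime.eq_one_of_dvd hcop.symm hqd)
    omega
  have hpnat : p = a0 * q + k := by omega
  have hpz : (p : ℤ) = (a0 : ℤ) * q + k := by exact_mod_cast congrArg (Nat.cast : ℕ → ℤ) hpnat
  -- real facts
  have hqR : (2:ℝ) ≤ (q:ℝ) := by exact_mod_cast hq
  have ha0R : (4:ℝ) ≤ (a0:ℝ) := by exact_mod_cast ha04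
  have hkR1 : (1:ℝ) ≤ (k:ℝ) := by exact_mod_cast hk1
  have hkRq : (k:ℝ) + 1 ≤ (q:ℝ) := by exact_mod_cast hkq
  have hpR : (p:ℝ) = (a0:ℝ) * q + k := by exact_mod_cast congrArg (Nat.cast : ℕ → ℝ) hpnat
  have hqpos : (0:ℝ) < q := by linarith
  have ha0pos : (0:ℝ) < a0 := by linarith
  have key : ∀ d : ℤ, ((p : ℝ) / q - 3 / (4 * (a0 : ℝ) * (q : ℝ) ^ 2)) ^ 2 < (d : ℝ) →
      (d : ℝ) < ((p : ℝ) / q) ^ 2 → (p : ℤ) ^ 2 - (q : ℤ) ^ 2 * d = 1 := by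
    intro d h1 h2
    have hub : (q:ℤ)^2 * d < (p:ℤ)^2 := by
      have hR : (q:ℝ)^2 * d < (p:ℝ)^2 := by
        rw [div_pow] at h2
        calc (q:ℝ)^2 * d < (q:ℝ)^2 * ((p:ℝ)^2 / (q:ℝ)^2) := by
              apply mul_lt_mul_of_pos_left h2 (by positivity)
          _ = (p:ℝ)^2 := by field_simp
      exact_mod_cast hR
    have hlb : (p:ℤ)^2 - 2 < (q:ℤ)^2 * d := by
      have hbound : ((p:ℝ)^2 - 2) / (q:ℝ)^2 ≤ ((p : ℝ) / q - 3 / (4 * (a0 : ℝ) * (q : ℝ) ^ 2)) ^ 2 := by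
        rw [div_le_iff₀ (by positivity : (0:ℝ) < (q:ℝ)^2), hpR]
        have e1 : (((a0:ℝ)*q+k) / q - 3 / (4 * (a0 : ℝ) * (q : ℝ) ^ 2)) ^ 2 * (q:ℝ)^2
            = ((a0:ℝ)*q + k - 3 / (4*(a0:ℝ)*q))^2 := by
          field_simp
        rw [e1]
        have hd : (0:ℝ) < 4*(a0:ℝ)*q := by positivity
        have hfrac : ((a0:ℝ)*q+k) * ((3:ℝ)/(4*(a0:ℝ)*q)) ≤ 1 := by
          rw [mul_div_assoc', div_le_one hd]; nlinarith
        have hsq : (0:ℝ) ≤ ((3:ℝ) / (4*(a0:ℝ)*q))^2 := by positivity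
        nlinarith [hfrac, hsq]

      have hR : (p:ℝ)^2 - 2 < (q:ℝ)^2 * d := by
        have := lt_of_le_of_lt hbound h1
        rw [div_lt_iff₀ (by positivity : (0:ℝ) < (q:ℝ)^2)] at this
        linarith
      exact_mod_cast hR
    omega
  refine ⟨⟨?_, ?_⟩, key⟩
  · rintro ⟨d, h1, h2⟩
    have hd := key d h1 h2
    have hdvd : (q:ℤ)^2 ∣ ((a0:ℤ)*q + k)^2 - 1 := by
      rw [← hpz]; exact ⟨d, by linarith⟩
    exact (nt_aux (a0:ℤ) (q:ℤ) (k:ℤ) (by exact_mod_cast hq0)).mp hdvd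
  · rintro ⟨hc1, hc2⟩
    have hdvd : (q:ℤ)^2 ∣ ((a0:ℤ)*q + k)^2 - 1 :=
      (nt_aux (a0:ℤ) (q:ℤ) (k:ℤ) (by exact_mod_cast hq0)).mpr ⟨hc1, hc2⟩
    rw [← hpz] at hdvd
    obtain ⟨d, hd⟩ := hdvd
    refine ⟨d, ?_, ?_⟩
    · -- lower bound: (p/q - ε)^2 < d
      have hdR : (p:ℝ)^2 - 1 = (q:ℝ)^2 * d := by exact_mod_cast congrArg (Int.cast : ℤ → ℝ) hd
      have hbound : ((p : ℝ) / q - 3 / (4 * (a0 : ℝ) * (q : ℝ) ^ 2)) ^ 2 < ((p:ℝ)^2 - 1) / (q:ℝ)^2 := by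
        rw [lt_div_iff₀ (by positivity : (0:ℝ) < (q:ℝ)^2), hpR]
        have e1 : (((a0:ℝ)*q+k) / q - 3 / (4 * (a0 : ℝ) * (q : ℝ) ^ 2)) ^ 2 * (q:ℝ)^2
            = ((a0:ℝ)*q + k - 3 / (4*(a0:ℝ)*q))^2 := by
          field_simp
        rw [e1]
        have hd' : (0:ℝ) < 4*(a0:ℝ)*q := by positivity
        have hfrac : (3:ℝ)/4 ≤ ((a0:ℝ)*q+k) * ((3:ℝ)/(4*(a0:ℝ)*q)) := by
          rw [mul_div_assoc', le_div_iff₀ hd']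
          linarith
        have h8 : (8:ℝ) ≤ (a0:ℝ)*q := by
          have := mul_le_mul ha0R hqR (by norm_num : (0:ℝ) ≤ 2) (by linarith : (0:ℝ) ≤ (a0:ℝ))
          linarith
        have h64 : (64:ℝ) ≤ ((a0:ℝ)*q)*((a0:ℝ)*q) := by
          have := mul_le_mul h8 h8 (by norm_num : (0:ℝ) ≤ 8) (by linarith : (0:ℝ) ≤ (a0:ℝ)*q)
          linarith
        have hsq : ((3:ℝ) / (4*(a0:ℝ)*q))^2 ≤ 9/1024 := by
          rw [div_pow, div_le_div_iff₀ (by positivity) (by norm_num)]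
          linarith [h64]
        linarith [hfrac, hsq, sq_nonneg ((a0:ℝ)*q + k - 3 / (4*(a0:ℝ)*q))]
      have hdd : ((p:ℝ)^2 - 1) / (q:ℝ)^2 = (d:ℝ) := by
        rw [hdR]; field_simp
      rwa [hdd] at hbound
    · have hdR : (p:ℝ)^2 - 1 = (q:ℝ)^2 * d := by exact_mod_cast congrArg (Int.cast : ℤ → ℝ) hd
      rw [div_pow]
      rw [lt_div_iff₀ (by positivity : (0:ℝ) < (q:ℝ)^2)]
      linarith [hdR]
end

section
/- Let p and q be coprime positive integers with q ≥ 2 and p/q ≥ 4, and write a_0 = ⌊p/q⌋ and k = p − a_0·q (so 1 ≤ k < q). The open interval ( (2p/q − 1)² , (2p/q − 1 + 3/(2·a_0·q²))² ) contains an integer congruent to 1 modulo 4 if and only if k² ≡ −1 (mod q) and 2a_0 ≡ 1 + k·(1 + k²)/q (mod q). In that case it contains exactly one such integer, namely d = 4·(p² − p·q + 1)/q² + 1, and this d satisfies (2p − q)² − q²·d = −4, i.e. the field norm N(p − q·(1+√d)/2) = −1. -/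
private lemma cop2_of_odd (M : ℤ) (h : Odd M) : IsCoprime (2:ℤ) M := by
  obtain ⟨n, hn⟩ := h
  exact ⟨-n, 1, by linarith⟩

private lemma cop4_of_odd (M : ℤ) (h : Odd M) : IsCoprime (4:ℤ) M := by
  have h2 := cop2_of_odd M h
  have : IsCoprime ((2:ℤ)*2) M := h2.mul_left h2
  norm_num at this; exact this

private lemma auxA (Q A K : ℤ) (hQ : 2 ≤ Q) (hK1 : 1 ≤ K) (hKQ : K < Q)
    (hcop : IsCoprime K Q) :
    Q^2 ∣ (2*(A*Q+K) - Q)^2 + 4 ↔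
      (Q ∣ K^2 + 1 ∧ Q ∣ (1 + K*((1+K^2)/Q)) - 2*A) := by
  have hQ0 : Q ≠ 0 := by omega
  constructor
  · intro hD
    have key : Q^2 ∣ 4*(K^2+1) + 4*K*(2*A-1)*Q := by
      have hsub : Q^2 ∣ (2*A-1)^2*Q^2 := ⟨(2*A-1)^2, by ring⟩
      have h := hD.sub hsub
      have heq : (2*(A*Q+K) - Q)^2 + 4 - (2*A-1)^2*Q^2 = 4*(K^2+1) + 4*K*(2*A-1)*Q := by
        ring
      rwa [heq] at h
    have hq4 : Q ∣ 4*(K^2+1) := by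
      have h1 : Q ∣ 4*(K^2+1) + 4*K*(2*A-1)*Q := (dvd_pow_self Q two_ne_zero).trans key
      have h2 : Q ∣ 4*K*(2*A-1)*Q := ⟨4*K*(2*A-1), by ring⟩
      have := h1.sub h2
      simpa using this
    -- K odd when Q even
    have hKoddQ : Even Q → Odd K := by
      intro hev
      rcases Int.even_or_odd K with hKe | hKo
      · exfalso
        obtain ⟨r, hr⟩ := hKe
        obtain ⟨s, hs⟩ := hev
        have h2K : (2:ℤ) ∣ K := ⟨r, by omega⟩
        have h2Q : (2:ℤ) ∣ Q := ⟨s, by omega⟩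
        have := hcop.isUnit_of_dvd' h2K h2Q
        rw [Int.isUnit_iff] at this
        omega
      · exact hKo
    -- Step 1 : Q ∣ K^2 + 1
    have hX : Q ∣ K^2 + 1 := by
      rcases Int.even_or_odd Q with hev | hodd
      · obtain ⟨j, hj⟩ := hKoddQ hev
        obtain ⟨M, hM⟩ := hev
        have hQM : Q = 2*M := by omega
        rcases Int.even_or_odd M with hMev | hModd
        · -- 4 ∣ Q : contradiction
          exfalso
          obtain ⟨u, hu⟩ := hMev
          have hQu : Q = 4*u := by omega
          obtain ⟨c, hc⟩ := key
          rw [hQu, hj] at hc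
          have hE : ∃ X S : ℤ, 4*(4*S+2) = 16*X :=
            ⟨u^2*c - u*(2*j+1)*(2*A-1), j^2+j, by linear_combination hc⟩
          obtain ⟨X, S, hXS⟩ := hE
          omega
        · -- Q = 2M, M odd
          have hMd : M ∣ K^2+1 := by
            have h1 : M ∣ 2*(K^2+1) := by
              obtain ⟨c, hc⟩ := hq4
              rw [hQM] at hc
              have h2 : (2:ℤ) * (2*(K^2+1)) = 2*(M*c) := by linear_combination hc
              exact ⟨c, mul_left_cancel₀ two_ne_zero h2⟩
            exact ((cop2_of_odd M hModd).symm.dvd_of_dvd_mul_left h1)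
          have h2d : (2:ℤ) ∣ K^2+1 := ⟨2*(j^2+j)+1, by rw [hj]; ring⟩
          have := (cop2_of_odd M hModd).mul_dvd h2d hMd
          rwa [hQM]
      · -- Q odd
        exact (cop4_of_odd Q hodd).symm.dvd_of_dvd_mul_left hq4
    refine ⟨hX, ?_⟩
    set t := (1+K^2)/Q with htdef
    have ht : Q * t = 1 + K^2 := Int.mul_ediv_cancel' (by rwa [add_comm] at hX)
    have key2 : Q ∣ 4*(t + K*(2*A-1)) := by
      obtain ⟨c, hc⟩ := key
      have heq : Q * (4*(t + K*(2*A-1))) = Q * (Q*c) := by linear_combination 4*ht + hc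
      exact ⟨c, mul_left_cancel₀ hQ0 heq⟩
    have key3 : Q ∣ t + K*(2*A-1) := by
      rcases Int.even_or_odd Q with hev | hodd
      · obtain ⟨j, hj⟩ := hKoddQ hev
        obtain ⟨M, hM⟩ := hev
        have hQM : Q = 2*M := by omega
        have hModd : Odd M := by
          rcases Int.even_or_odd M with hMev | hModd
          · exfalso
            obtain ⟨u, hu⟩ := hMev
            obtain ⟨c, hc⟩ := hX
            rw [show Q = 4*u by omega, hj] at hc
            have hE : ∃ X S : ℤ, 4*S+2 = 4*X := ⟨u*c, j^2+j, by linear_combination hc⟩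
            obtain ⟨X, S, hXS⟩ := hE
            omega
          · exact hModd
        have htodd : Odd t := by
          have hMt : Odd (M*t) := by
            have h2 : (2:ℤ)*(M*t) = 2*(2*(j^2+j)+1) := by
              rw [hQM, hj] at ht; linear_combination ht
            exact ⟨j^2+j, mul_left_cancel₀ two_ne_zero h2⟩
          exact (Int.odd_mul.mp hMt).2
        have hYodd : Odd (K*(2*A-1)) := Int.odd_mul.mpr ⟨⟨j, hj⟩, ⟨A-1, by ring⟩⟩
        have hEv : Even (t + K*(2*A-1)) := htodd.add_odd hYodd
        have hMdvd : M ∣ t + K*(2*A-1) := by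
          have h1 : M ∣ 2*(t + K*(2*A-1)) := by
            obtain ⟨c, hc⟩ := key2
            rw [hQM] at hc
            have h2 : (2:ℤ)*(2*(t + K*(2*A-1))) = 2*(M*c) := by linear_combination hc
            exact ⟨c, mul_left_cancel₀ two_ne_zero h2⟩
          exact (cop2_of_odd M hModd).symm.dvd_of_dvd_mul_left h1
        obtain ⟨e, he⟩ := hEv
        have h2dvd : (2:ℤ) ∣ t + K*(2*A-1) := ⟨e, by omega⟩
        have := (cop2_of_odd M hModd).mul_dvd h2dvd hMdvd
        rwa [hQM]
      · exact (cop4_of_odd Q hodd).symm.dvd_of_dvd_mul_left key2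
    have heq : (1 + K*t) - 2*A = K*(t + K*(2*A-1)) - Q*(t*(2*A-1)) := by
      linear_combination (2*A-1)*ht
    rw [heq]
    exact dvd_sub (key3.mul_left K) (dvd_mul_right Q _)
  · rintro ⟨hX, h2⟩
    set t := (1+K^2)/Q with htdef
    have ht : Q * t = 1 + K^2 := Int.mul_ediv_cancel' (by rwa [add_comm] at hX)
    have key3 : Q ∣ t + K*(2*A-1) := by
      have h2' : Q ∣ K*((1 + K*t) - 2*A) := h2.mul_left K
      have heq : t + K*(2*A-1) = -(K*((1+K*t)-2*A)) + Q*t^2 := by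
        linear_combination (-t)*ht
      rw [heq]
      exact dvd_add (dvd_neg.mpr h2') (dvd_mul_right Q _)
    obtain ⟨s, hs⟩ := key3
    exact ⟨4*s + (2*A-1)^2, by linear_combination (-4)*ht + (4*Q)*hs⟩

-- forward: interval membership (integer form) + d%4=1  ⇒  equation
private lemma auxM (Q A K P d : ℤ) (hQ : 2 ≤ Q) (hA : 4 ≤ A) (hK1 : 1 ≤ K) (hKQ : K < Q)
    (hP : P = A*Q + K) (hd4 : d % 4 = 1)
    (hlow : (2*P - Q)^2 < Q^2*d)
    (hup : 4*A^2*Q^4*d < (2*A*Q*(2*P-Q)+3)^2) :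
    Q^2*d = (2*P - Q)^2 + 4 := by
  obtain ⟨m, hm⟩ : ∃ m : ℤ, m = Q^2*d - (2*P-Q)^2 := ⟨_, rfl⟩
  have hm1 : 1 ≤ m := by nlinarith
  have hm4 : (4:ℤ) ∣ m := by
    have h41 : (4:ℤ) ∣ d - 1 := by omega
    obtain ⟨e, he⟩ := h41
    exact ⟨Q^2*e + P*Q - P^2, by linear_combination hm + Q^2*he⟩
  have hup' : 4*A^2*Q^2*m < 12*A*Q*(2*P-Q) + 9 := by nlinarith [hup, hm]
  have hm7 : m ≤ 7 := by
    by_contra h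
    push_neg at h
    have hP1 : P ≤ A*Q + Q - 1 := by linarith
    have hm8 : (0:ℤ) ≤ (m - 8)*(A^2*Q^2) :=
      mul_nonneg (by omega) (by positivity)
    have hprod : (0:ℤ) ≤ (A*Q) * ((2*A*Q + Q - 2) - (2*P - Q)) :=
      mul_nonneg (mul_nonneg (by linarith) (by linarith)) (by linarith)
    have hA4 : (0:ℤ) ≤ (A-4)*(A*Q^2) :=
      mul_nonneg (by linarith) (mul_nonneg (by linarith) (by positivity))
    have hAQ : (0:ℤ) < A*Q := mul_pos (by linarith) (by linarith)
    have hAQ2 : (0:ℤ) < A*Q^2 := mul_pos (by linarith) (by positivity)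
    nlinarith [hup', hm8, hprod, hA4, hAQ, hAQ2]
  have : m = 4 := by omega
  linarith [hm]

-- backward: equation ⇒ interval membership (integer form) + d%4=1
private lemma auxM' (Q A K P d : ℤ) (hQ : 2 ≤ Q) (hA : 4 ≤ A) (hK1 : 1 ≤ K) (hKQ : K < Q)
    (hcop : IsCoprime K Q) (hP : P = A*Q + K)
    (heq : Q^2*d = (2*P - Q)^2 + 4) :
    d % 4 = 1 ∧ (2*P - Q)^2 < Q^2*d ∧ 4*A^2*Q^4*d < (2*A*Q*(2*P-Q)+3)^2 := by
  refine ⟨?_, by linarith, ?_⟩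
  · -- d % 4 = 1
    rcases Int.even_or_odd Q with hev | hodd
    · -- Q even, K odd, P odd
      have hKodd : Odd K := by
        rcases Int.even_or_odd K with hKe | hKo
        · exfalso
          obtain ⟨r, hr⟩ := hKe
          obtain ⟨s, hs⟩ := hev
          have h2K : (2:ℤ) ∣ K := ⟨r, by omega⟩
          have h2Q : (2:ℤ) ∣ Q := ⟨s, by omega⟩
          have := hcop.isUnit_of_dvd' h2K h2Q
          rw [Int.isUnit_iff] at this
          omega
        · exact hKo
      obtain ⟨M, hM⟩ := hev
      have hQM : Q = 2*M := by omega
      have hPodd : Odd P := by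
        obtain ⟨j, hj⟩ := hKodd
        exact ⟨A*M + j, by rw [hP, hQM, hj]; ring⟩
      rcases Int.even_or_odd M with hMev | hModd
      · -- 4 ∣ Q : equation impossible
        exfalso
        obtain ⟨u, hu⟩ := hMev
        have hQu : Q = 4*u := by omega
        obtain ⟨v, hv⟩ := hPodd
        -- 16 u² d = 4(P-2u)² + 4, P-2u = 2(v-u)+1
        have hE : ∃ X S : ℤ, 16*X = 4*(4*S+2) :=
          ⟨u^2*d, (v-u)^2+(v-u), by rw [hQu] at heq; rw [hv] at heq; linear_combination heq⟩
        obtain ⟨X, S, hXS⟩ := hE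
        omega
      · -- Q = 2M, M odd
        obtain ⟨f, hf⟩ := hModd
        have hPM : Even (P - M) := hPodd.sub_odd ⟨f, hf⟩
        obtain ⟨e, he⟩ := hPM
        have hMd : M^2*d = 4*((e)^2) + 1 := by
          have h4 : (4:ℤ)*(M^2*d) = 4*(4*e^2+1) := by
            rw [hQM] at heq
            have hPe : P = 2*e + M := by omega
            rw [hPe] at heq
            linear_combination heq
          have := mul_left_cancel₀ (by norm_num : (4:ℤ) ≠ 0) h4
          linarith
        have hM4 : M^2 % 4 = 1 := by
          have : M^2 = 4*(f^2+f) + 1 := by rw [hf]; ring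
          rw [this]
          obtain ⟨F, hF⟩ : ∃ F:ℤ, F = f^2+f := ⟨_, rfl⟩
          rw [← hF]
          omega
        have h1 : (M^2*d) % 4 = d % 4 := by
          rw [Int.mul_emod, hM4, one_mul, Int.emod_emod_of_dvd d dvd_rfl]
        have h2 : (M^2*d) % 4 = 1 := by
          rw [hMd]
          obtain ⟨E, hE⟩ : ∃ E:ℤ, E = e^2 := ⟨_, rfl⟩
          rw [← hE]
          omega
        omega
    · -- Q odd
      have hc4 : IsCoprime (4:ℤ) (Q^2) := by
        obtain ⟨n, hn⟩ := hodd
        have h2 : IsCoprime (2:ℤ) Q := ⟨-n, 1, by linarith⟩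
        have h4 : IsCoprime ((2:ℤ)*2) Q := h2.mul_left h2
        norm_num at h4
        exact h4.pow_right
      have hdvd : (4:ℤ) ∣ Q^2*(d-1) := ⟨P^2 - P*Q + 1, by linear_combination heq⟩
      have := hc4.dvd_of_dvd_mul_left hdvd
      omega
  · -- upper inequality
    have hP1 : A*Q + 1 ≤ P := by linarith
    have hkey : 4*A^2*Q^4*d = 4*A^2*Q^2*(2*P-Q)^2 + 16*A^2*Q^2 := by
      linear_combination 4*A^2*Q^2*heq
    have hprod : (0:ℤ) ≤ (A*Q) * ((2*P - Q) - (2*A*Q + 2 - Q)) :=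
      mul_nonneg (mul_nonneg (by linarith) (by linarith)) (by linarith)
    have hA4 : (0:ℤ) ≤ (A-4)*(A*Q^2) :=
      mul_nonneg (by linarith) (mul_nonneg (by linarith) (by positivity))
    have hAQ : (0:ℤ) < A*Q := mul_pos (by linarith) (by linarith)
    have hAQ2 : (0:ℤ) < A*Q^2 := mul_pos (by linarith) (by positivity)
    nlinarith [hkey, hprod, hA4, hAQ, hAQ2]

private lemma auxReal (p q a0 : ℕ) (hq : 0 < q) (ha : 0 < a0) (d : ℤ) :
    ((2 * (p : ℝ) / q - 1) ^ 2 < (d : ℝ) ∧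
      (d : ℝ) < (2 * (p : ℝ) / q - 1 + 3 / (2 * (a0 : ℝ) * (q : ℝ) ^ 2)) ^ 2)
    ↔ ((2*(p:ℤ) - q)^2 < (q:ℤ)^2 * d ∧
        4*(a0:ℤ)^2*(q:ℤ)^4*d < (2*(a0:ℤ)*(q:ℤ)*(2*(p:ℤ)-(q:ℤ))+3)^2) := by
  have hq0 : (0:ℝ) < (q:ℝ) := by exact_mod_cast hq
  have ha0 : (0:ℝ) < (a0:ℝ) := by exact_mod_cast ha
  have h1 : (2*(p:ℝ)/q - 1) = (2*(p:ℝ) - q)/q := by field_simp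
  have h2 : (2*(p:ℝ)/q - 1 + 3/(2*(a0:ℝ)*(q:ℝ)^2))
      = (2*(a0:ℝ)*q*(2*(p:ℝ)-q) + 3)/(2*(a0:ℝ)*(q:ℝ)^2) := by
    field_simp
  rw [h2, h1, div_pow, div_pow, div_lt_iff₀ (by positivity), lt_div_iff₀ (by positivity)]
  constructor
  · rintro ⟨hA, hB⟩
    constructor
    · have : ((2*(p:ℤ) - q : ℤ):ℝ) ^ 2 < (((q:ℤ)^2 * d : ℤ):ℝ) := by push_cast; nlinarith
      exact_mod_cast this
    · have : ((4*(a0:ℤ)^2*(q:ℤ)^4*d : ℤ):ℝ) < (((2*(a0:ℤ)*q*(2*(p:ℤ)-q)+3 : ℤ):ℝ))^2 := by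
        push_cast; nlinarith
      exact_mod_cast this
  · rintro ⟨hA, hB⟩
    have hA' : ((2*(p:ℤ) - q : ℤ):ℝ) ^ 2 < (((q:ℤ)^2 * d : ℤ):ℝ) := by exact_mod_cast hA
    have hB' : ((4*(a0:ℤ)^2*(q:ℤ)^4*d : ℤ):ℝ) < (((2*(a0:ℤ)*q*(2*(p:ℤ)-q)+3 : ℤ):ℝ))^2 := by
      exact_mod_cast hB
    push_cast at hA' hB'
    constructor
    · nlinarith
    · nlinarith


/-- for coprime positive integers `p, q` with `q ≥ 2`, `p/q ≥ 4`,
`a_0 = ⌊p/q⌋`, `k = p - a_0 q`, the open interval `((2p/q - 1)², (2p/q - 1 + 3/(2 a_0 q²))²)`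
contains an integer `≡ 1 (mod 4)` iff `k² ≡ -1 (mod q)` and `2a_0 ≡ 1 + k (1+k²)/q (mod q)`;
in that case it contains exactly one such integer, `d = 4(p² - pq + 1)/q² + 1`, which
satisfies `(2p - q)² - q² d = -4`, i.e. `N(p - q (1+√d)/2) = -1`. -/
theorem stmt_12 (p q : ℕ) (hq : 2 ≤ q) (hcop : Nat.Coprime p q) (hpq : 4 * q ≤ p)
    (a0 k : ℕ) (ha0 : a0 = p / q) (hk : k = p - a0 * q) :
    ((∃ d : ℤ, d % 4 = 1 ∧ (2 * (p : ℝ) / q - 1) ^ 2 < (d : ℝ) ∧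
        (d : ℝ) < (2 * (p : ℝ) / q - 1 + 3 / (2 * (a0 : ℝ) * (q : ℝ) ^ 2)) ^ 2) ↔
      (Int.ModEq (q : ℤ) ((k : ℤ) ^ 2) (-1) ∧
        Int.ModEq (q : ℤ) (2 * (a0 : ℤ)) (1 + (k : ℤ) * ((1 + (k : ℤ) ^ 2) / (q : ℤ))))) ∧
    ∀ d : ℤ, d % 4 = 1 → (2 * (p : ℝ) / q - 1) ^ 2 < (d : ℝ) →
      (d : ℝ) < (2 * (p : ℝ) / q - 1 + 3 / (2 * (a0 : ℝ) * (q : ℝ) ^ 2)) ^ 2 →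
      (2 * (p : ℤ) - (q : ℤ)) ^ 2 - (q : ℤ) ^ 2 * d = -4 := by
  have hq0 : 0 < q := by omega
  have hdm : q * (p / q) + p % q = p := Nat.div_add_mod p q
  have hle : a0 * q ≤ p := by rw [ha0]; exact Nat.div_mul_le_self p q
  have hkm : k = p % q := by
    rw [hk, ha0]
    exact Nat.sub_eq_of_eq_add (by linarith [hdm])
  have hkq : k < q := by rw [hkm]; exact Nat.mod_lt p hq0
  have hk1 : 1 ≤ k := by
    rcases Nat.eq_zero_or_pos k with h0 | h
    · exfalso
      have hdvd : q ∣ p := Nat.dvd_of_mod_eq_zero (by omega)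
      have h1 : q ∣ 1 := hcop ▸ Nat.dvd_gcd hdvd dvd_rfl
      have := Nat.le_of_dvd (by norm_num) h1
      omega
    · exact h
  have hpkN : a0 * q + k = p := by rw [hk]; exact Nat.add_sub_cancel' hle
  have hpk : (p:ℤ) = (a0:ℤ)*(q:ℤ) + (k:ℤ) := by exact_mod_cast hpkN.symm
  have ha4 : 4 ≤ a0 := by rw [ha0]; exact (Nat.le_div_iff_mul_le hq0).mpr hpq
  have hckq : Nat.Coprime k q := by
    rw [hkm]
    unfold Nat.Coprime at *
    rw [← Nat.gcd_rec, Nat.gcd_comm]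
    exact hcop
  have hcopZ : IsCoprime (k:ℤ) (q:ℤ) := by
    rw [Int.isCoprime_iff_gcd_eq_one]
    simpa [Int.gcd_natCast_natCast] using hckq
  have hqZ : (2:ℤ) ≤ (q:ℤ) := by exact_mod_cast hq
  have haZ : (4:ℤ) ≤ (a0:ℤ) := by exact_mod_cast ha4
  have hkZ : (1:ℤ) ≤ (k:ℤ) := by exact_mod_cast hk1
  have hkqZ : (k:ℤ) < (q:ℤ) := by exact_mod_cast hkq
  have c1 : Int.ModEq (q:ℤ) ((k:ℤ)^2) (-1) ↔ (q:ℤ) ∣ (k:ℤ)^2 + 1 := by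
    rw [Int.modEq_iff_dvd, show (-1 : ℤ) - (k:ℤ)^2 = -((k:ℤ)^2+1) by ring, dvd_neg]
  have c2 : Int.ModEq (q:ℤ) (2*(a0:ℤ)) (1 + (k:ℤ) * ((1 + (k:ℤ)^2) / (q:ℤ))) ↔
      (q:ℤ) ∣ (1 + (k:ℤ)*((1+(k:ℤ)^2)/(q:ℤ))) - 2*(a0:ℤ) := Int.modEq_iff_dvd
  constructor
  · constructor
    · rintro ⟨d, hd4, hl, hu⟩
      obtain ⟨hil, hiu⟩ := (auxReal p q a0 hq0 (by omega) d).mp ⟨hl, hu⟩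
      have heq := auxM (q:ℤ) (a0:ℤ) (k:ℤ) (p:ℤ) d hqZ haZ hkZ hkqZ hpk hd4 hil hiu
      have hdvd : (q:ℤ)^2 ∣ (2*((a0:ℤ)*(q:ℤ)+(k:ℤ)) - (q:ℤ))^2 + 4 :=
        ⟨d, by rw [← hpk]; exact heq.symm⟩
      obtain ⟨hx, hy⟩ := (auxA (q:ℤ) (a0:ℤ) (k:ℤ) hqZ hkZ hkqZ hcopZ).mp hdvd
      exact ⟨c1.mpr hx, c2.mpr hy⟩
    · rintro ⟨hc1, hc2⟩
      have hdvd := (auxA (q:ℤ) (a0:ℤ) (k:ℤ) hqZ hkZ hkqZ hcopZ).mpr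
        ⟨c1.mp hc1, c2.mp hc2⟩
      obtain ⟨d, hd⟩ := hdvd
      have heq : (q:ℤ)^2*d = (2*(p:ℤ) - (q:ℤ))^2 + 4 := by rw [hpk]; exact hd.symm
      obtain ⟨h4, hil, hiu⟩ := auxM' (q:ℤ) (a0:ℤ) (k:ℤ) (p:ℤ) d hqZ haZ hkZ hkqZ hcopZ hpk heq
      obtain ⟨hl, hu⟩ := (auxReal p q a0 hq0 (by omega) d).mpr ⟨hil, hiu⟩
      exact ⟨d, h4, hl, hu⟩
  · intro d hd4 hl hu
    obtain ⟨hil, hiu⟩ := (auxReal p q a0 hq0 (by omega) d).mp ⟨hl, hu⟩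
    have heq := auxM (q:ℤ) (a0:ℤ) (k:ℤ) (p:ℤ) d hqZ haZ hkZ hkqZ hpk hd4 hil hiu
    linarith [heq]
end

section
/- Let p and q be coprime positive integers with q ≥ 2 and p/q ≥ 4, and write a_0 = ⌊p/q⌋ and k = p − a_0·q (so 1 ≤ k < q). The open interval ( (2p/q − 1 − 3/(2·a_0·q²))² , (2p/q − 1)² ) contains an integer congruent to 1 modulo 4 if and only if k² ≡ 1 (mod q) and 2a_0 ≡ 1 + k·(1 − k²)/q (mod q). In that case it contains exactly one such integer, namely d = 4·(p² − p·q − 1)/q² + 1, and this d satisfies (2p − q)² − q²·d = 4, i.e. the field norm N(p − q·(1+√d)/2) = 1. -/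
private lemma int_core (A Q K s : ℤ) (hA : 4 ≤ A) (hQ : 2 ≤ Q) (hK1 : 1 ≤ K) (hKQ : K < Q)
    (hlow : ((2*(A*Q+K) - Q)*(2*A*Q) - 3)^2 < (4*s+1) * (2*A*Q^2)^2)
    (hup : (4*s+1) * Q^2 < (2*(A*Q+K) - Q)^2) :
    (2*(A*Q+K) - Q)^2 - Q^2*(4*s+1) = 4 := by
  have hG : 4*A^2*Q^2*((2*(A*Q+K)-Q)^2 - Q^2*(4*s+1)) < 12*A*Q*(2*(A*Q+K)-Q) - 9 := by
    nlinarith [hlow]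
  have c2 : (0:ℤ) ≤ 12*A*Q*(Q-1-K) :=
    mul_nonneg (mul_nonneg (by linarith) (by linarith)) (by linarith)
  have c4 : (0:ℤ) ≤ 8*A*Q^2*(A-4) :=
    mul_nonneg (mul_nonneg (by linarith) (by nlinarith)) (by linarith)
  have c5 : (0:ℤ) < A*Q^2 := mul_pos (by linarith) (by nlinarith)
  have c6 : (0:ℤ) < A*Q := mul_pos (by linarith) (by linarith)
  have F2 : (2*(A*Q+K)-Q)^2 - Q^2*(4*s+1) < 8 := by
    by_contra hX
    push_neg at hX
    have c1 : (0:ℤ) ≤ 4*A^2*Q^2*((2*(A*Q+K)-Q)^2 - Q^2*(4*s+1) - 8) :=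
      mul_nonneg (by positivity) (by linarith)
    linarith [hG, c1, c2, c4, c5, c6]
  have F1 : (0:ℤ) < (2*(A*Q+K)-Q)^2 - Q^2*(4*s+1) := by linarith [hup]
  have hE1 : 1 ≤ (A*Q+K)^2 - (A*Q+K)*Q - Q^2*s := by
    have h0 : (0:ℤ) < (A*Q+K)^2 - (A*Q+K)*Q - Q^2*s := by linarith
    linarith [Int.lt_iff_add_one_le.mp h0]
  have hE2 : (A*Q+K)^2 - (A*Q+K)*Q - Q^2*s ≤ 1 := by
    have h0 : (A*Q+K)^2 - (A*Q+K)*Q - Q^2*s < 2 := by linarith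
    linarith [Int.lt_iff_add_one_le.mp h0]
  linear_combination 4*(le_antisymm hE2 hE1)

private lemma int_exist_low (A Q K s : ℤ) (hA : 4 ≤ A) (hQ : 2 ≤ Q) (hK1 : 1 ≤ K) (hKQ : K < Q)
    (hs : (A*Q+K)^2 - (A*Q+K)*Q - 1 = Q^2*s) :
    ((2*(A*Q+K) - Q)*(2*A*Q) - 3)^2 < (4*s+1) * (2*A*Q^2)^2 := by
  have hR : (4*s+1) * (2*A*Q^2)^2 = 4*A^2*Q^2*((2*(A*Q+K)-Q)^2 - 4) := by
    linear_combination (-16)*A^2*Q^2*hs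
  rw [hR]
  have c3 : (0:ℤ) ≤ 24*A*Q*(K-1) :=
    mul_nonneg (mul_nonneg (by linarith) (by linarith)) (by linarith)
  have c4 : (0:ℤ) ≤ 8*A*Q^2*(A-4) :=
    mul_nonneg (mul_nonneg (by linarith) (by nlinarith)) (by linarith)
  have c5 : (0:ℤ) < A*Q^2 := mul_pos (by linarith) (by nlinarith)
  have c6 : (0:ℤ) < A*Q := mul_pos (by linarith) (by linarith)
  nlinarith [c3, c4, c5, c6]

private lemma congr_equiv (A Q K : ℤ) (hQ : 2 ≤ Q) :
    (Q^2 ∣ (A*Q+K)^2 - (A*Q+K)*Q - 1) ↔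
      (Q ∣ 1 - K^2 ∧ Q ∣ 1 + K * ((1 - K^2)/Q) - 2*A) := by
  have hQ0 : (Q:ℤ) ≠ 0 := by omega
  constructor
  · rintro ⟨c, hc⟩
    have h1 : Q ∣ 1 - K^2 := ⟨A^2*Q + 2*A*K - A*Q - K - Q*c, by linear_combination -hc⟩
    obtain ⟨u, hu⟩ := h1
    have hm : (1 - K^2)/Q = u := by rw [hu]; exact Int.mul_ediv_cancel_left u hQ0
    refine ⟨⟨u, hu⟩, ?_⟩
    rw [hm]
    have hu2 : u = K*(2*A-1) + Q*(A^2 - A - c) := by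
      have h2 : Q*u = Q*(K*(2*A-1) + Q*(A^2 - A - c)) := by linear_combination -hu - hc
      exact mul_left_cancel₀ hQ0 h2
    exact ⟨-(2*A-1)*u + K*(A^2-A-c), by linear_combination K*hu2 - (2*A-1)*hu⟩
  · rintro ⟨⟨u, hu⟩, h2⟩
    have hm : (1 - K^2)/Q = u := by rw [hu]; exact Int.mul_ediv_cancel_left u hQ0
    rw [hm] at h2
    obtain ⟨v, hv⟩ := h2
    exact ⟨A^2 - A - u^2 - K*v, by linear_combination (-(1+Q*u))*hu - K*Q*hv⟩

/-- for coprime positive integers `p, q` with `q ≥ 2`, `p/q ≥ 4`,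
`a_0 = ⌊p/q⌋`, `k = p - a_0 q`, the open interval `((2p/q - 1 - 3/(2 a_0 q²))², (2p/q - 1)²)`
contains an integer `≡ 1 (mod 4)` iff `k² ≡ 1 (mod q)` and `2a_0 ≡ 1 + k (1-k²)/q (mod q)`;
in that case it contains exactly one such integer, `d = 4(p² - pq - 1)/q² + 1`, which
satisfies `(2p - q)² - q² d = 4`, i.e. `N(p - q (1+√d)/2) = 1`. -/
theorem stmt_13 (p q : ℕ) (hq : 2 ≤ q) (hcop : Nat.Coprime p q) (hpq : 4 * q ≤ p)
    (a0 k : ℕ) (ha0 : a0 = p / q) (hk : k = p - a0 * q) :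
    ((∃ d : ℤ, d % 4 = 1 ∧ (2 * (p : ℝ) / q - 1 - 3 / (2 * (a0 : ℝ) * (q : ℝ) ^ 2)) ^ 2 < (d : ℝ) ∧
        (d : ℝ) < (2 * (p : ℝ) / q - 1) ^ 2) ↔
      (Int.ModEq (q : ℤ) ((k : ℤ) ^ 2) 1 ∧
        Int.ModEq (q : ℤ) (2 * (a0 : ℤ)) (1 + (k : ℤ) * ((1 - (k : ℤ) ^ 2) / (q : ℤ))))) ∧
    ∀ d : ℤ, d % 4 = 1 → (2 * (p : ℝ) / q - 1 - 3 / (2 * (a0 : ℝ) * (q : ℝ) ^ 2)) ^ 2 < (d : ℝ) →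
      (d : ℝ) < (2 * (p : ℝ) / q - 1) ^ 2 →
      (2 * (p : ℤ) - (q : ℤ)) ^ 2 - (q : ℤ) ^ 2 * d = 4 := by
  have hq0 : 0 < q := by omega
  have hle : a0 * q ≤ p := by rw [ha0]; exact Nat.div_mul_le_self p q
  have hPnat : p = a0 * q + k := by rw [hk, Nat.add_sub_cancel' hle]
  have hdm : a0 * q + p % q = p := by rw [ha0]; exact Nat.div_add_mod' p q
  have hkr : p % q = k := Nat.add_left_cancel (hdm.trans hPnat)
  have hkq : k < q := hkr ▸ Nat.mod_lt p hq0
  have hk1 : 1 ≤ k := by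
    rcases Nat.eq_zero_or_pos k with h0 | h
    · exfalso
      have hqp : q ∣ p := ⟨a0, by rw [hPnat, h0]; ring⟩
      have h1 : q ∣ Nat.gcd p q := Nat.dvd_gcd hqp dvd_rfl
      rw [Nat.Coprime] at hcop
      rw [hcop] at h1
      have := Nat.le_of_dvd one_pos h1
      omega
    · exact h
  have ha04 : 4 ≤ a0 := by
    rw [ha0]; exact (Nat.le_div_iff_mul_le hq0).mpr hpq
  have hA : (4:ℤ) ≤ (a0:ℤ) := by exact_mod_cast ha04
  have hQ : (2:ℤ) ≤ (q:ℤ) := by exact_mod_cast hq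
  have hK1 : (1:ℤ) ≤ (k:ℤ) := by exact_mod_cast hk1
  have hKQ : (k:ℤ) < (q:ℤ) := by exact_mod_cast hkq
  have hPZ : (p:ℤ) = (a0:ℤ)*(q:ℤ) + (k:ℤ) := by exact_mod_cast hPnat
  have hqR : (0:ℝ) < (q:ℝ) := by exact_mod_cast hq0
  have haR : (0:ℝ) < (a0:ℝ) := by exact_mod_cast (show 0 < a0 by omega)
  have hqR' : (q:ℝ) ≠ 0 := ne_of_gt hqR
  have haR' : (a0:ℝ) ≠ 0 := ne_of_gt haR
  have hcast1 : ∀ d : ℤ, ((d:ℝ) < (2*(p:ℝ)/q - 1)^2 ↔ d * (q:ℤ)^2 < (2*(p:ℤ) - (q:ℤ))^2) := by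
    intro d
    rw [show (2*(p:ℝ)/q - 1) = (2*(p:ℝ) - q)/q by field_simp]
    rw [div_pow, lt_div_iff₀ (by positivity : (0:ℝ) < (q:ℝ)^2)]
    constructor <;> intro h <;> exact_mod_cast h
  have hcast2 : ∀ d : ℤ,
      ((2*(p:ℝ)/q - 1 - 3/(2*(a0:ℝ)*(q:ℝ)^2))^2 < (d:ℝ) ↔
        ((2*(p:ℤ) - (q:ℤ))*(2*(a0:ℤ)*(q:ℤ)) - 3)^2 < d * (2*(a0:ℤ)*(q:ℤ)^2)^2) := by
    intro d
    rw [show (2*(p:ℝ)/q - 1 - 3/(2*(a0:ℝ)*(q:ℝ)^2))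
          = ((2*(p:ℝ) - q)*(2*(a0:ℝ)*q) - 3)/(2*(a0:ℝ)*(q:ℝ)^2) by field_simp]
    rw [div_pow, div_lt_iff₀ (by positivity : (0:ℝ) < (2*(a0:ℝ)*(q:ℝ)^2)^2)]
    constructor <;> intro h <;> exact_mod_cast h
  have hdvd_iff : ((q:ℤ)^2 ∣ ((a0:ℤ)*(q:ℤ)+(k:ℤ))^2 - ((a0:ℤ)*(q:ℤ)+(k:ℤ))*(q:ℤ) - 1) ↔
      (Int.ModEq (q:ℤ) ((k:ℤ)^2) 1 ∧
        Int.ModEq (q:ℤ) (2*(a0:ℤ)) (1 + (k:ℤ) * ((1 - (k:ℤ)^2) / (q:ℤ)))) := by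
    rw [congr_equiv _ _ _ hQ, Int.modEq_iff_dvd, Int.modEq_iff_dvd]
  refine ⟨⟨?_, ?_⟩, ?_⟩
  · rintro ⟨d, hd4, hdl, hdu⟩
    obtain ⟨s, rfl⟩ : ∃ s, d = 4*s+1 := ⟨d/4, by omega⟩
    have h1 := (hcast2 _).mp hdl
    have h2 := (hcast1 _).mp hdu
    rw [hPZ] at h1 h2
    have hcore := int_core (a0:ℤ) (q:ℤ) (k:ℤ) s hA hQ hK1 hKQ h1 h2
    have hs4 : 4*((((a0:ℤ)*(q:ℤ)+(k:ℤ))^2 - ((a0:ℤ)*(q:ℤ)+(k:ℤ))*(q:ℤ) - 1))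
        = 4*((q:ℤ)^2*s) := by linear_combination hcore
    have hs : (((a0:ℤ)*(q:ℤ)+(k:ℤ))^2 - ((a0:ℤ)*(q:ℤ)+(k:ℤ))*(q:ℤ) - 1) = (q:ℤ)^2*s :=
      mul_left_cancel₀ (by norm_num) hs4
    exact hdvd_iff.mp ⟨s, hs⟩
  · intro hRHS
    obtain ⟨s, hs⟩ := hdvd_iff.mpr hRHS
    refine ⟨4*s+1, by omega, ?_, ?_⟩
    · apply (hcast2 _).mpr
      rw [hPZ]
      exact int_exist_low _ _ _ _ hA hQ hK1 hKQ hs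
    · apply (hcast1 _).mpr
      rw [hPZ]
      nlinarith [hs, hQ]
  · intro d hd4 hdl hdu
    obtain ⟨s, rfl⟩ : ∃ s, d = 4*s+1 := ⟨d/4, by omega⟩
    have h1 := (hcast2 _).mp hdl
    have h2 := (hcast1 _).mp hdu
    rw [hPZ] at h1 h2
    have hcore := int_core (a0:ℤ) (q:ℤ) (k:ℤ) s hA hQ hK1 hKQ h1 h2
    rw [hPZ]
    linear_combination hcore
end

section
/- Let y ≥ 1 and 0 ≤ x ≤ y be integers with gcd(x, y) = 1. Then x² ≡ −1 (mod y) if and only if there exist an integer a_0 ≥ 0, an even integer n ≥ 0, and a symmetric (palindromic) sequence (a_1, …, a_n) of positive integers such that x/y = [a_0; a_1, …, a_n]. -/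
/-- `cfTail a m j` is the finite continued fraction `[a_{m-j+1}; a_{m-j+2}, …, a_m]` as a
rational number, so that `cfTail a m m = [a_1; a_2, …, a_m]` (and `cfTail a m 0 = 0`).
In particular `[0; a_1, …, a_m] = (cfTail a m m)⁻¹`. -/
def cfTail (a : ℕ → ℕ) (m : ℕ) : ℕ → ℚ
  | 0 => 0
  | j + 1 => a (m - j) + (cfTail a m j)⁻¹

open Matrix


def vCF : List ℕ → ℚ
  | [] => 0
  | a :: t => a + (vCF t)⁻¹

def Mcf (l : List ℕ) : Matrix (Fin 2) (Fin 2) ℤ :=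
  (l.map fun a => !![(a : ℤ), 1; 1, 0]).prod

@[simp] lemma Mcf_nil : Mcf [] = 1 := rfl

lemma Mcf_cons (a : ℕ) (t : List ℕ) : Mcf (a :: t) = !![(a:ℤ),1;1,0] * Mcf t := by
  simp [Mcf]

lemma Mcf_append (l1 l2 : List ℕ) : Mcf (l1 ++ l2) = Mcf l1 * Mcf l2 := by
  simp [Mcf]

lemma mul2 (A B : Matrix (Fin 2) (Fin 2) ℤ) (i j : Fin 2) :
    (A * B) i j = A i 0 * B 0 j + A i 1 * B 1 j := by
  rw [Matrix.mul_apply, Fin.sum_univ_two]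

lemma Mcf_cons00 (a : ℕ) (t : List ℕ) :
    Mcf (a :: t) 0 0 = a * Mcf t 0 0 + Mcf t 1 0 := by
  rw [Mcf_cons, mul2]; simp

lemma Mcf_cons01 (a : ℕ) (t : List ℕ) :
    Mcf (a :: t) 0 1 = a * Mcf t 0 1 + Mcf t 1 1 := by
  rw [Mcf_cons, mul2]; simp

lemma Mcf_cons10 (a : ℕ) (t : List ℕ) : Mcf (a :: t) 1 0 = Mcf t 0 0 := by
  rw [Mcf_cons, mul2]; simp

lemma Mcf_cons11 (a : ℕ) (t : List ℕ) : Mcf (a :: t) 1 1 = Mcf t 0 1 := by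
  rw [Mcf_cons, mul2]; simp

def Pos (l : List ℕ) : Prop := ∀ a ∈ l, 1 ≤ a

lemma basic_pos : ∀ l : List ℕ, Pos l → 1 ≤ Mcf l 0 0 ∧ 0 ≤ Mcf l 1 0 := by
  intro l
  induction l with
  | nil => intro _; constructor <;> simp [Matrix.one_apply]
  | cons a t ih =>
    intro h
    obtain ⟨h1, h2⟩ := ih (fun b hb => h b (List.mem_cons_of_mem _ hb))
    have ha : 1 ≤ a := h a (List.mem_cons_self)
    constructor
    · rw [Mcf_cons00]
      have : (1:ℤ) ≤ (a:ℤ) * Mcf t 0 0 := by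
        calc (1:ℤ) ≤ Mcf t 0 0 := h1
        _ ≤ a * Mcf t 0 0 := le_mul_of_one_le_left (by linarith) (by exact_mod_cast ha)
      linarith
    · rw [Mcf_cons10]; linarith

lemma one_le_00 (l : List ℕ) (h : Pos l) : 1 ≤ Mcf l 0 0 := (basic_pos l h).1

lemma one_le_10 (l : List ℕ) (h : Pos l) (hne : l ≠ []) : 1 ≤ Mcf l 1 0 := by
  match l with
  | a :: t =>
    rw [Mcf_cons10]
    exact one_le_00 t (fun b hb => h b (List.mem_cons_of_mem _ hb))

lemma lt_00_of_two (l : List ℕ) (h : Pos l) (h2 : 2 ≤ l.length) :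
    Mcf l 1 0 < Mcf l 0 0 := by
  match l with
  | a :: t =>
    have htne : t ≠ [] := by
      intro he; rw [he] at h2; simp at h2
    have hpt : Pos t := fun b hb => h b (List.mem_cons_of_mem _ hb)
    have ha : 1 ≤ a := h a (List.mem_cons_self)
    have h1 := one_le_00 t hpt
    have h10 := one_le_10 t hpt htne
    rw [Mcf_cons00, Mcf_cons10]
    have : (Mcf t 0 0 : ℤ) ≤ a * Mcf t 0 0 :=
      le_mul_of_one_le_left (by linarith) (by exact_mod_cast ha)
    linarith

lemma det_Mcf (l : List ℕ) : (Mcf l).det = (-1) ^ l.length := by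
  induction l with
  | nil => simp
  | cons a t ih =>
    rw [Mcf_cons, Matrix.det_mul, ih]
    have : (!![(a:ℤ),1;1,0]).det = -1 := by
      rw [Matrix.det_fin_two_of]; ring
    rw [this, List.length_cons, pow_succ]; ring

lemma Mcf_reverse (l : List ℕ) : Mcf l.reverse = (Mcf l)ᵀ := by
  induction l with
  | nil => simp
  | cons a t ih =>
    have hsa : Mcf [a] = !![(a:ℤ),1;1,0] := by simp [Mcf]
    have hsym : (!![(a:ℤ),1;1,0])ᵀ = !![(a:ℤ),1;1,0] := by
      ext i j
      fin_cases i <;> fin_cases j <;> simp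
    rw [List.reverse_cons, Mcf_append, ih, hsa, Mcf_cons, Matrix.transpose_mul, hsym]

lemma pos_tail {a : ℕ} {t : List ℕ} (h : Pos (a :: t)) : Pos t :=
  fun b hb => h b (List.mem_cons_of_mem _ hb)

lemma pos_head {a : ℕ} {t : List ℕ} (h : Pos (a :: t)) : 1 ≤ a :=
  h a (List.mem_cons_self)

lemma vCF_ge_one : ∀ l : List ℕ, Pos l → l ≠ [] → 1 ≤ vCF l := by
  intro l
  induction l with
  | nil => intro _ h; exact absurd rfl h
  | cons a t ih =>
    intro h _
    have ha : (1:ℚ) ≤ a := by exact_mod_cast pos_head h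
    have hinv : 0 ≤ (vCF t)⁻¹ := by
      rcases eq_or_ne t [] with rfl | hne
      · simp [vCF]
      · have := ih (pos_tail h) hne
        positivity
    calc (1:ℚ) ≤ a := ha
      _ ≤ a + (vCF t)⁻¹ := by linarith
      _ = vCF (a :: t) := rfl

lemma vCF_eq : ∀ l : List ℕ, Pos l → l ≠ [] →
    vCF l = (Mcf l 0 0 : ℚ) / (Mcf l 1 0 : ℚ) := by
  intro l
  induction l with
  | nil => intro _ h; exact absurd rfl h
  | cons a t ih =>
    intro h _
    rcases eq_or_ne t [] with rfl | hne
    · show (a:ℚ) + (vCF [])⁻¹ = _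
      rw [Mcf_cons00, Mcf_cons10]
      simp [vCF, Matrix.one_apply]
    · have hpt := pos_tail h
      have h00 : (1:ℤ) ≤ Mcf t 0 0 := one_le_00 t hpt
      have h00q : (0:ℚ) < (Mcf t 0 0 : ℚ) := by exact_mod_cast h00
      show (a:ℚ) + (vCF t)⁻¹ = _
      rw [ih hpt hne, Mcf_cons00, Mcf_cons10]
      rw [inv_div]
      push_cast
      field_simp

lemma vCF_inj : ∀ l l' : List ℕ, Pos l → Pos l' → l.length = l'.length →
    vCF l = vCF l' → l = l' := by
  intro l
  induction l with
  | nil =>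
    intro l' _ _ hlen _
    exact (List.eq_nil_of_length_eq_zero hlen.symm).symm
  | cons a t ih =>
    intro l' hp hp' hlen hv
    match l' with
    | [] => simp at hlen
    | b :: t' =>
      have hlent : t.length = t'.length := by simpa using hlen
      have hvc : (a:ℚ) + (vCF t)⁻¹ = (b:ℚ) + (vCF t')⁻¹ := hv
      rcases eq_or_ne t [] with rfl | hne
      · have ht' : t' = [] := List.eq_nil_of_length_eq_zero hlent.symm
        subst ht'
        have : (a:ℚ) = b := by simpa [vCF] using hvc
        have : a = b := by exact_mod_cast this
        rw [this]
      · have hne' : t' ≠ [] := by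
          intro he; rw [he] at hlent; exact hne (List.eq_nil_of_length_eq_zero hlent)
        have h1 : 1 ≤ vCF t := vCF_ge_one t (pos_tail hp) hne
        have h1' : 1 ≤ vCF t' := vCF_ge_one t' (pos_tail hp') hne'
        have hi1 : 0 < (vCF t)⁻¹ := by positivity
        have hi2 : (vCF t)⁻¹ ≤ 1 := by
          rw [inv_le_one_iff₀]; right; exact h1
        have hi1' : 0 < (vCF t')⁻¹ := by positivity
        have hi2' : (vCF t')⁻¹ ≤ 1 := by
          rw [inv_le_one_iff₀]; right; exact h1'
        have hab : a = b := by
          have h1 : (a:ℚ) < b + 1 := by linarith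
          have h2 : (b:ℚ) < a + 1 := by linarith
          have h1n : a < b + 1 := by exact_mod_cast h1
          have h2n : b < a + 1 := by exact_mod_cast h2
          omega
        have hveq : vCF t = vCF t' := by
          have : (vCF t)⁻¹ = (vCF t')⁻¹ := by
            rw [hab] at hvc; linarith
          exact inv_injective this
        rw [hab, ih t' (pos_tail hp) (pos_tail hp') hlent hveq]

lemma exists_cf : ∀ x : ℕ, ∀ y : ℕ, 1 ≤ x → x < y → Nat.Coprime x y →
    ∃ l : List ℕ, Pos l ∧ l ≠ [] ∧ Mcf l 0 0 = (y:ℤ) ∧ Mcf l 1 0 = (x:ℤ) := by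
  intro x
  induction x using Nat.strong_induction_on with
  | _ x ih =>
    intro y hx hxy hcop
    have hx0 : 0 < x := hx
    set r := y % x with hr
    set q := y / x with hq
    have hdm : x * q + r = y := Nat.div_add_mod y x
    have hq1 : 1 ≤ q := (Nat.one_le_div_iff hx0).mpr (le_of_lt hxy)
    rcases Nat.eq_zero_or_pos r with hr0 | hrpos
    · -- x ∣ y, coprime ⇒ x = 1
      have hdvd : x ∣ y := Nat.dvd_of_mod_eq_zero hr0
      have hx1 : x = 1 := Nat.eq_one_of_dvd_coprimes hcop (dvd_refl x) hdvd
      refine ⟨[y], ?_, by simp, ?_, ?_⟩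
      · intro b hb; simp at hb; omega
      · show Mcf [y] 0 0 = (y:ℤ)
        rw [Mcf_cons00]; simp [Matrix.one_apply]
      · show Mcf [y] 1 0 = (x:ℤ)
        rw [Mcf_cons10]; simp [Matrix.one_apply, hx1]
    · have hrx : r < x := Nat.mod_lt y hx0
      have hcop' : Nat.Coprime r x := by
        have : Nat.gcd x y = Nat.gcd (y % x) x := Nat.gcd_rec x y
        unfold Nat.Coprime at *
        rw [hr]; omega
      obtain ⟨l, hl, hlne, h00, h10⟩ := ih r hrx x hrpos hrx hcop'
      refine ⟨q :: l, ?_, by simp, ?_, ?_⟩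
      · intro b hb
        rcases List.mem_cons.mp hb with rfl | hb
        · exact hq1
        · exact hl b hb
      · rw [Mcf_cons00, h00, h10]
        push_cast [← hdm]; ring
      · rw [Mcf_cons10, h00]

lemma Mcf_single (a : ℕ) : Mcf [a] = !![(a:ℤ),1;1,0] := by simp [Mcf]

lemma Mcf_single00 (a : ℕ) : Mcf [a] 0 0 = (a:ℤ) := by rw [Mcf_single]; simp
lemma Mcf_single10 (a : ℕ) : Mcf [a] 1 0 = 1 := by rw [Mcf_single]; simp

lemma Mcf_pair00 (b : ℕ) : Mcf [b,1] 0 0 = (b:ℤ)+1 := by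
  rw [Mcf_cons00, Mcf_single00, Mcf_single10]; ring

lemma Mcf_pair10 (b : ℕ) : Mcf [b,1] 1 0 = 1 := by
  rw [Mcf_cons10, Mcf_single00]; simp

lemma col0_congr {A B C : Matrix (Fin 2) (Fin 2) ℤ} (h0 : B 0 0 = C 0 0)
    (h1 : B 1 0 = C 1 0) (i : Fin 2) : (A * B) i 0 = (A * C) i 0 := by
  rw [mul2, mul2, h0, h1]

lemma exists_cf_even (x y : ℕ) (hx : 1 ≤ x) (hxy : x < y) (hcop : Nat.Coprime x y) :
    ∃ l : List ℕ, Pos l ∧ l ≠ [] ∧ Even l.length ∧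
      Mcf l 0 0 = (y:ℤ) ∧ Mcf l 1 0 = (x:ℤ) := by
  obtain ⟨l, hl, hlne, h00, h10⟩ := exists_cf x y hx hxy hcop
  by_cases hev : Even l.length
  · exact ⟨l, hl, hlne, hev, h00, h10⟩
  · rcases List.eq_nil_or_concat l with rfl | ⟨l', c, rfl⟩
    · exact absurd rfl hlne
    · simp only [List.concat_eq_append] at hl hlne h00 h10 hev
      have hc : 1 ≤ c := hl c (by simp)
      rcases Nat.lt_or_ge c 2 with hc2 | hc2
      · -- c = 1
        have hc1 : c = 1 := by omega
        subst hc1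
        rcases List.eq_nil_or_concat l' with rfl | ⟨l'', b, rfl⟩
        · exfalso
          rw [List.nil_append, Mcf_single00] at h00
          omega
        · simp only [List.concat_eq_append] at *
          have hre : (l'' ++ [b]) ++ [1] = l'' ++ [b, 1] := by simp
          rw [hre] at h00 h10 hl hev
          refine ⟨l'' ++ [b+1], ?_, by simp, ?_, ?_, ?_⟩
          · intro a ha
            rcases List.mem_append.mp ha with ha | ha
            · exact hl a (by simp [ha])
            · simp at ha; omega
          · simp only [List.length_append, List.length_cons, List.length_nil] at hev ⊢
            rw [Nat.even_iff] at *
            omega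
          · rw [← h00, Mcf_append, Mcf_append]
            exact col0_congr (by rw [Mcf_single00, Mcf_pair00]; push_cast; ring)
              (by rw [Mcf_single10, Mcf_pair10]) 0
          · rw [← h10, Mcf_append, Mcf_append]
            exact col0_congr (by rw [Mcf_single00, Mcf_pair00]; push_cast; ring)
              (by rw [Mcf_single10, Mcf_pair10]) 1
      · refine ⟨l' ++ [c-1, 1], ?_, by simp, ?_, ?_, ?_⟩
        · intro a ha
          rcases List.mem_append.mp ha with ha | ha
          · exact hl a (by simp [ha])
          · simp at ha; omega
        · simp only [List.length_append, List.length_cons, List.length_nil] at hev ⊢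
          rw [Nat.even_iff] at *
          omega
        · rw [← h00, Mcf_append, Mcf_append]
          exact col0_congr (by rw [Mcf_pair00, Mcf_single00]; push_cast [hc]; ring) 
            (by rw [Mcf_pair10, Mcf_single10]) 0
        · rw [← h10, Mcf_append, Mcf_append]
          exact col0_congr (by rw [Mcf_pair00, Mcf_single00]; push_cast [hc]; ring)
            (by rw [Mcf_pair10, Mcf_single10]) 1


lemma cfTail_eq_vCF (l : List ℕ) (a : ℕ → ℕ)
    (ha : ∀ i (h : i < l.length), a (i+1) = l[i]) :
    ∀ j, j ≤ l.length → cfTail a l.length j = vCF (l.drop (l.length - j)) := by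
  intro j
  induction j with
  | zero =>
    intro _
    simp [cfTail, List.drop_length, vCF]
  | succ j ihj =>
    intro hj1
    have hj : j ≤ l.length := by omega
    have hlt : l.length - (j+1) < l.length := by omega
    have hstep : l.length - (j+1) + 1 = l.length - j := by omega
    have hdrop : l.drop (l.length - (j+1)) =
        l[l.length - (j+1)] :: l.drop (l.length - j) := by
      rw [List.drop_eq_getElem_cons hlt, hstep]
    have hav : a (l.length - j) = l[l.length - (j+1)] := by
      rw [← hstep]; exact ha _ hlt
    show a (l.length - j) + (cfTail a l.length j)⁻¹ = _
    rw [ihj hj, hdrop, hav]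
    rfl

lemma getD_eq_gElem (l : List ℕ) (i : ℕ) (h : i < l.length) : l.getD i 1 = l[i] := by
  simp [List.getD_eq_getElem?_getD, List.getElem?_eq_getElem h]

/-- for integers `y ≥ 1`, `0 ≤ x ≤ y` with `gcd(x,y) = 1`: `x² ≡ -1 (mod y)` iff
there exist `a_0 ≥ 0`, an even `n ≥ 0` and a symmetric sequence `(a_1, …, a_n)` of positive
integers such that `x/y = [a_0; a_1, …, a_n]`. -/
theorem stmt_14 (x y : ℕ) (hy : 1 ≤ y) (hxy : x ≤ y) (hcop : Nat.Coprime x y) :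
    Int.ModEq (y : ℤ) ((x : ℤ) ^ 2) (-1) ↔
      ∃ (a0 : ℕ) (n : ℕ) (a : ℕ → ℕ), Even n ∧
        (∀ i, 1 ≤ i → i ≤ n → 0 < a i) ∧
        (∀ i, 1 ≤ i → i ≤ n → a (n + 1 - i) = a i) ∧
        (x : ℚ) / y = (a0 : ℚ) + (cfTail a n n)⁻¹ := by
  rcases eq_or_lt_of_le hy with hy1 | hy2
  · -- y = 1
    subst hy1
    constructor
    · intro _
      refine ⟨x, 0, fun _ => 1, Even.zero, by omega, by omega, ?_⟩
      show (x:ℚ)/1 = x + (cfTail _ 0 0)⁻¹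
      simp [cfTail]
    · intro _
      exact Int.modEq_iff_dvd.mpr (one_dvd _)
  · -- y ≥ 2
    have hxlt : x < y := by
      rcases eq_or_lt_of_le hxy with rfl | h
      · exfalso; rw [Nat.coprime_self] at hcop; omega
      · exact h
    have hx1 : 1 ≤ x := by
      rcases Nat.eq_zero_or_pos x with rfl | h
      · exfalso; rw [Nat.coprime_zero_left] at hcop; omega
      · exact h
    have hcopxy : IsCoprime (x:ℤ) (y:ℤ) := Nat.isCoprime_iff_coprime.mpr hcop
    have hcopyx : IsCoprime (y:ℤ) (x:ℤ) := hcopxy.symm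
    constructor
    · -- construction direction
      intro hmod
      obtain ⟨l, hl, hlne, hev, h00, h10⟩ := exists_cf_even x y hx1 hxlt hcop
      have hn2 : 2 ≤ l.length := by
        have : 1 ≤ l.length := List.length_pos_iff.mpr hlne
        rcases hev with ⟨k, hk⟩; omega
      have hdet : (y:ℤ) * Mcf l 1 1 - Mcf l 0 1 * x = 1 := by
        have h1 := det_Mcf l
        rw [Matrix.det_fin_two, Even.neg_one_pow hev, h00, h10] at h1
        exact h1
      have hrevpos : Pos l.reverse := fun b hb => hl b (List.mem_reverse.mp hb)
      have hrevne : l.reverse ≠ [] := by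
        intro h; apply hlne; simpa using congrArg List.length h
      have hrev10 : Mcf l.reverse 1 0 = Mcf l 0 1 := by rw [Mcf_reverse]; rfl
      have hrev00 : Mcf l.reverse 0 0 = Mcf l 0 0 := by rw [Mcf_reverse]; rfl
      have hr1 : 1 ≤ Mcf l 0 1 := by
        rw [← hrev10]; exact one_le_10 _ hrevpos hrevne
      have hrlt : Mcf l 0 1 < (y:ℤ) := by
        rw [← h00, ← hrev10, ← hrev00]
        exact lt_00_of_two _ hrevpos (by simpa using hn2)
      -- r ≡ x mod y hence r = x
      have hrx : Mcf l 0 1 * x ≡ -1 [ZMOD (y:ℤ)] :=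
        Int.modEq_iff_dvd.mpr ⟨-(Mcf l 1 1), by linarith [hdet]⟩
      have hxx : (x:ℤ) * x ≡ Mcf l 0 1 * x [ZMOD (y:ℤ)] := by
        have h2 : (x:ℤ) * x ≡ -1 [ZMOD (y:ℤ)] := by rw [← sq]; exact hmod
        exact h2.trans hrx.symm
      have hdvd1 : (y:ℤ) ∣ Mcf l 0 1 * x - x * x := Int.ModEq.dvd hxx
      have hdvd : (y:ℤ) ∣ Mcf l 0 1 - x := by
        refine hcopyx.dvd_of_dvd_mul_right (show (y:ℤ) ∣ (Mcf l 0 1 - ↑x) * ↑x from ?_)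
        rw [sub_mul]; exact hdvd1
      have hreq : Mcf l 0 1 = (x:ℤ) := by
        obtain ⟨k, hk⟩ := hdvd
        have hy0 : (0:ℤ) < y := by exact_mod_cast hy
        have hxzy : (x:ℤ) < y := by exact_mod_cast hxlt
        have hxz0 : (0:ℤ) ≤ x := by positivity
        have hk1 : k < 1 := by
          by_contra h
          push_neg at h
          have : (y:ℤ) * 1 ≤ y * k := by
            apply mul_le_mul_of_nonneg_left h (le_of_lt hy0)
          linarith
        have hk2 : -1 < k := by
          by_contra h
          push_neg at h
          have : (y:ℤ) * k ≤ y * (-1) := by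
            apply mul_le_mul_of_nonneg_left h (le_of_lt hy0)
          linarith
        have : k = 0 := by omega
        rw [this] at hk
        linarith
      -- palindrome
      have hveq : vCF l.reverse = vCF l := by
        rw [vCF_eq _ hrevpos hrevne, vCF_eq _ hl hlne, hrev00, hrev10, hreq, h10]
      have hpal : l.reverse = l :=
        vCF_inj _ _ hrevpos hl (by simp) hveq
      -- build witnesses
      refine ⟨0, l.length, fun i => l.getD (i-1) 1, hev, ?_, ?_, ?_⟩
      · intro i hi1 hin
        show 0 < l.getD (i-1) 1
        have hlt : i - 1 < l.length := by omega
        rw [getD_eq_gElem l _ hlt]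
        exact hl _ (List.getElem_mem _)
      · intro i hi1 hin
        show l.getD (l.length + 1 - i - 1) 1 = l.getD (i-1) 1
        have h1 : l.length + 1 - i - 1 = l.length - i := by omega
        have h2 : l.length - i < l.length := by omega
        have h3 : i - 1 < l.length := by omega
        rw [h1, getD_eq_gElem l _ h2, getD_eq_gElem l _ h3]
        have h4 : l[i-1] = l.reverse[i-1]'(by simpa using h3) :=
          (List.getElem_of_eq hpal _).symm
        rw [h4, List.getElem_reverse]
        congr 1
        omega
      · have hbridge : cfTail (fun i => l.getD (i-1) 1) l.length l.length = vCF l := by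
          have := cfTail_eq_vCF l (fun i => l.getD (i-1) 1)
            (fun i h => by simp only [Nat.add_sub_cancel]; exact getD_eq_gElem l i h)
            l.length (le_refl _)
          simpa using this
        rw [hbridge, vCF_eq _ hl hlne, h00, h10]
        push_cast
        rw [inv_div]
        ring
    · -- converse direction
      rintro ⟨a0, n, a, hev, hpos, hsym, heq⟩
      rcases Nat.eq_zero_or_pos n with rfl | hn1
      · exfalso
        have hxa : (x:ℚ)/y = a0 := by
          rw [heq]
          show (a0:ℚ) + (cfTail a 0 0)⁻¹ = a0
          simp [cfTail]
        have hy0 : (y:ℚ) ≠ 0 := by positivity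
        rw [div_eq_iff hy0] at hxa
        have hxn : x = a0 * y := by exact_mod_cast hxa
        have hdvd : y ∣ x := ⟨a0, by rw [hxn]; ring⟩
        have h1 : y ∣ 1 := hcop ▸ Nat.dvd_gcd hdvd dvd_rfl
        have := Nat.le_of_dvd one_pos h1
        omega
      · have hldef : ∃ l : List ℕ, l = (List.range' 1 n).map a := ⟨_, rfl⟩
        obtain ⟨l, hldef⟩ := hldef
        have hlen : l.length = n := by simp [hldef]
        have hgel : ∀ i (h : i < n), l[i]'(by omega) = a (i+1) := by
          intro i h
          simp only [hldef, List.getElem_map, List.getElem_range']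
          congr 1
          omega
        have hl : Pos l := by
          intro b hb
          rw [hldef] at hb
          obtain ⟨i, hi, rfl⟩ := List.mem_map.mp hb
          rw [List.mem_range'_1] at hi
          exact hpos i hi.1 (by omega)
        have hlne : l ≠ [] := by
          intro h; rw [h] at hlen; simp at hlen; omega
        have hbridge : cfTail a n n = vCF l := by
          have := cfTail_eq_vCF l a (fun i h => (hgel i (by omega)).symm) n (by omega)
          rw [hlen] at this
          simpa using this
        have hdet : Mcf l 0 0 * Mcf l 1 1 - Mcf l 0 1 * Mcf l 1 0 = 1 := by
          have h1 := det_Mcf l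
          rw [Matrix.det_fin_two, hlen, Even.neg_one_pow hev] at h1
          exact h1
        have hp1 : 1 ≤ Mcf l 0 0 := one_le_00 l hl
        have hq1 : 1 ≤ Mcf l 1 0 := one_le_10 l hl hlne
        have hp0 : (0:ℚ) < ((Mcf l 0 0 : ℤ) : ℚ) := by exact_mod_cast hp1
        have hq0 : (0:ℚ) < ((Mcf l 1 0 : ℤ) : ℚ) := by exact_mod_cast hq1
        have hval : (cfTail a n n)⁻¹ = ((Mcf l 1 0 : ℤ):ℚ)/((Mcf l 0 0 : ℤ):ℚ) := by
          rw [hbridge, vCF_eq _ hl hlne, inv_div]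
        have ha0 : a0 = 0 := by
          by_contra h
          have h1 : (1:ℚ) ≤ a0 := by exact_mod_cast Nat.one_le_iff_ne_zero.mpr h
          have h2 : (x:ℚ)/y ≤ 1 := by
            rw [div_le_one (by positivity)]
            exact_mod_cast hxy
          have h3 : (0:ℚ) < ((Mcf l 1 0 : ℤ):ℚ)/((Mcf l 0 0 : ℤ):ℚ) := by positivity
          rw [heq, hval] at h2
          linarith
        have hxq : (x:ℚ)/y = ((Mcf l 1 0 : ℤ):ℚ)/((Mcf l 0 0 : ℤ):ℚ) := by
          rw [heq, hval, ha0]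
          norm_num
        have hpne : (((Mcf l 0 0 : ℤ)):ℚ) ≠ 0 := ne_of_gt hp0
        have hyne : ((y:ℚ)) ≠ 0 := by positivity
        have hcross : (x:ℤ) * Mcf l 0 0 = Mcf l 1 0 * y := by
          have := (div_eq_div_iff hyne hpne).mp hxq
          exact_mod_cast this
        have hcopqp : IsCoprime (Mcf l 1 0) (Mcf l 0 0) :=
          ⟨-(Mcf l 0 1), Mcf l 1 1, by linarith [hdet]⟩
        have hqdx : Mcf l 1 0 ∣ (x:ℤ) :=
          hcopqp.dvd_of_dvd_mul_right ⟨y, by linarith [hcross]⟩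
        have hxdq : (x:ℤ) ∣ Mcf l 1 0 :=
          hcopxy.dvd_of_dvd_mul_right ⟨Mcf l 0 0, by linarith [hcross]⟩
        have hqx : Mcf l 1 0 = (x:ℤ) := by
          refine Int.dvd_antisymm (by linarith) (by positivity) hqdx hxdq
        have hpy : Mcf l 0 0 = (y:ℤ) := by
          have hx0 : (x:ℤ) ≠ 0 := by
            have : (1:ℤ) ≤ x := by exact_mod_cast hx1
            linarith
          apply mul_left_cancel₀ hx0
          rw [hcross, hqx]
        -- palindrome of the list
        have hpal : l.reverse = l := by
          apply List.ext_getElem (by simp)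
          intro i h1 h2
          rw [List.getElem_reverse]
          have hi : i < n := by rw [← hlen]; exact h2
          rw [hgel _ (by omega : l.length - 1 - i < n), hgel _ hi]
          have hs2 := hsym (i+1) (by omega) (by omega)
          have heqidx : n + 1 - (i+1) = l.length - 1 - i + 1 := by omega
          rw [heqidx] at hs2
          exact hs2
        have hrq : Mcf l 0 1 = Mcf l 1 0 := by
          have h1 : Mcf l = (Mcf l)ᵀ := by rw [← Mcf_reverse, hpal]
          have := congrFun (congrFun h1 0) 1
          simpa [Matrix.transpose_apply] using this
        refine Int.ModEq.symm (Int.modEq_iff_dvd.mpr ⟨(Mcf l 1 1), ?_⟩)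
        rw [hpy, hrq, hqx] at hdet
        have hsq : (x:ℤ)^2 = (x:ℤ) * (x:ℤ) := sq (x:ℤ)
        rw [hsq]
        linarith [hdet]
end

section
/- Let y ≥ 2 be an even integer and 0 ≤ x < y with gcd(x, y) = 1, and suppose x/y = [0; a_1, …, a_n] for a symmetric (palindromic) sequence (a_1, …, a_n) of positive integers with n ≥ 1. Let r_{n−1}/q_{n−1} = [0; a_1, …, a_{n−1}] in lowest terms. If n is even (so that x² ≡ −1 (mod y)), then the integer t = (x² + 1)/y satisfies t ≡ q_{n−1}·r_{n−1} (mod 2); if n is odd (so that x² ≡ 1 (mod y)), then the integer t = (x² − 1)/y satisfies t ≡ q_{n−1}·r_{n−1} (mod 2). -/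
namespace Stmt16Aux

open Matrix

/-- single continued-fraction matrix -/
def pm (x : ℕ) : Matrix (Fin 2) (Fin 2) ℤ := !![(x : ℤ), 1; 1, 0]

/-- product of continued-fraction matrices over a list -/
def pl : List ℕ → Matrix (Fin 2) (Fin 2) ℤ
  | [] => 1
  | x :: l => pm x * pl l

lemma pl_nil : pl [] = 1 := rfl
lemma pl_cons (x : ℕ) (l : List ℕ) : pl (x :: l) = pm x * pl l := rfl

lemma pl_append (l : List ℕ) (x : ℕ) : pl (l ++ [x]) = pl l * pm x := by
  induction l with
  | nil => simp [pl_nil, pl_cons, pl]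
  | cons y l ih => simp [pl_cons, ih, Matrix.mul_assoc]

lemma det_pm (x : ℕ) : (pm x).det = -1 := by
  simp [pm, Matrix.det_fin_two_of]

lemma det_pl (l : List ℕ) : (pl l).det = (-1) ^ l.length := by
  induction l with
  | nil => simp [pl_nil]
  | cons y l ih =>
      rw [pl_cons, Matrix.det_mul, det_pm, ih, List.length_cons, pow_succ]
      ring

lemma transpose_pm (x : ℕ) : (pm x)ᵀ = pm x := by
  ext i j
  fin_cases i <;> fin_cases j <;> rfl

lemma transpose_pl (l : List ℕ) : (pl l)ᵀ = pl l.reverse := by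
  induction l with
  | nil => simp [pl_nil]
  | cons y l ih =>
      rw [List.reverse_cons, pl_append, pl_cons, Matrix.transpose_mul, transpose_pm, ih]

lemma pl_cons_apply (x : ℕ) (l : List ℕ) (j : Fin 2) :
    pl (x :: l) 0 j = x * pl l 0 j + pl l 1 j ∧ pl (x :: l) 1 j = pl l 0 j := by
  constructor <;>
  · rw [pl_cons, Matrix.mul_apply, Fin.sum_univ_two]
    simp [pm]

lemma pl_entries_nonneg (l : List ℕ) (hl : ∀ z ∈ l, 0 < z) :
    1 ≤ pl l 0 0 ∧ 0 ≤ pl l 1 0 := by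
  induction l with
  | nil => simp [pl_nil]
  | cons x l ih =>
      obtain ⟨h1, h2⟩ := ih (fun z hz => hl z (List.mem_cons_of_mem x hz))
      obtain ⟨e1, e2⟩ := pl_cons_apply x l 0
      have hx1 : (1 : ℤ) ≤ (x : ℤ) := by
        exact_mod_cast hl x (List.mem_cons_self)
      constructor
      · rw [e1]; nlinarith
      · rw [e2]; omega

/-- continued-fraction value of a list -/
def v : List ℕ → ℚ
  | [] => 0
  | x :: l => x + (v l)⁻¹

lemma v_eq (l : List ℕ) (hl : ∀ z ∈ l, 0 < z) :
    v l = (pl l 0 0 : ℚ) / (pl l 1 0 : ℚ) ∨ l = [] := by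
  induction l with
  | nil => right; rfl
  | cons x l ih =>
      left
      have hl' : ∀ z ∈ l, 0 < z := fun z hz => hl z (List.mem_cons_of_mem x hz)
      have ih := ih hl'
      have h00 : (1 : ℤ) ≤ pl l 0 0 := (pl_entries_nonneg l hl').1
      have h00q : (pl l 0 0 : ℚ) ≠ 0 := by exact_mod_cast (by omega : pl l 0 0 ≠ 0)
      have hv : v l = (pl l 0 0 : ℚ) / (pl l 1 0 : ℚ) := by
        rcases ih with h | h
        · exact h
        · subst h; simp [v, pl_nil]
      obtain ⟨e1, e2⟩ := pl_cons_apply x l 0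
      rw [show v (x :: l) = x + (v l)⁻¹ from rfl, hv, inv_div, e1, e2]
      push_cast
      rw [add_div' _ _ _ h00q]

lemma v_eq' (l : List ℕ) (hl : ∀ z ∈ l, 0 < z) :
    v l = (pl l 0 0 : ℚ) / (pl l 1 0 : ℚ) := by
  rcases v_eq l hl with h | h
  · exact h
  · subst h; simp [v, pl_nil]

lemma coprime_pl (l : List ℕ) :
    Nat.Coprime (pl l 1 0).natAbs (pl l 0 0).natAbs := by
  have hdet := det_pl l
  rw [Matrix.det_fin_two] at hdet
  apply Int.isCoprime_iff_gcd_eq_one.mp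
  rcases Nat.even_or_odd l.length with he | ho
  · refine ⟨-(pl l 0 1), pl l 1 1, ?_⟩
    rw [he.neg_one_pow] at hdet; linarith
  · refine ⟨pl l 0 1, -(pl l 1 1), ?_⟩
    rw [ho.neg_one_pow] at hdet; linarith

/-- num/den of the reciprocal of the continued-fraction value -/
lemma v_inv_num_den (l : List ℕ) (hl : ∀ z ∈ l, 0 < z) :
    ((v l)⁻¹).num = pl l 1 0 ∧ (((v l)⁻¹).den : ℤ) = pl l 0 0 := by
  have h00 : (0 : ℤ) < pl l 0 0 := by have := (pl_entries_nonneg l hl).1; omega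
  have hv : (v l)⁻¹ = ((pl l 1 0 : ℤ) : ℚ) / ((pl l 0 0 : ℤ) : ℚ) := by
    rw [v_eq' l hl, inv_div]
  rw [hv]
  exact ⟨Rat.num_div_eq_of_coprime h00 (coprime_pl l),
    Rat.den_div_eq_of_coprime h00 (coprime_pl l)⟩

/-- the list `[a (m-j+1), …, a m]` -/
def seg (a : ℕ → ℕ) (m : ℕ) : ℕ → List ℕ
  | 0 => []
  | j + 1 => a (m - j) :: seg a m j

lemma cfTail_eq_v (a : ℕ → ℕ) (m : ℕ) : ∀ j, cfTail a m j = v (seg a m j)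
  | 0 => rfl
  | j + 1 => by rw [cfTail, seg, v, cfTail_eq_v a m j]

lemma seg_length (a : ℕ → ℕ) (m : ℕ) : ∀ j, (seg a m j).length = j
  | 0 => rfl
  | j + 1 => by rw [seg, List.length_cons, seg_length a m j]

lemma seg_get (a : ℕ → ℕ) (m : ℕ) : ∀ j, j ≤ m → ∀ i, (hi : i < j) →
    (seg a m j).get ⟨i, by rw [seg_length]; exact hi⟩ = a (m - j + 1 + i)
  | 0, _, i, hi => absurd hi (Nat.not_lt_zero i)
  | j + 1, hj, 0, hi => by
      show a (m - j) = a (m - (j + 1) + 1 + 0)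
      congr 1; omega
  | j + 1, hj, i + 1, hi => by
      show (seg a m j).get ⟨i, _⟩ = a (m - (j + 1) + 1 + (i + 1))
      rw [seg_get a m j (by omega) i (by omega)]
      congr 1; omega

lemma seg_succ (a : ℕ → ℕ) (m : ℕ) : ∀ j, seg a m (j + 1) = seg a (m - 1) j ++ [a m]
  | 0 => by simp [seg]
  | j + 1 => by
      rw [seg, seg_succ a m j, show seg a (m-1) (j+1) = a (m - 1 - j) :: seg a (m-1) j from rfl,
        List.cons_append]
      congr 2
      omega

lemma seg_mem (a : ℕ → ℕ) (m : ℕ) : ∀ j, j ≤ m → ∀ z ∈ seg a m j, ∃ i, 1 ≤ i ∧ i ≤ m ∧ z = a i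
  | 0, _, z, hz => absurd hz List.not_mem_nil
  | j + 1, hj, z, hz => by
      rcases List.mem_cons.mp hz with h | h
      · exact ⟨m - j, by omega, by omega, h⟩
      · exact seg_mem a m j (by omega) z h

end Stmt16Aux

open Matrix Stmt16Aux in
/-- let `y ≥ 2` be even, `0 ≤ x < y`, `gcd(x,y) = 1`, and
`x/y = [0; a_1, …, a_n]` for a symmetric sequence of positive integers with `n ≥ 1`; let
`r_{n-1}/q_{n-1} = [0; a_1, …, a_{n-1}]` in lowest terms. If `n` is even then
`t = (x²+1)/y ≡ q_{n-1} r_{n-1} (mod 2)`; if `n` is odd then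
`t = (x²-1)/y ≡ q_{n-1} r_{n-1} (mod 2)`. -/
theorem stmt_16 (y x : ℕ) (hy : Even y) (hy2 : 2 ≤ y) (hxy : x < y) (hcop : Nat.Coprime x y)
    (n : ℕ) (hn : 1 ≤ n) (a : ℕ → ℕ)
    (ha : ∀ i, 1 ≤ i → i ≤ n → 0 < a i)
    (hsym : ∀ i, 1 ≤ i → i ≤ n → a (n + 1 - i) = a i)
    (hval : (x : ℚ) / y = (cfTail a n n)⁻¹) :
    (Even n →
      Int.ModEq 2 (((x : ℤ) ^ 2 + 1) / (y : ℤ))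
        ((((cfTail a (n - 1) (n - 1))⁻¹).den : ℤ) * ((cfTail a (n - 1) (n - 1))⁻¹).num)) ∧
    (Odd n →
      Int.ModEq 2 (((x : ℤ) ^ 2 - 1) / (y : ℤ))
        ((((cfTail a (n - 1) (n - 1))⁻¹).den : ℤ) * ((cfTail a (n - 1) (n - 1))⁻¹).num)) := by
  -- notation
  set L : List ℕ := seg a n n with hL
  set L' : List ℕ := seg a (n - 1) (n - 1) with hL'
  -- L = L' ++ [a n]
  have hsplit : L = L' ++ [a n] := by
    rw [hL, hL', show n = (n - 1) + 1 by omega, seg_succ]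
    congr 1 <;> omega
  -- palindrome: L.reverse = L
  have hrev : L.reverse = L := by
    apply List.ext_get
    · simp
    · intro i h1 h2
      have hlen : L.length = n := seg_length a n n
      have hi : i < n := by
        have := h1; rw [List.length_reverse, hlen] at this; exact this
      rw [List.get_reverse' _ _ (by omega : L.length - 1 - (⟨i, by omega⟩ : Fin L.length) < L.length)]
      have e1 : L.get ⟨L.length - 1 - i, by omega⟩ = a (n - n + 1 + (L.length - 1 - i)) :=
        seg_get a n n le_rfl _ (by omega)
      have e2 : L.get ⟨i, by omega⟩ = a (n - n + 1 + i) := seg_get a n n le_rfl i hi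
      rw [e1, e2]
      have : n - n + 1 + (L.length - 1 - i) = n + 1 - (i + 1) := by omega
      rw [this, hsym (i + 1) (by omega) (by omega)]
      congr 1; omega
  have hLpos : ∀ z ∈ L, 0 < z := by
    intro z hz
    obtain ⟨i, h1, h2, h3⟩ := seg_mem a n n le_rfl z hz
    rw [h3]; exact ha i h1 h2
  have hL'pos : ∀ z ∈ L', 0 < z := by
    intro z hz
    obtain ⟨i, h1, h2, h3⟩ := seg_mem a (n-1) (n-1) le_rfl z hz
    rw [h3]; exact ha i h1 (by omega)
  -- matrix symmetry
  have hmatsym : (pl L) 1 0 = (pl L) 0 1 := by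
    have := transpose_pl L
    rw [hrev] at this
    calc (pl L) 1 0 = (pl L)ᵀ 0 1 := rfl
    _ = (pl L) 0 1 := by rw [this]
  -- identify x and y
  have hLval : (cfTail a n n)⁻¹ = (v L)⁻¹ := by rw [cfTail_eq_v]
  have h00pos : (0 : ℤ) < pl L 0 0 := by have := (pl_entries_nonneg L hLpos).1; omega
  have hxy' : (x : ℤ) = pl L 1 0 ∧ (y : ℤ) = pl L 0 0 := by
    have hv : ((x : ℤ) : ℚ) / ((y : ℤ) : ℚ) = ((pl L 1 0 : ℤ) : ℚ) / ((pl L 0 0 : ℤ) : ℚ) := by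
      push_cast
      rw [hval, hLval, v_eq' L hLpos, inv_div]
    exact Rat.div_int_inj (by exact_mod_cast (by omega : (0:ℕ) < y)) h00pos
      (by simpa [Int.natAbs_natCast] using hcop) (coprime_pl L) hv
  obtain ⟨hxe, hye⟩ := hxy'
  -- r and q
  have hL'val : (cfTail a (n-1) (n-1))⁻¹ = (v L')⁻¹ := by rw [cfTail_eq_v]
  obtain ⟨hnum, hden⟩ := v_inv_num_den L' hL'pos
  -- relate pl L and pl L'
  have hplsplit : pl L = pl L' * pm (a n) := by rw [hsplit, pl_append]
  have h01 : pl L 0 1 = pl L' 0 0 := by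
    rw [hplsplit, Matrix.mul_apply, Fin.sum_univ_two]; simp [pm]
  have h11 : pl L 1 1 = pl L' 1 0 := by
    rw [hplsplit, Matrix.mul_apply, Fin.sum_univ_two]; simp [pm]
  -- determinant identity
  have hdet := det_pl L
  rw [Matrix.det_fin_two] at hdet
  have hlen : L.length = n := seg_length a n n
  rw [hlen] at hdet
  -- x = q_{n-1}
  have hxq : (x : ℤ) = pl L' 0 0 := by rw [hxe, hmatsym, h01]
  set r : ℤ := pl L' 1 0 with hr
  -- key relation:  y * r - x^2 = (-1)^n
  have hkey : (y : ℤ) * r - (x : ℤ) ^ 2 = (-1) ^ n := by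
    rw [hye, ← h11, sq, hxe]
    nth_rewrite 2 [hmatsym]
    linarith [hdet]
  -- x is odd
  have hxodd : Odd (x : ℤ) := by
    rcases Int.even_or_odd (x : ℤ) with he | ho
    · exfalso
      have h2x : 2 ∣ x := by exact_mod_cast he.two_dvd
      have h2y : 2 ∣ y := hy.two_dvd
      have hg : Nat.gcd x y = 1 := hcop
      have := Nat.dvd_gcd h2x h2y
      rw [hg] at this
      omega
    · exact ho
  have hyne : (y : ℤ) ≠ 0 := by exact_mod_cast (by omega : y ≠ 0)
  -- conclusion pieces
  have goalden : (((cfTail a (n - 1) (n - 1))⁻¹).den : ℤ) = pl L' 0 0 := by rw [hL'val, hden]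
  have goalnum : ((cfTail a (n - 1) (n - 1))⁻¹).num = r := by rw [hL'val, hnum]
  rw [goalden, goalnum, ← hxq]
  constructor
  · intro hev
    have : ((x : ℤ) ^ 2 + 1) = (y : ℤ) * r := by
      rw [hev.neg_one_pow] at hkey; linarith
    rw [this, Int.mul_ediv_cancel_left _ hyne]
    -- r ≡ x * r [ZMOD 2]
    obtain ⟨k, hk⟩ := hxodd
    calc r = 1 * r := (one_mul r).symm
    _ ≡ (x : ℤ) * r [ZMOD 2] := by
        apply Int.ModEq.mul_right
        rw [hk]
        exact (Int.modEq_iff_dvd.mpr ⟨k, by ring⟩)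
  · intro hod
    have : ((x : ℤ) ^ 2 - 1) = (y : ℤ) * r := by
      rw [hod.neg_one_pow] at hkey; linarith
    rw [this, Int.mul_ediv_cancel_left _ hyne]
    obtain ⟨k, hk⟩ := hxodd
    calc r = 1 * r := (one_mul r).symm
    _ ≡ (x : ℤ) * r [ZMOD 2] := by
        apply Int.ModEq.mul_right
        rw [hk]
        exact (Int.modEq_iff_dvd.mpr ⟨k, by ring⟩)
end

section
/- For a positive integer y set ỹ = y/2 if y is even and ỹ = y if y is odd. Let T⁰ be the set of positive non-square integers d for which there exist integers y ≥ 1, x with 0 ≤ x < y and gcd(x, y) = 1, and a > ỹ such that |(a·y + x)² − d·y²| = 1. Then there is a constant C such that Σ_{d ∈ T⁰} d^{−s} ≤ C for every real s > 1; in particular Σ_{d ∈ T⁰} 1/d converges, and ζ(s) − Σ_{d non-square, d ∉ T⁰} d^{−s} remains bounded as s → 1⁺. -/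
/-- `ỹ = y/2` if `y` is even, `ỹ = y` if `y` is odd. -/
def ytilde (y : ℕ) : ℕ := if Even y then y / 2 else y

/-- `T⁰`: positive non-square integers `d` admitting a Pell-type solution
`|(a y + x)² - d y²| = 1` with `0 ≤ x < y` coprime and `a > ỹ`. -/
def T0 : Set ℕ :=
  {d : ℕ | 0 < d ∧ ¬ IsSquare d ∧ ∃ y x a : ℕ, 1 ≤ y ∧ x < y ∧ Nat.Coprime x y ∧
    ytilde y < a ∧ |((a * y + x : ℕ) : ℤ) ^ 2 - (d : ℤ) * (y : ℤ) ^ 2| = 1}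

/-- `T¹`: positive non-square integers `d ≡ 1 (mod 4)` admitting a Pell-type solution
`|(2(a y + x) - y)² - d y²| = 4` with `0 ≤ x < y` coprime and `a > ỹ`. -/
def T1 : Set ℕ :=
  {d : ℕ | 0 < d ∧ ¬ IsSquare d ∧ d % 4 = 1 ∧ ∃ y x a : ℕ, 1 ≤ y ∧ x < y ∧ Nat.Coprime x y ∧
    ytilde y < a ∧ |(2 * ((a * y + x : ℕ) : ℤ) - (y : ℤ)) ^ 2 - (d : ℤ) * (y : ℤ) ^ 2| = 4}


open Finset

/-- Solutions of `x² ≡ e (mod y)` with `0 ≤ x < y`. -/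
def Xset (e : ℤ) (y : ℕ) : Finset ℕ :=
  (Finset.range y).filter (fun x => (y:ℤ) ∣ (x:ℤ)^2 - e)

lemma gcd3 (n a b : ℕ) (h : n ∣ a * b) :
    n ∣ Nat.gcd n a * Nat.gcd n b * Nat.gcd a b := by
  rcases eq_or_ne n 0 with rfl | hn
  · rcases Nat.mul_eq_zero.mp (Nat.eq_zero_of_zero_dvd h) with rfl | rfl
    · simp
    · simp [Nat.mul_assoc]
  rcases eq_or_ne a 0 with rfl | ha
  · simp only [Nat.gcd_zero_right, Nat.gcd_zero_left]
    exact Dvd.dvd.mul_right (Dvd.dvd.mul_right dvd_rfl _) _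
  rcases eq_or_ne b 0 with rfl | hb
  · simp only [Nat.gcd_zero_right]
    exact Dvd.dvd.mul_right (dvd_mul_left n _) _
  have hg1 : Nat.gcd n a ≠ 0 := fun h0 => hn (Nat.eq_zero_of_gcd_eq_zero_left h0)
  have hg2 : Nat.gcd n b ≠ 0 := fun h0 => hn (Nat.eq_zero_of_gcd_eq_zero_left h0)
  have hg3 : Nat.gcd a b ≠ 0 := fun h0 => ha (Nat.eq_zero_of_gcd_eq_zero_left h0)
  rw [← Nat.factorization_le_iff_dvd hn (by positivity)]
  rw [← Nat.factorization_le_iff_dvd hn (by positivity)] at h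
  rw [Nat.factorization_mul ha hb] at h
  rw [Nat.factorization_mul (by positivity) hg3, Nat.factorization_mul hg1 hg2,
    Nat.factorization_gcd hn ha, Nat.factorization_gcd hn hb, Nat.factorization_gcd ha hb]
  intro p
  have := h p
  simp only [Finsupp.add_apply, Finsupp.inf_apply] at *
  rcases le_total (n.factorization p) (a.factorization p) with h1 | h1 <;>
  rcases le_total (n.factorization p) (b.factorization p) with h2 | h2 <;>
  rcases le_total (a.factorization p) (b.factorization p) with h3 | h3 <;>
  simp [min_def, h1, h2, h3] <;> omega

lemma coprime_of_mem_X {e : ℤ} {y x : ℕ} (he : e = 1 ∨ e = -1)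
    (hx : x ∈ Xset e y) : Nat.Coprime x y := by
  simp only [Xset, mem_filter, mem_range] at hx
  obtain ⟨hxy, k, hk⟩ := hx
  have hdvd : (Nat.gcd x y : ℤ) ∣ e := by
    have h1 : (Nat.gcd x y : ℤ) ∣ (x:ℤ) := Int.natCast_dvd_natCast.mpr (Nat.gcd_dvd_left x y)
    have h2 : (Nat.gcd x y : ℤ) ∣ (y:ℤ) := Int.natCast_dvd_natCast.mpr (Nat.gcd_dvd_right x y)
    have heq : e = (x:ℤ)^2 - ((x:ℤ)^2 - e) := by ring
    rw [heq, hk]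
    exact dvd_sub (Dvd.dvd.pow h1 two_ne_zero) (Dvd.dvd.mul_right h2 k)
  have hone : (Nat.gcd x y : ℤ) ∣ 1 := by
    rcases he with rfl | rfl
    · exact hdvd
    · exact dvd_neg.mp hdvd
  exact Nat.dvd_one.mp (by exact_mod_cast hone)

lemma count_mod (y D r : ℕ) : ((Finset.range y).filter (fun x => x % D = r)).card ≤ y / D + 1 := by
  rcases eq_or_ne D 0 with rfl | hD
  · rw [Nat.div_zero]
    apply Finset.card_le_one.mpr ?_ |>.trans (by norm_num)
    intro a ha b hb
    simp only [mem_filter, mem_range, Nat.mod_zero] at ha hb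
    omega
  have := Finset.card_le_card_of_injOn (s := (Finset.range y).filter (fun x => x % D = r))
    (t := Finset.range (y / D + 1)) (fun x => x / D) ?_ ?_
  · simpa using this
  · intro x hx
    simp only [Finset.mem_coe, coe_filter, mem_filter, mem_range, Set.mem_setOf_eq] at hx
    have : x / D ≤ y / D := Nat.div_le_div_right (le_of_lt hx.1)
    simp only [Finset.mem_coe, mem_range]; omega
  · intro x hx x' hx' hxx'
    simp only [coe_filter, Set.mem_setOf_eq, mem_range] at hx hx'
    obtain ⟨-, hr⟩ := hx
    obtain ⟨-, hr'⟩ := hx'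
    simp only at hxx'
    have e1 := Nat.div_add_mod x D
    have e2 := Nat.div_add_mod x' D
    rw [hxx'] at e1
    omega

lemma mod_shift (m p : ℕ) (e : ℤ) (h : (m:ℤ) ∣ (p:ℤ)^2 - e) :
    (m:ℤ) ∣ ((p % m : ℕ):ℤ)^2 - e := by
  have hmod : (m:ℤ) * ((p / m : ℕ):ℤ) + ((p % m : ℕ):ℤ) = (p:ℤ) := by
    exact_mod_cast Nat.div_add_mod p m
  have h1 : (m:ℤ) ∣ (p:ℤ) - ((p % m : ℕ):ℤ) := ⟨((p / m : ℕ):ℤ), by linarith⟩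
  have heq : ((p % m : ℕ):ℤ)^2 - e =
      ((p:ℤ)^2 - e) - ((p:ℤ) - ((p % m : ℕ):ℤ)) * ((p:ℤ) + ((p % m : ℕ):ℤ)) := by ring
  rw [heq]
  exact dvd_sub h (h1.mul_right _)

lemma pair_lemma {y a b : ℕ} (ha : a < y) (hb : b < y) (hne : a ≠ b)
    (h : (y:ℤ) ∣ 2*((a:ℤ) - (b:ℤ))) : 2*a = 2*b + y ∨ 2*b = 2*a + y := by
  obtain ⟨k, hk⟩ := h
  have hy : (0:ℤ) < (y:ℤ) := by exact_mod_cast (show 0 < y by omega)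
  have hub : (y:ℤ)*k < (y:ℤ)*2 := by omega
  have hlb : (y:ℤ)*(-2) < (y:ℤ)*k := by omega
  have hk2 : k < 2 := lt_of_mul_lt_mul_left hub (le_of_lt hy)
  have hk3 : -2 < k := lt_of_mul_lt_mul_left hlb (le_of_lt hy)
  have hk0 : k ≠ 0 := by rintro rfl; omega
  interval_cases k <;> omega

lemma card_X1 {y : ℕ} (hy : 1 ≤ y) :
    (Xset 1 y).card ≤
      ∑ D ∈ y.divisors.filter (fun D => y ≤ 2*D^2), (2*(y/D) + 2) := by
  classical
  set filt := y.divisors.filter (fun D => y ≤ 2*D^2) with hfilt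
  set B : ℕ → Finset ℕ := fun D =>
    (Finset.range y).filter (fun x => x % D = 1 % D) ∪
    (Finset.range y).filter (fun x => x % D = (D-1) % D) with hB
  have hsub : Xset 1 y ⊆ filt.biUnion B := by
    intro x hx
    have hx' := hx
    simp only [Xset, mem_filter, mem_range] at hx'
    obtain ⟨hxy, hdvd⟩ := hx'
    rcases Nat.eq_zero_or_pos x with rfl | hx1
    · have hy1 : y = 1 := by
        have h0 := hdvd
        norm_num at h0
        exact Nat.dvd_one.mp (by exact_mod_cast h0)
      subst hy1
      refine Finset.mem_biUnion.mpr ⟨1, ?_, ?_⟩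
      · simp [hfilt, Nat.mem_divisors]
      · simp [hB]
    · -- x ≥ 1
      have hnat : y ∣ (x-1) * (x+1) := by
        have hc : (((x-1)*(x+1) : ℕ) : ℤ) = (x:ℤ)^2 - 1 := by
          push_cast [Nat.cast_sub hx1]
          ring
        exact Int.natCast_dvd_natCast.mp (hc ▸ hdvd)
      have h3 := gcd3 y (x-1) (x+1) hnat
      have hg3 : Nat.gcd (x-1) (x+1) ∣ 2 := by
        have := Nat.dvd_sub (Nat.gcd_dvd_right (x-1) (x+1)) (Nat.gcd_dvd_left (x-1) (x+1))
        simpa [Nat.succ_sub hx1, show x+1-(x-1) = 2 by omega] using this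
      have hyd : y ∣ 2 * (Nat.gcd y (x-1) * Nat.gcd y (x+1)) :=
        h3.trans (by
          have := Nat.mul_dvd_mul_left (Nat.gcd y (x-1) * Nat.gcd y (x+1)) hg3
          simpa [Nat.mul_comm] using this)
      set g1 := Nat.gcd y (x-1)
      set g2 := Nat.gcd y (x+1)
      have hg1pos : 0 < g1 := Nat.gcd_pos_of_pos_left _ hy
      have hg2pos : 0 < g2 := Nat.gcd_pos_of_pos_left _ hy
      have hle : y ≤ 2 * (g1 * g2) := Nat.le_of_dvd (by positivity) hyd
      set D := max g1 g2 with hD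
      have hDdvd : D ∣ y := by
        rcases max_cases g1 g2 with ⟨h, -⟩ | ⟨h, -⟩
        · rw [hD, h]; exact Nat.gcd_dvd_left _ _
        · rw [hD, h]; exact Nat.gcd_dvd_left _ _
      have hDsq : y ≤ 2 * D^2 := by
        have : g1 * g2 ≤ D^2 := by
          have h1 : g1 ≤ D := le_max_left _ _
          have h2 : g2 ≤ D := le_max_right _ _
          calc g1 * g2 ≤ D * D := Nat.mul_le_mul h1 h2
          _ = D^2 := (sq D).symm
        omega
      refine Finset.mem_biUnion.mpr ⟨D, ?_, ?_⟩
      · simp only [hfilt, mem_filter, Nat.mem_divisors]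
        exact ⟨⟨hDdvd, by omega⟩, hDsq⟩
      · rcases le_total g1 g2 with hcase | hcase
        · -- D = g2 divides x+1
          have hDx : D ∣ x + 1 := by
            rw [hD, max_eq_right hcase]; exact Nat.gcd_dvd_right _ _
          obtain ⟨k, hk⟩ := hDx
          have hDpos : 0 < D := lt_of_lt_of_le hg1pos (le_max_left _ _)
          rcases Nat.eq_zero_or_pos k with rfl | hkpos
          · omega
          have hDk : D*k = D*(k-1) + D := by
            have hk1 : k - 1 + 1 = k := by omega
            calc D*k = D*((k-1)+1) := by rw [hk1]
              _ = D*(k-1) + D := by ring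
          have hxeq : x = D*(k-1) + (D-1) := by omega
          apply Finset.mem_union_right
          simp only [mem_filter, mem_range]
          exact ⟨hxy, by rw [hxeq, Nat.mul_add_mod]⟩
        · -- D = g1 divides x-1
          have hDx : D ∣ x - 1 := by
            rw [hD, max_eq_left hcase]; exact Nat.gcd_dvd_right _ _
          obtain ⟨k, hk⟩ := hDx
          have hxeq : x = D*k + 1 := by omega
          apply Finset.mem_union_left
          simp only [mem_filter, mem_range]
          exact ⟨hxy, by rw [hxeq, Nat.mul_add_mod]⟩
  calc (Xset 1 y).card ≤ (filt.biUnion B).card := Finset.card_le_card hsub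
    _ ≤ ∑ D ∈ filt, (B D).card := Finset.card_biUnion_le
    _ ≤ ∑ D ∈ filt, (2*(y/D) + 2) := by
        apply Finset.sum_le_sum
        intro D hD
        calc (B D).card ≤ _ + _ := Finset.card_union_le _ _
          _ ≤ (y/D + 1) + (y/D + 1) := Nat.add_le_add (count_mod y D _) (count_mod y D _)
          _ = 2*(y/D) + 2 := by ring

lemma card_Xneg {y : ℕ} (hy : 1 ≤ y) : (Xset (-1) y).card ≤ (Xset 1 y).card := by
  rcases (Xset (-1) y).eq_empty_or_nonempty with h | ⟨x₀, hx₀⟩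
  · simp [h]
  apply Finset.card_le_card_of_injOn (fun x => (x * x₀) % y)
  · intro x hx
    have hxX := hx
    simp only [Finset.mem_coe, Xset, mem_filter, mem_range] at hxX ⊢
    obtain ⟨hxy, hdvd⟩ := hxX
    have hdvd0 : (y:ℤ) ∣ (x₀:ℤ)^2 - (-1) := by
      have := hx₀; simp only [Xset, mem_filter] at this; exact this.2
    constructor
    · exact Nat.mod_lt _ (by omega)
    · have hprod : (y:ℤ) ∣ ((x*x₀ : ℕ):ℤ)^2 - 1 := by
        have heq : ((x*x₀:ℕ):ℤ)^2 - 1 =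
            ((x:ℤ)^2 - (-1)) * (x₀:ℤ)^2 - ((x₀:ℤ)^2 - (-1)) := by push_cast; ring
        rw [heq]
        exact dvd_sub (hdvd.mul_right _) hdvd0
      exact mod_shift y (x*x₀) 1 hprod
  · intro x hx x' hx' hxx'
    simp only [Xset, coe_filter, Set.mem_setOf_eq, mem_range] at hx hx'
    have hcop : Nat.Coprime x₀ y := coprime_of_mem_X (Or.inr rfl) hx₀
    have hmod : x * x₀ ≡ x' * x₀ [MOD y] := hxx'
    have := (Nat.ModEq.cancel_right_of_coprime (by rwa [Nat.gcd_comm]) hmod)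
    have hx1 : x % y = x' % y := this
    rw [Nat.mod_eq_of_lt hx.1, Nat.mod_eq_of_lt hx'.1] at hx1
    exact hx1

lemma sq_cast_dvd {y : ℕ} {z : ℕ} {e : ℤ} (h : ((y^2 : ℕ):ℤ) ∣ (z:ℤ)^2 - e) :
    (y:ℤ) ∣ (z:ℤ)^2 - e := by
  refine dvd_trans ?_ h
  push_cast
  exact Dvd.intro_left _ (by ring)

lemma card_lift {y : ℕ} (hy : 1 ≤ y) (e : ℤ) (he : e = 1 ∨ e = -1) :
    (Xset e (y^2)).card ≤ 2 * (Xset e y).card := by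
  classical
  have himg : (Xset e (y^2)).image (· % y) ⊆ Xset e y := by
    intro w hw
    obtain ⟨z, hz, rfl⟩ := Finset.mem_image.mp hw
    simp only [Xset, mem_filter, mem_range] at hz ⊢
    exact ⟨Nat.mod_lt _ (by omega), mod_shift y z e (sq_cast_dvd hz.2)⟩
  have hfib : ∀ w ∈ (Xset e (y^2)).image (· % y),
      ((Xset e (y^2)).filter (fun z => z % y = w)).card ≤ 2 := by
    intro w hw
    have hwX : w ∈ Xset e y := himg hw
    have hcop : Nat.Coprime w y := coprime_of_mem_X he hwX
    by_contra hcon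
    push_neg at hcon
    obtain ⟨z₁, hz₁, z₂, hz₂, z₃, hz₃, h12, h13, h23⟩ := Finset.two_lt_card.mp hcon
    -- facts for each z
    have fact : ∀ z ∈ (Xset e (y^2)).filter (fun z => z % y = w),
        z / y < y ∧ z = y * (z / y) + w ∧ ((y:ℕ):ℤ)^2 ∣ (z:ℤ)^2 - e := by
      intro z hz
      simp only [Xset, mem_filter, mem_range] at hz
      obtain ⟨⟨hzlt, hzdvd⟩, hzw⟩ := hz
      refine ⟨?_, ?_, ?_⟩
      · have : z < y * y := by rw [← sq]; exact hzlt
        exact Nat.div_lt_of_lt_mul (by omega)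
      · conv_lhs => rw [← Nat.div_add_mod z y]
        rw [hzw]
      · have : ((y^2:ℕ):ℤ) = ((y:ℕ):ℤ)^2 := by push_cast; ring
        rwa [this] at hzdvd
    have key : ∀ z z', z ∈ (Xset e (y^2)).filter (fun z => z % y = w) →
        z' ∈ (Xset e (y^2)).filter (fun z => z % y = w) → z ≠ z' →
        2*(z/y) = 2*(z'/y) + y ∨ 2*(z'/y) = 2*(z/y) + y := by
      intro z z' hz hz' hne
      obtain ⟨ht, hrep, hd⟩ := fact z hz
      obtain ⟨ht', hrep', hd'⟩ := fact z' hz'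
      set t := z / y
      set t' := z' / y
      have htne : t ≠ t' := by
        intro h; apply hne; rw [hrep, hrep', h]
      -- y² ∣ z² - z'²
      have hdd : ((y:ℕ):ℤ)^2 ∣ (z:ℤ)^2 - (z':ℤ)^2 := by
        have : (z:ℤ)^2 - (z':ℤ)^2 = ((z:ℤ)^2 - e) - ((z':ℤ)^2 - e) := by ring
        rw [this]; exact dvd_sub hd hd'
      have hzz : (z:ℤ) = y * t + w := by exact_mod_cast hrep
      have hzz' : (z':ℤ) = y * t' + w := by exact_mod_cast hrep'
      have hdd2 : ((y:ℕ):ℤ)^2 ∣ (y:ℤ) * (2 * w * ((t:ℤ) - (t':ℤ))) := by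
        have heq : (y:ℤ) * (2 * w * ((t:ℤ) - (t':ℤ))) =
            ((z:ℤ)^2 - (z':ℤ)^2) - (y:ℤ)^2 * ((t:ℤ)^2 - (t':ℤ)^2) := by
          rw [hzz, hzz']; ring
        rw [heq]
        exact dvd_sub hdd (Dvd.intro _ rfl)
      have hdvd1 : (y:ℤ) ∣ 2 * w * ((t:ℤ) - (t':ℤ)) := by
        have hy0 : (y:ℤ) ≠ 0 := by exact_mod_cast (by omega : y ≠ 0)
        have : (y:ℤ) * (y:ℤ) ∣ (y:ℤ) * (2 * w * ((t:ℤ) - (t':ℤ))) := by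
          rw [← sq]; exact hdd2
        exact (mul_dvd_mul_iff_left hy0).mp this
      have hdvd2 : (y:ℤ) ∣ 2 * ((t:ℤ) - (t':ℤ)) := by
        have hco : IsCoprime (y:ℤ) (w:ℤ) := by
          rw [Int.isCoprime_iff_gcd_eq_one]
          exact_mod_cast hcop.symm
        refine hco.dvd_of_dvd_mul_right ?_
        have : 2 * ((t:ℤ) - (t':ℤ)) * w = 2 * w * ((t:ℤ) - (t':ℤ)) := by ring
        rw [this]; exact hdvd1
      exact pair_lemma ht ht' htne hdvd2
    have k12 := key z₁ z₂ hz₁ hz₂ h12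
    have k13 := key z₁ z₃ hz₁ hz₃ h13
    have k23 := key z₂ z₃ hz₂ hz₃ h23
    omega
  calc (Xset e (y^2)).card
      ≤ 2 * ((Xset e (y^2)).image (· % y)).card :=
        Finset.card_le_mul_card_image _ 2 hfib
    _ ≤ 2 * (Xset e y).card := by
        exact Nat.mul_le_mul_left 2 (Finset.card_le_card himg)

open scoped ENNReal NNReal

noncomputable section

lemma natCast_div_le_div {a b c d : ℕ} (hb : b ≠ 0) (hd : d ≠ 0) (h : a * d ≤ c * b) :
    (a : ℝ≥0∞) / b ≤ (c : ℝ≥0∞) / d := by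
  rw [ENNReal.div_le_iff (by exact_mod_cast hb) (ENNReal.natCast_ne_top b)]
  have h1 : ((c:ℝ≥0∞) / d) * b = ((c:ℝ≥0∞) * b) / d := by
    rw [div_eq_mul_inv, div_eq_mul_inv]; ring
  rw [h1, ENNReal.le_div_iff_mul_le (Or.inl (by exact_mod_cast hd))
    (Or.inl (ENNReal.natCast_ne_top d))]
  exact_mod_cast h

/-- `Σ 1/(j+1)²`. -/
def c2 : ℝ≥0∞ := ∑' j : ℕ, (((j:ℝ≥0∞)+1)^2)⁻¹

lemma c2_ne_top : c2 ≠ ⊤ := by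
  have hterm : ∀ j : ℕ, (((j:ℝ≥0∞)+1)^2)⁻¹ =
      ((((((j:ℝ≥0)+1)^2)⁻¹ : ℝ≥0)) : ℝ≥0∞) := by
    intro j
    rw [ENNReal.coe_inv (by positivity), ENNReal.coe_pow]
    push_cast
    rfl
  rw [c2, tsum_congr hterm]
  rw [ENNReal.tsum_coe_ne_top_iff_summable]
  rw [← NNReal.summable_coe]
  have : Summable (fun j : ℕ => (((j:ℝ)+1)^2)⁻¹) := by
    have h1 : Summable (fun n : ℕ => (((n:ℝ))^2)⁻¹) :=
      Real.summable_nat_pow_inv.mpr one_lt_two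
    have h2 := (summable_nat_add_iff 1).mpr h1
    apply h2.congr
    intro n
    push_cast
    ring_nf
  apply this.congr
  intro j
  push_cast
  ring_nf

/-- summand `1/(n√n)` for `n ≥ 1`. -/
def Aent (n : ℕ) : ℝ≥0∞ :=
  if 1 ≤ n then (ENNReal.ofReal ((n:ℝ) * Real.sqrt n))⁻¹ else 0

/-- `Σ_{n≥1} n^{-3/2}`. -/
def sig32 : ℝ≥0∞ := ∑' n : ℕ, Aent n

lemma sig32_ne_top : sig32 ≠ ⊤ := by
  have hterm : ∀ n : ℕ, Aent n = ((Real.toNNReal (((n:ℝ) * Real.sqrt n)⁻¹)) : ℝ≥0∞) := by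
    intro n
    rcases Nat.eq_zero_or_pos n with rfl | hn
    · simp [Aent]
    · have hpos : (0:ℝ) < (n:ℝ) * Real.sqrt n := by
        have : (0:ℝ) < (n:ℝ) := by exact_mod_cast hn
        positivity
      rw [Aent, if_pos (show 1 ≤ n from hn), ← ENNReal.ofReal_inv_of_pos hpos]
      rfl
  rw [sig32, tsum_congr hterm, ENNReal.tsum_coe_ne_top_iff_summable, ← NNReal.summable_coe]
  have hmaj : Summable (fun n : ℕ => ((n:ℝ) ^ ((3:ℝ)/2))⁻¹) :=
    Real.summable_nat_rpow_inv.mpr (by norm_num)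
  apply Summable.of_nonneg_of_le (fun n => NNReal.coe_nonneg _) _ hmaj
  intro n
  rcases Nat.eq_zero_or_pos n with rfl | hn
  · simp
  have hpos : (0:ℝ) < (n:ℝ) := by exact_mod_cast hn
  have heq : (n:ℝ) ^ ((3:ℝ)/2) = (n:ℝ) * Real.sqrt n := by
    rw [show (3:ℝ)/2 = 1 + 1/2 by norm_num, Real.rpow_add hpos, Real.rpow_one,
      ← Real.sqrt_eq_rpow]
  rw [heq, Real.coe_toNNReal _ (by positivity)]

/-- Comparison weight on divisor pairs. -/
def F2 (w : ℕ × ℕ) : ℝ≥0∞ := Aent w.1 * Aent w.2 * 8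

lemma tsum_F2_ne_top : (∑' w : ℕ × ℕ, F2 w) ≠ ⊤ := by
  have : (∑' w : ℕ × ℕ, F2 w) = sig32 * sig32 * 8 := by
    rw [show (fun w : ℕ × ℕ => F2 w) = fun w : ℕ × ℕ => Aent w.1 * Aent w.2 * 8 from rfl]
    rw [ENNReal.tsum_prod (f := fun a b => Aent a * Aent b * 8)]
    have h1 : ∀ a : ℕ, ∑' b : ℕ, Aent a * Aent b * 8 = Aent a * (sig32 * 8) := by
      intro a
      calc ∑' b : ℕ, Aent a * Aent b * 8 = ∑' b : ℕ, Aent a * (Aent b * 8) := by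
            congr 1; funext b; ring
        _ = Aent a * ∑' b : ℕ, Aent b * 8 := ENNReal.tsum_mul_left
        _ = Aent a * (sig32 * 8) := by rw [ENNReal.tsum_mul_right]; rfl
    rw [tsum_congr h1, ENNReal.tsum_mul_right, sig32]
    ring
  rw [this]
  exact ENNReal.mul_ne_top (ENNReal.mul_ne_top sig32_ne_top sig32_ne_top) (by simp)

lemma tsum_antidiag_le (F : ℕ × ℕ → ℝ≥0∞) :
    ∑' y : ℕ, ∑ w ∈ y.divisorsAntidiagonal, F w ≤ ∑' w : ℕ × ℕ, F w := by
  have h1 : ∀ y : ℕ, ∑ w ∈ y.divisorsAntidiagonal, F w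
      = ∑' w : {w : ℕ × ℕ // w ∈ y.divisorsAntidiagonal}, F w.val :=
    fun y => (Finset.tsum_subtype' _ F).symm
  have hinj : Function.Injective
      (fun z : (Σ y : ℕ, {w : ℕ × ℕ // w ∈ y.divisorsAntidiagonal}) => z.2.val) := by
    rintro ⟨y₁, ⟨w₁, h₁⟩⟩ ⟨y₂, ⟨w₂, h₂⟩⟩ h
    simp only at h
    subst h
    rw [Nat.mem_divisorsAntidiagonal] at h₁ h₂
    obtain ⟨e₁, -⟩ := h₁
    obtain ⟨e₂, -⟩ := h₂
    have : y₁ = y₂ := by omega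
    subst this
    rfl
  have h2 : ∑' z : (Σ y : ℕ, {w : ℕ × ℕ // w ∈ y.divisorsAntidiagonal}), F z.2.val
      = ∑' (y : ℕ) (w : {w : ℕ × ℕ // w ∈ y.divisorsAntidiagonal}), F w.val :=
    ENNReal.tsum_sigma (fun (y:ℕ) (w : {w : ℕ × ℕ // w ∈ y.divisorsAntidiagonal}) => F w.val)
  rw [tsum_congr h1, ← h2]
  exact ENNReal.tsum_comp_le_tsum_of_injective hinj F

end

noncomputable section
open scoped ENNReal NNReal

lemma term_le {y D : ℕ} (hy : 1 ≤ y) (hD : D ∣ y) (hsq : y ≤ 2*D^2) :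
    (((2*(y/D) + 2 : ℕ)) : ℝ≥0∞) * (((y:ℝ≥0∞))^2)⁻¹ ≤ F2 (D, y/D) := by
  have hDpos : 0 < D := Nat.pos_of_dvd_of_pos hD (by omega)
  obtain ⟨m, hym⟩ := hD
  have hydm : y / D = m := by rw [hym, Nat.mul_div_cancel_left _ hDpos]
  rw [hydm]
  have hmpos : 0 < m := by
    rcases Nat.eq_zero_or_pos m with rfl | h
    · omega
    · exact h
  have hyr : (0:ℝ) < (y:ℝ) := by exact_mod_cast (by omega : 0 < y)
  have hDr : (0:ℝ) < (D:ℝ) := by exact_mod_cast hDpos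
  have hmr : (1:ℝ) ≤ (m:ℝ) := by exact_mod_cast hmpos
  have hcast : (D:ℝ) * (m:ℝ) = (y:ℝ) := by exact_mod_cast hym.symm
  have hsy : Real.sqrt (y:ℝ) ≤ 2*(D:ℝ) := by
    have h1 : (y:ℝ) ≤ (2*(D:ℝ))^2 := by
      have : (y:ℝ) ≤ 2*(D:ℝ)^2 := by exact_mod_cast hsq
      nlinarith
    calc Real.sqrt (y:ℝ) ≤ Real.sqrt ((2*(D:ℝ))^2) := Real.sqrt_le_sqrt h1
      _ = 2*(D:ℝ) := Real.sqrt_sq (by positivity)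
  have hsnn : (0:ℝ) ≤ Real.sqrt y := Real.sqrt_nonneg _
  have hspos : (0:ℝ) < Real.sqrt y := Real.sqrt_pos.mpr hyr
  have hDs : (0:ℝ) < (D:ℝ) * Real.sqrt D := by positivity
  have hms : (0:ℝ) < (m:ℝ) * Real.sqrt m := by
    have : (0:ℝ) < (m:ℝ) := by linarith
    positivity
  have hreal : ((2*m + 2 : ℕ) : ℝ) * (((y:ℝ))^2)⁻¹ ≤
      (((D:ℝ) * Real.sqrt D)⁻¹ * ((m:ℝ) * Real.sqrt m)⁻¹) * 8 := by
    have hab : ((D:ℝ) * Real.sqrt D) * ((m:ℝ) * Real.sqrt m) = (y:ℝ) * Real.sqrt y := by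
      rw [← hcast, Real.sqrt_mul (by positivity)]
      ring
    have hrhs : (((D:ℝ) * Real.sqrt D)⁻¹ * ((m:ℝ) * Real.sqrt m)⁻¹) * 8
        = 8 / ((y:ℝ) * Real.sqrt y) := by
      rw [← mul_inv, hab]; ring
    have hlhs : ((2*m + 2 : ℕ) : ℝ) * (((y:ℝ))^2)⁻¹
        = ((2*(m:ℝ) + 2)) / ((y:ℝ)^2) := by push_cast; ring
    rw [hrhs, hlhs, div_le_div_iff₀ (by positivity) (by positivity)]
    have key2 : (2*(m:ℝ)+2) * ((y:ℝ) * Real.sqrt y) ≤ (4*(m:ℝ)) * ((y:ℝ) * (2*(D:ℝ))) := by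
      apply mul_le_mul (by linarith) (mul_le_mul_of_nonneg_left hsy (le_of_lt hyr))
        (by positivity) (by positivity)
    calc (2*(m:ℝ)+2) * ((y:ℝ) * Real.sqrt y) ≤ (4*(m:ℝ)) * ((y:ℝ) * (2*(D:ℝ))) := key2
      _ = 8 * ((D:ℝ) * (m:ℝ)) * (y:ℝ) := by ring
      _ = 8 * (y:ℝ)^2 := by rw [hcast]; ring
  have hpow : ((y:ℝ≥0∞))^2 = ENNReal.ofReal ((y:ℝ)^2) := by
    rw [← ENNReal.ofReal_natCast y, ← ENNReal.ofReal_pow (by positivity)]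
  have hLHS : (((2*m + 2 : ℕ)) : ℝ≥0∞) * (((y:ℝ≥0∞))^2)⁻¹ =
      ENNReal.ofReal (((2*m + 2 : ℕ) : ℝ) * (((y:ℝ))^2)⁻¹) := by
    rw [hpow, ← ENNReal.ofReal_inv_of_pos (by positivity),
      ← ENNReal.ofReal_natCast (2*m+2), ← ENNReal.ofReal_mul (by positivity)]
  have hRHS : F2 (D, m) =
      ENNReal.ofReal ((((D:ℝ) * Real.sqrt D)⁻¹ * ((m:ℝ) * Real.sqrt m)⁻¹) * 8) := by
    simp only [F2, Aent]
    rw [if_pos (show 1 ≤ D from hDpos), if_pos (show 1 ≤ m from hmpos)]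
    conv_rhs => rw [ENNReal.ofReal_mul (by positivity), ENNReal.ofReal_mul (by positivity),
      ENNReal.ofReal_inv_of_pos hDs, ENNReal.ofReal_inv_of_pos hms]
    norm_num
  rw [hLHS, hRHS]
  exact ENNReal.ofReal_le_ofReal hreal

lemma divisor_sum_le {y : ℕ} (hy : 1 ≤ y) :
    ((∑ D ∈ y.divisors.filter (fun D => y ≤ 2*D^2), (2*(y/D) + 2) : ℕ) : ℝ≥0∞)
      * (((y:ℝ≥0∞))^2)⁻¹ ≤ ∑ w ∈ y.divisorsAntidiagonal, F2 w := by
  classical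
  rw [Nat.cast_sum, Finset.sum_mul]
  calc ∑ D ∈ y.divisors.filter (fun D => y ≤ 2*D^2),
        (((2*(y/D) + 2 : ℕ)) : ℝ≥0∞) * (((y:ℝ≥0∞))^2)⁻¹
      ≤ ∑ D ∈ y.divisors.filter (fun D => y ≤ 2*D^2), F2 (D, y/D) := by
        apply Finset.sum_le_sum
        intro D hD
        simp only [Finset.mem_filter, Nat.mem_divisors] at hD
        exact term_le hy hD.1.1 hD.2
    _ = ∑ w ∈ (y.divisors.filter (fun D => y ≤ 2*D^2)).image (fun D => (D, y/D)), F2 w := by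
        rw [Finset.sum_image]
        intro a _ b _ h
        exact (Prod.mk.injEq _ _ _ _).mp h |>.1
    _ ≤ ∑ w ∈ y.divisorsAntidiagonal, F2 w := by
        apply Finset.sum_le_sum_of_subset
        intro w hw
        obtain ⟨D, hD, rfl⟩ := Finset.mem_image.mp hw
        simp only [Finset.mem_filter, Nat.mem_divisors] at hD
        rw [Nat.mem_divisorsAntidiagonal]
        exact ⟨Nat.mul_div_cancel' hD.1.1, by omega⟩

end


def sg (b : Bool) : ℤ := if b then 1 else -1

lemma sg_pm (b : Bool) : sg b = 1 ∨ sg b = -1 := by cases b <;> simp [sg]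

lemma T0_witness {d : ℕ} (hd : d ∈ T0) :
    ∃ w : ℕ × ℕ × Bool, 1 ≤ w.1 ∧ w.1^2 < 2*w.2.1 ∧ 2 ≤ w.2.1 ∧
      (w.2.1:ℤ)^2 - (d:ℤ)*(w.1:ℤ)^2 = sg w.2.2 := by
  obtain ⟨hdpos, hnsq, y, x, a, hy, hxy, hcop, hya, habs⟩ := hd
  have hyt : 1 ≤ ytilde y := by
    unfold ytilde
    split
    · rename_i hev
      obtain ⟨k, hk⟩ := hev
      omega
    · omega
  have ha2 : 2 ≤ a := by omega
  have hp2 : 2 ≤ a*y + x :=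
    le_trans (by simpa using Nat.mul_le_mul ha2 hy) (Nat.le_add_right _ _)
  have hylt : y^2 < 2*(a*y + x) := by
    have h1 : y^2 ≤ 2 * ytilde y * y + y := by
      unfold ytilde
      split
      · rename_i hev
        obtain ⟨k, hk⟩ := hev
        subst hk
        have hdiv : (k+k)/2 = k := by omega
        rw [hdiv]
        nlinarith
      · nlinarith
    have h2 : (ytilde y + 1) * y ≤ a * y := Nat.mul_le_mul_right y (by omega)
    nlinarith
  rcases (abs_eq (by norm_num : (0:ℤ) ≤ 1)).mp habs with hcase | hcase
  · exact ⟨(y, a*y+x, true), hy, hylt, hp2, by simpa [sg] using hcase⟩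
  · exact ⟨(y, a*y+x, false), hy, hylt, hp2, by simpa [sg] using hcase⟩

noncomputable section
open scoped ENNReal
open Classical in
/-- comparison function on witnesses -/
def G (y p : ℕ) (b : Bool) : ℝ≥0∞ :=
  if (1 ≤ y ∧ y^2 < 2*p ∧ ((y^2:ℕ):ℤ) ∣ (p:ℤ)^2 - sg b) then
    ((2*y^2 : ℕ) : ℝ≥0∞) / ((p^2 : ℕ) : ℝ≥0∞) else 0

lemma step2 (y : ℕ) (hy : 1 ≤ y) (b : Bool) :
    ∑' p : ℕ, G y p b ≤
      ((Xset (sg b) (y^2)).card : ℝ≥0∞) * (8 * (((y:ℝ≥0∞))^2)⁻¹ * c2) := by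
  classical
  set S : Set ℕ := {p | 1 ≤ y ∧ y^2 < 2*p ∧ ((y^2:ℕ):ℤ) ∣ (p:ℤ)^2 - sg b} with hS
  have hy2 : 0 < y^2 := by positivity
  have hGind : ∀ p, G y p b =
      S.indicator (fun p => ((2*y^2 : ℕ) : ℝ≥0∞) / ((p^2 : ℕ) : ℝ≥0∞)) p := by
    intro p
    rw [G, Set.indicator_apply]
    congr 1
  have hmod : ∀ p : S, (p:ℕ) % y^2 ∈ Xset (sg b) (y^2) := by
    intro ⟨p, hp⟩
    obtain ⟨-, -, hdvd⟩ := hp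
    simp only [Xset, Finset.mem_filter, Finset.mem_range]
    exact ⟨Nat.mod_lt _ hy2, mod_shift (y^2) p (sg b) hdvd⟩
  set Fz : {z // z ∈ Xset (sg b) (y^2)} × ℕ → ℝ≥0∞ :=
    fun w => 8 * (((y:ℝ≥0∞))^2)⁻¹ * ((((w.2:ℝ≥0∞))+1)^2)⁻¹ with hFz
  set Ψ : S → {z // z ∈ Xset (sg b) (y^2)} × ℕ :=
    fun p => (⟨(p:ℕ) % y^2, hmod p⟩, (p:ℕ) / y^2) with hΨ
  have hinj : Function.Injective Ψ := by
    intro p q h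
    rw [hΨ] at h
    simp only [Prod.mk.injEq, Subtype.mk.injEq] at h
    obtain ⟨h1, h2⟩ := h
    apply Subtype.ext
    have e1 := Nat.div_add_mod (p:ℕ) (y^2)
    have e2 := Nat.div_add_mod (q:ℕ) (y^2)
    rw [h1, h2] at e1
    omega
  have hle : ∀ p : S, ((2*y^2 : ℕ) : ℝ≥0∞) / (((p:ℕ)^2 : ℕ) : ℝ≥0∞) ≤ Fz (Ψ p) := by
    intro p
    obtain ⟨-, hlt, -⟩ := p.2
    set j := (p:ℕ) / y^2 with hj
    have hppos : 0 < (p:ℕ) := by nlinarith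
    have hkey : (j+1)*y^2 ≤ 2*(p:ℕ) := by
      have h1 : j*y^2 ≤ (p:ℕ) := by
        rw [hj]; exact Nat.div_mul_le_self _ _
      have hexp : (j+1)*y^2 = j*y^2 + y^2 := by ring
      rcases Nat.eq_zero_or_pos j with hj0 | hjpos
      · rw [hexp, hj0]; omega
      · have h2 : y^2 ≤ j*y^2 := Nat.le_mul_of_pos_left _ hjpos
        omega
    have hnat : (2*y^2) * (y^2*(j+1)^2) ≤ 8 * (p:ℕ)^2 := by
      have h1 : ((j+1)*y^2)^2 ≤ (2*(p:ℕ))^2 := Nat.pow_le_pow_left hkey 2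
      have e1 : (2*y^2) * (y^2*(j+1)^2) = 2*(((j+1)*y^2)^2) := by ring
      have e2 : 8 * (p:ℕ)^2 = 2*((2*(p:ℕ))^2) := by ring
      rw [e1, e2]
      exact Nat.mul_le_mul_left 2 h1
    have hrw : Fz (Ψ p) = ((8:ℕ) : ℝ≥0∞) / (((y^2*(j+1)^2 : ℕ)) : ℝ≥0∞) := by
      have hane : ((y:ℝ≥0∞))^2 ≠ ⊤ := ENNReal.pow_ne_top (ENNReal.natCast_ne_top y)
      have hbne : (((j:ℝ≥0∞))+1)^2 ≠ ⊤ :=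
        ENNReal.pow_ne_top (ENNReal.add_ne_top.mpr ⟨ENNReal.natCast_ne_top j, ENNReal.one_ne_top⟩)
      rw [hFz]
      simp only
      rw [div_eq_mul_inv]
      push_cast
      rw [ENNReal.mul_inv (Or.inr hbne) (Or.inl hane)]
      ring
    rw [hrw]
    exact natCast_div_le_div (by positivity) (by positivity) hnat
  calc ∑' p : ℕ, G y p b
      = ∑' p : S, ((2*y^2 : ℕ) : ℝ≥0∞) / (((p:ℕ)^2 : ℕ) : ℝ≥0∞) := by
        rw [tsum_congr hGind]
        exact (_root_.tsum_subtype S _).symm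
    _ ≤ ∑' p : S, Fz (Ψ p) := ENNReal.tsum_le_tsum hle
    _ ≤ ∑' w : {z // z ∈ Xset (sg b) (y^2)} × ℕ, Fz w :=
        ENNReal.tsum_comp_le_tsum_of_injective hinj Fz
    _ = ∑' z : {z // z ∈ Xset (sg b) (y^2)}, ∑' jj : ℕ,
          (8 * (((y:ℝ≥0∞))^2)⁻¹) * ((((jj:ℝ≥0∞))+1)^2)⁻¹ := by
        rw [ENNReal.tsum_prod (f := fun (z : {z // z ∈ Xset (sg b) (y^2)}) (jj : ℕ) =>
          (8 * (((y:ℝ≥0∞))^2)⁻¹) * ((((jj:ℝ≥0∞))+1)^2)⁻¹)]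
    _ = ∑' z : {z // z ∈ Xset (sg b) (y^2)}, 8 * (((y:ℝ≥0∞))^2)⁻¹ * c2 := by
        apply tsum_congr
        intro z
        rw [ENNReal.tsum_mul_left]
        rfl
    _ = ((Xset (sg b) (y^2)).card : ℝ≥0∞) * (8 * (((y:ℝ≥0∞))^2)⁻¹ * c2) := by
        rw [Finset.tsum_subtype (Xset (sg b) (y^2)) (fun _ => 8 * (((y:ℝ≥0∞))^2)⁻¹ * c2),
          Finset.sum_const, nsmul_eq_mul]

lemma step1 :
    (∑' d : T0, (((d:ℕ):ℝ≥0∞))⁻¹) ≤ ∑' w : ℕ × ℕ × Bool, G w.1 w.2.1 w.2.2 := by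
  have hwit := fun (d : T0) => T0_witness d.2
  choose Φ hy' hlt' hp2' he' using hwit
  have hinj : Function.Injective Φ := by
    intro d₁ d₂ h
    have hy1 := hy' d₁
    have he1 := he' d₁
    have hy2 := hy' d₂
    have he2 := he' d₂
    rw [h] at he1 hy1
    apply Subtype.ext
    have hyne : (((Φ d₂).1 : ℤ))^2 ≠ 0 :=
      pow_ne_zero 2 (Int.natCast_ne_zero.mpr (by omega))
    have heq : (((d₁:ℕ)):ℤ) * ((Φ d₂).1:ℤ)^2 = (((d₂:ℕ)):ℤ) * ((Φ d₂).1:ℤ)^2 := by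
      linarith [he1, he2]
    have := mul_right_cancel₀ hyne heq
    exact_mod_cast this
  have hpt : ∀ d : T0, (((d:ℕ):ℝ≥0∞))⁻¹ ≤ G (Φ d).1 (Φ d).2.1 (Φ d).2.2 := by
    intro d
    have hy := hy' d
    have hlt := hlt' d
    have hp2 := hp2' d
    have he := he' d
    have hdpos : 0 < (d:ℕ) := d.2.1
    have hdvd : (((Φ d).1^2:ℕ):ℤ) ∣ ((Φ d).2.1:ℤ)^2 - sg (Φ d).2.2 :=
      ⟨((d:ℕ):ℤ), by push_cast; linarith [he]⟩
    rw [G, if_pos ⟨hy, hlt, hdvd⟩]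
    have hint : ((Φ d).2.1:ℤ)^2 ≤ 2*((Φ d).1:ℤ)^2*(((d:ℕ)):ℤ) := by
      have h1 : (1:ℤ) ≤ (((d:ℕ)):ℤ) := by exact_mod_cast hdpos
      have h2 : (1:ℤ) ≤ ((Φ d).1:ℤ) := by exact_mod_cast hy
      have h3 : (1:ℤ) ≤ ((Φ d).1:ℤ)^2 := by nlinarith
      have h4 : (1:ℤ) ≤ (((d:ℕ)):ℤ)*((Φ d).1:ℤ)^2 := by nlinarith
      rcases sg_pm (Φ d).2.2 with hb | hb <;> rw [hb] at he <;> nlinarith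
    have hnat : 1 * (Φ d).2.1^2 ≤ (2*(Φ d).1^2) * (d:ℕ) := by
      have : ((Φ d).2.1:ℕ)^2 ≤ 2*(Φ d).1^2*(d:ℕ) := by exact_mod_cast hint
      linarith
    calc (((d:ℕ):ℝ≥0∞))⁻¹ = ((1:ℕ):ℝ≥0∞) / (((d:ℕ)):ℝ≥0∞) := by
          rw [Nat.cast_one, one_div]
      _ ≤ ((2*(Φ d).1^2 : ℕ):ℝ≥0∞) / (((Φ d).2.1^2 : ℕ):ℝ≥0∞) :=
          natCast_div_le_div (by omega) (pow_ne_zero 2 (by omega)) hnat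
  calc ∑' d : T0, (((d:ℕ):ℝ≥0∞))⁻¹
      ≤ ∑' d : T0, G (Φ d).1 (Φ d).2.1 (Φ d).2.2 := ENNReal.tsum_le_tsum hpt
    _ ≤ ∑' w : ℕ × ℕ × Bool, G w.1 w.2.1 w.2.2 :=
        ENNReal.tsum_comp_le_tsum_of_injective hinj (fun w => G w.1 w.2.1 w.2.2)

lemma per_y (y : ℕ) :
    ∑' q : ℕ × Bool, G y q.1 q.2 ≤ 32 * c2 * ∑ w ∈ y.divisorsAntidiagonal, F2 w := by
  rcases Nat.eq_zero_or_pos y with rfl | hy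
  · have hz : ∀ q : ℕ × Bool, G 0 q.1 q.2 = 0 := by
      intro q
      rw [G, if_neg]
      rintro ⟨h, -⟩
      omega
    rw [tsum_congr hz]
    simp
  set Tn : ℕ := ∑ D ∈ y.divisors.filter (fun D => y ≤ 2*D^2), (2*(y/D) + 2) with hTn
  have hcard : ∀ b : Bool, (Xset (sg b) (y^2)).card ≤ 2 * Tn := by
    intro b
    have h1 : (Xset (sg b) (y^2)).card ≤ 2 * (Xset (sg b) y).card :=
      card_lift hy (sg b) (sg_pm b)
    have h2 : (Xset (sg b) y).card ≤ (Xset 1 y).card := by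
      cases b
      · exact card_Xneg hy
      · simp [sg]
    have h3 : (Xset 1 y).card ≤ Tn := card_X1 hy
    omega
  have h2 : ∀ b : Bool, ∑' p : ℕ, G y p b ≤
      ((Tn:ℕ):ℝ≥0∞) * (16 * (((y:ℝ≥0∞))^2)⁻¹ * c2) := by
    intro b
    calc ∑' p : ℕ, G y p b
        ≤ ((Xset (sg b) (y^2)).card : ℝ≥0∞) * (8 * (((y:ℝ≥0∞))^2)⁻¹ * c2) := step2 y hy b
      _ ≤ ((2*Tn : ℕ) : ℝ≥0∞) * (8 * (((y:ℝ≥0∞))^2)⁻¹ * c2) := by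
          apply mul_le_mul_left
          exact_mod_cast hcard b
      _ = ((Tn:ℕ):ℝ≥0∞) * (16 * (((y:ℝ≥0∞))^2)⁻¹ * c2) := by
          push_cast
          ring
  calc ∑' q : ℕ × Bool, G y q.1 q.2
      = ∑' p : ℕ, ∑' b : Bool, G y p b := ENNReal.tsum_prod (f := fun p b => G y p b)
    _ = ∑' b : Bool, ∑' p : ℕ, G y p b := ENNReal.tsum_comm
    _ = (∑' p : ℕ, G y p false) + (∑' p : ℕ, G y p true) := tsum_bool _
    _ ≤ ((Tn:ℕ):ℝ≥0∞) * (16 * (((y:ℝ≥0∞))^2)⁻¹ * c2)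
        + ((Tn:ℕ):ℝ≥0∞) * (16 * (((y:ℝ≥0∞))^2)⁻¹ * c2) := add_le_add (h2 false) (h2 true)
    _ = 32 * c2 * (((Tn:ℕ):ℝ≥0∞) * (((y:ℝ≥0∞))^2)⁻¹) := by ring
    _ ≤ 32 * c2 * ∑ w ∈ y.divisorsAntidiagonal, F2 w := by
        apply mul_le_mul_right
        exact divisor_sum_le hy

theorem key : (∑' d : T0, (((d:ℕ):ℝ≥0∞))⁻¹) ≠ ⊤ := by
  have hchain : (∑' d : T0, (((d:ℕ):ℝ≥0∞))⁻¹) ≤ 32 * c2 * ∑' w : ℕ × ℕ, F2 w := by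
    calc (∑' d : T0, (((d:ℕ):ℝ≥0∞))⁻¹)
        ≤ ∑' w : ℕ × ℕ × Bool, G w.1 w.2.1 w.2.2 := step1
      _ = ∑' y : ℕ, ∑' q : ℕ × Bool, G y q.1 q.2 :=
          ENNReal.tsum_prod (f := fun y (q : ℕ × Bool) => G y q.1 q.2)
      _ ≤ ∑' y : ℕ, 32 * c2 * ∑ w ∈ y.divisorsAntidiagonal, F2 w :=
          ENNReal.tsum_le_tsum per_y
      _ = 32 * c2 * ∑' y : ℕ, ∑ w ∈ y.divisorsAntidiagonal, F2 w := ENNReal.tsum_mul_left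
      _ ≤ 32 * c2 * ∑' w : ℕ × ℕ, F2 w := mul_le_mul_right (tsum_antidiag_le F2) _
  intro htop
  rw [htop] at hchain
  have : (32 : ℝ≥0∞) * c2 * ∑' w : ℕ × ℕ, F2 w ≠ ⊤ :=
    ENNReal.mul_ne_top (ENNReal.mul_ne_top (by simp) c2_ne_top) tsum_F2_ne_top
  exact this (top_le_iff.mp hchain)

end

noncomputable section
open scoped ENNReal NNReal Classical

lemma summable_T0 : Summable (fun d : T0 => 1 / ((d:ℕ):ℝ)) := by
  have hne := key
  have hterm : ∀ d : T0, (((d:ℕ):ℝ≥0∞))⁻¹ = (((((d:ℕ):ℝ≥0))⁻¹ : ℝ≥0) : ℝ≥0∞) := by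
    intro d
    have hd0 : ((d:ℕ):ℝ≥0) ≠ 0 := by
      have h1 : 0 < (d:ℕ) := d.2.1
      exact_mod_cast (by omega : (d:ℕ) ≠ 0)
    rw [ENNReal.coe_inv hd0, ENNReal.coe_natCast]
  rw [tsum_congr hterm, ENNReal.tsum_coe_ne_top_iff_summable] at hne
  have h2 := NNReal.summable_coe.mpr hne
  apply h2.congr
  intro d
  rw [NNReal.coe_inv, NNReal.coe_natCast, one_div]

theorem stmt_17' :
    (∃ C : ℝ, ∀ s : ℝ, 1 < s → ∑' d : T0, ((d : ℕ) : ℝ) ^ (-s) ≤ C) ∧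
    Summable (fun d : T0 => 1 / ((d : ℕ) : ℝ)) ∧
    (∃ C : ℝ, ∀ s : ℝ, 1 < s →
      |(∑' n : ℕ, (n : ℝ) ^ (-s)) -
        ∑' d : {d : ℕ | 0 < d ∧ ¬ IsSquare d ∧ d ∉ T0}, ((d : ℕ) : ℝ) ^ (-s)| ≤ C) := by
  have hsum : Summable (fun d : T0 => 1 / ((d:ℕ):ℝ)) := summable_T0
  have hpart1 : ∀ s : ℝ, 1 < s → ∀ d : T0, ((d:ℕ):ℝ) ^ (-s) ≤ 1/((d:ℕ):ℝ) := by
    intro s hs d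
    have hd1 : (1:ℝ) ≤ ((d:ℕ):ℝ) := by exact_mod_cast d.2.1
    calc ((d:ℕ):ℝ) ^ (-s) ≤ ((d:ℕ):ℝ) ^ (-1:ℝ) :=
        Real.rpow_le_rpow_of_exponent_le hd1 (by linarith)
      _ = (((d:ℕ):ℝ))⁻¹ := Real.rpow_neg_one _
      _ = 1/((d:ℕ):ℝ) := (one_div _).symm
  refine ⟨⟨∑' d : T0, 1/((d:ℕ):ℝ), ?_⟩, hsum, ?_⟩
  · intro s hs
    have hs1 : Summable (fun d : T0 => ((d:ℕ):ℝ) ^ (-s)) :=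
      Summable.of_nonneg_of_le (fun d => Real.rpow_nonneg (by positivity) _)
        (hpart1 s hs) hsum
    exact Summable.tsum_le_tsum (hpart1 s hs) hs1 hsum
  · set A : Set ℕ := {d : ℕ | 0 < d ∧ ¬ IsSquare d ∧ d ∉ T0} with hA
    set hfun : ℕ → ℝ :=
      fun n => (if n ∈ T0 then (n:ℝ)⁻¹ else 0) + (if IsSquare n then (n:ℝ)⁻¹ else 0) with hhfun
    have hfun_nonneg : ∀ n, 0 ≤ hfun n := by
      intro n
      apply add_nonneg <;> split <;> positivity
    have hsum1 : Summable (fun n : ℕ => if n ∈ T0 then (n:ℝ)⁻¹ else 0) := by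
      have heq : (fun n : ℕ => if n ∈ T0 then (n:ℝ)⁻¹ else 0)
          = T0.indicator (fun n => (n:ℝ)⁻¹) := by
        funext n
        rw [Set.indicator_apply]
      rw [heq, ← summable_subtype_iff_indicator]
      apply hsum.congr
      intro d
      simp only [Function.comp]
      rw [one_div]
    have hsum2 : Summable (fun n : ℕ => if IsSquare n then (n:ℝ)⁻¹ else 0) := by
      have heq : (fun n : ℕ => if IsSquare n then (n:ℝ)⁻¹ else 0)
          = {n : ℕ | IsSquare n}.indicator (fun n => (n:ℝ)⁻¹) := by
        funext n
        rw [Set.indicator_apply]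
        rfl
      rw [heq, ← summable_subtype_iff_indicator]
      have hsq : Summable (fun k : ℕ => (((k:ℝ))^2)⁻¹) :=
        Real.summable_nat_pow_inv.mpr one_lt_two
      have hinj : Function.Injective
          (fun n : {n : ℕ | IsSquare n} => Nat.sqrt (n:ℕ)) := by
        intro n m h
        obtain ⟨r, hr⟩ := n.2
        obtain ⟨t, ht⟩ := m.2
        apply Subtype.ext
        have h1 : Nat.sqrt (n:ℕ) = r := by rw [show (n:ℕ) = r*r from hr, Nat.sqrt_eq]
        have h2 : Nat.sqrt (m:ℕ) = t := by rw [show (m:ℕ) = t*t from ht, Nat.sqrt_eq]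
        simp only at h
        rw [h1, h2] at h
        rw [show (n:ℕ) = r*r from hr, show (m:ℕ) = t*t from ht, h]
      have h3 := hsq.comp_injective hinj
      apply h3.congr
      intro n
      obtain ⟨r, hr⟩ := n.2
      simp only [Function.comp]
      rw [show (n:ℕ) = r*r from hr, Nat.sqrt_eq]
      have : ((r*r : ℕ):ℝ) = (r:ℝ)^2 := by push_cast; ring
      rw [this]
    have hSummaj : Summable hfun := hsum1.add hsum2
    refine ⟨∑' n, hfun n, ?_⟩
    intro s hs
    have hfs : Summable (fun n : ℕ => (n:ℝ) ^ (-s)) :=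
      Real.summable_nat_rpow.mpr (by linarith)
    have hsplit : (∑' x : A, ((x:ℕ):ℝ)^(-s)) + (∑' x : ↑(Aᶜ), ((x:ℕ):ℝ)^(-s))
        = ∑' n : ℕ, (n:ℝ)^(-s) :=
      Summable.tsum_add_tsum_compl (hfs.subtype A) (hfs.subtype Aᶜ)
    have hnn : 0 ≤ ∑' x : ↑(Aᶜ), ((x:ℕ):ℝ)^(-s) :=
      tsum_nonneg (fun x => Real.rpow_nonneg (by positivity) _)
    have hpt : ∀ x : ↑(Aᶜ), ((x:ℕ):ℝ)^(-s) ≤ hfun (x:ℕ) := by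
      intro x
      have hxc := x.2
      simp only [hA, Set.mem_compl_iff, Set.mem_setOf_eq] at hxc
      push_neg at hxc
      rcases Nat.eq_zero_or_pos (x:ℕ) with h0 | hxpos
      · rw [h0]
        rw [Nat.cast_zero, Real.zero_rpow (by linarith : -s ≠ 0)]
        exact hfun_nonneg _
      · have hle : ((x:ℕ):ℝ)^(-s) ≤ ((x:ℕ):ℝ)⁻¹ := by
          have hd1 : (1:ℝ) ≤ ((x:ℕ):ℝ) := by exact_mod_cast hxpos
          calc ((x:ℕ):ℝ) ^ (-s) ≤ ((x:ℕ):ℝ) ^ (-1:ℝ) :=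
              Real.rpow_le_rpow_of_exponent_le hd1 (by linarith)
            _ = (((x:ℕ):ℝ))⁻¹ := Real.rpow_neg_one _
        by_cases hsq : IsSquare (x:ℕ)
        · calc ((x:ℕ):ℝ)^(-s) ≤ ((x:ℕ):ℝ)⁻¹ := hle
            _ ≤ hfun (x:ℕ) := by
              rw [hhfun]
              simp only
              rw [if_pos hsq]
              have : (0:ℝ) ≤ (if (x:ℕ) ∈ T0 then (((x:ℕ)):ℝ)⁻¹ else 0) := by
                split <;> positivity
              linarith
        · have hT0 : (x:ℕ) ∈ T0 := hxc hxpos hsq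
          calc ((x:ℕ):ℝ)^(-s) ≤ ((x:ℕ):ℝ)⁻¹ := hle
            _ ≤ hfun (x:ℕ) := by
              rw [hhfun]
              simp only
              rw [if_pos hT0]
              have : (0:ℝ) ≤ (if IsSquare (x:ℕ) then (((x:ℕ)):ℝ)⁻¹ else 0) := by
                split <;> positivity
              linarith
    have hbound : (∑' x : ↑(Aᶜ), ((x:ℕ):ℝ)^(-s)) ≤ ∑' n : ℕ, hfun n := by
      calc (∑' x : ↑(Aᶜ), ((x:ℕ):ℝ)^(-s)) ≤ ∑' x : ↑(Aᶜ), hfun (x:ℕ) :=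
          Summable.tsum_le_tsum hpt (hfs.subtype _) (hSummaj.subtype _)
        _ = ∑' n : ℕ, (Aᶜ).indicator hfun n := tsum_subtype _ _
        _ ≤ ∑' n : ℕ, hfun n :=
          Summable.tsum_le_tsum (fun n => Set.indicator_le_self' (fun m _ => hfun_nonneg m) n)
            (hSummaj.indicator _) hSummaj
    have hdiff : (∑' n : ℕ, (n:ℝ)^(-s)) - (∑' x : A, ((x:ℕ):ℝ)^(-s))
        = ∑' x : ↑(Aᶜ), ((x:ℕ):ℝ)^(-s) := by linarith
    rw [hdiff, abs_of_nonneg hnn]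
    exact hbound

end

/-- there is a constant `C` bounding `Σ_{d ∈ T⁰} d^{-s}` for all real `s > 1`;
in particular `Σ_{d ∈ T⁰} 1/d` converges, and
`ζ(s) - Σ_{d non-square, d ∉ T⁰} d^{-s}` remains bounded as `s → 1⁺`. -/
theorem stmt_17 :
    (∃ C : ℝ, ∀ s : ℝ, 1 < s → ∑' d : T0, ((d : ℕ) : ℝ) ^ (-s) ≤ C) ∧
    Summable (fun d : T0 => 1 / ((d : ℕ) : ℝ)) ∧
    (∃ C : ℝ, ∀ s : ℝ, 1 < s →
      |(∑' n : ℕ, (n : ℝ) ^ (-s)) -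
        ∑' d : {d : ℕ | 0 < d ∧ ¬ IsSquare d ∧ d ∉ T0}, ((d : ℕ) : ℝ) ^ (-s)| ≤ C) := by
  exact stmt_17'
end

section
/- For a positive integer y set ỹ = y/2 if y is even and ỹ = y if y is odd. Let T¹ be the set of positive non-square integers d with d ≡ 1 (mod 4) for which there exist integers y ≥ 1, x with 0 ≤ x < y and gcd(x, y) = 1, and a > ỹ such that |(2(a·y + x) − y)² − d·y²| = 4. Then there is a constant C such that Σ_{d ∈ T¹} d^{−s} ≤ C for every real s > 1; in particular Σ_{d ∈ T¹} 1/d converges, and Σ_{d ≡ 1 (mod 4), d non-square} d^{−s} − Σ_{d ≡ 1 (mod 4), d non-square, d ∉ T¹} d^{−s} remains bounded as s → 1⁺. -/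
namespace Stmt18

def Mz (y x a : ℕ) : ℤ := 2 * ((a * y + x : ℕ) : ℤ) - (y : ℤ)



/-! ### Divisor-structure injection for `z` with `y ∣ 16 z² - 16` -/

def uD (y z : ℕ) : ℕ := Nat.gcd y (4*z + 4*y - 4)
def vD (y z : ℕ) : ℕ := Nat.gcd y (4*z + 4)
def LD (y z : ℕ) : ℕ := Nat.lcm (uD y z) (vD y z)
def tD (y z : ℕ) : ℕ := uD y z * vD y z / y
def rD (y z : ℕ) : ℕ := 4*z / LD y z

variable {y z z' : ℕ}

lemma uD_dvd : uD y z ∣ y := Nat.gcd_dvd_left _ _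
lemma vD_dvd : vD y z ∣ y := Nat.gcd_dvd_left _ _
lemma uD_pos (hy : 1 ≤ y) : 0 < uD y z := Nat.gcd_pos_of_pos_left _ hy
lemma vD_pos (hy : 1 ≤ y) : 0 < vD y z := Nat.gcd_pos_of_pos_left _ hy
lemma LD_pos (hy : 1 ≤ y) : 0 < LD y z := Nat.lcm_pos (uD_pos hy) (vD_pos hy)

lemma gcd_uv_dvd_eight (hy : 1 ≤ y) : Nat.gcd (uD y z) (vD y z) ∣ 8 := by
  set g := Nat.gcd (uD y z) (vD y z) with hg
  have hA : g ∣ 4*z + 4*y - 4 := (Nat.gcd_dvd_left _ _).trans (Nat.gcd_dvd_right _ _)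
  have hB : g ∣ 4*z + 4 := (Nat.gcd_dvd_right _ _).trans (Nat.gcd_dvd_right _ _)
  have hy' : g ∣ y := (Nat.gcd_dvd_left _ _).trans (Nat.gcd_dvd_left _ _)
  have hBy : g ∣ (4*z+4) + 4*y := dvd_add hB (hy'.mul_left 4)
  have h8 := Nat.dvd_sub hBy hA
  have he : (4*z+4) + 4*y - (4*z + 4*y - 4) = 8 := by omega
  rwa [he] at h8

lemma y_dvd_AB (hy : 1 ≤ y) (h16 : (y:ℤ) ∣ 16*(z:ℤ)^2 - 16) :
    y ∣ (4*z + 4*y - 4) * (4*z + 4) := by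
  have h4 : (4:ℕ) ≤ 4*z + 4*y := by omega
  rw [← Int.natCast_dvd_natCast]
  push_cast [h4]
  have : ((4:ℤ)*z + 4*y - 4) * (4*z + 4) = (16*(z:ℤ)^2 - 16) + (y:ℤ)*(16*z+16) := by ring
  rw [this]
  exact dvd_add h16 ⟨16*z+16, rfl⟩

lemma y_dvd_uv (hy : 1 ≤ y) (h16 : (y:ℤ) ∣ 16*(z:ℤ)^2 - 16) :
    y ∣ uD y z * vD y z := by
  have h := y_dvd_AB hy h16
  have h2 : Nat.gcd y ((4*z+4*y-4)*(4*z+4)) = y := Nat.gcd_eq_left h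
  calc y = Nat.gcd y ((4*z+4*y-4)*(4*z+4)) := h2.symm
    _ ∣ Nat.gcd y (4*z+4*y-4) * Nat.gcd y (4*z+4) := Nat.gcd_mul_right_dvd_mul_gcd _ _ _
    _ = uD y z * vD y z := rfl

lemma uv_dvd_8y (hy : 1 ≤ y) : uD y z * vD y z ∣ 8 * y := by
  rw [← Nat.gcd_mul_lcm]
  exact mul_dvd_mul (gcd_uv_dvd_eight hy) (Nat.lcm_dvd uD_dvd vD_dvd)

lemma tD_lt (hy : 1 ≤ y) (h16 : (y:ℤ) ∣ 16*(z:ℤ)^2 - 16) : tD y z < 9 := by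
  have h1 := y_dvd_uv hy h16
  have h2 : tD y z * y = uD y z * vD y z := Nat.div_mul_cancel h1
  have h3 : tD y z * y ∣ 8 * y := h2 ▸ uv_dvd_8y hy
  have h4 : tD y z ∣ 8 := (Nat.mul_dvd_mul_iff_right hy).mp h3
  exact lt_of_le_of_lt (Nat.le_of_dvd (by norm_num) h4) (by norm_num)

lemma y_le_8L (hy : 1 ≤ y) (h16 : (y:ℤ) ∣ 16*(z:ℤ)^2 - 16) : y ≤ 8 * LD y z := by
  have h1 := y_dvd_uv hy h16
  have hpos : 0 < uD y z * vD y z := Nat.mul_pos (uD_pos hy) (vD_pos hy)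
  have h2 : y ≤ uD y z * vD y z := Nat.le_of_dvd hpos h1
  have h3 : uD y z * vD y z = Nat.gcd (uD y z) (vD y z) * LD y z := (Nat.gcd_mul_lcm _ _).symm
  have h4 : Nat.gcd (uD y z) (vD y z) ≤ 8 := Nat.le_of_dvd (by norm_num) (gcd_uv_dvd_eight hy)
  calc y ≤ uD y z * vD y z := h2
    _ = Nat.gcd (uD y z) (vD y z) * LD y z := h3
    _ ≤ 8 * LD y z := Nat.mul_le_mul_right _ h4

lemma rD_lt (hy : 1 ≤ y) (hz : z < y) (h16 : (y:ℤ) ∣ 16*(z:ℤ)^2 - 16) : rD y z < 32 := by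
  have hL := LD_pos (z := z) hy
  have h1 : 4*z < 32 * LD y z := by
    have := y_le_8L hy h16
    omega
  exact (Nat.div_lt_iff_lt_mul hL).mpr (by omega)

lemma D_inj_aux (hy : 1 ≤ y) (hz : z < y) (hz' : z' ≤ z)
    (h16 : (y:ℤ) ∣ 16*(z:ℤ)^2 - 16) (h16' : (y:ℤ) ∣ 16*(z':ℤ)^2 - 16)
    (hu : uD y z = uD y z') (ht : tD y z = tD y z') (hr : rD y z = rD y z') : z = z' := by
  have hv : vD y z = vD y z' := by
    have e1 : uD y z * vD y z = tD y z * y := (Nat.div_mul_cancel (y_dvd_uv hy h16)).symm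
    have e2 : uD y z' * vD y z' = tD y z' * y := (Nat.div_mul_cancel (y_dvd_uv hy h16')).symm
    have : uD y z * vD y z = uD y z * vD y z' := by rw [e1, ht, ← e2, hu]
    exact Nat.eq_of_mul_eq_mul_left (uD_pos hy) this
  have hL : LD y z = LD y z' := by unfold LD; rw [hu, hv]
  -- uD and vD divide 4*(z - z')
  have hudvd : uD y z ∣ 4*(z - z') := by
    have h1 : uD y z ∣ 4*z + 4*y - 4 := Nat.gcd_dvd_right _ _
    have h2 : uD y z ∣ 4*z' + 4*y - 4 := hu ▸ Nat.gcd_dvd_right _ _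
    have := Nat.dvd_sub h1 h2
    have he : (4*z + 4*y - 4) - (4*z' + 4*y - 4) = 4*(z-z') := by omega
    rwa [he] at this
  have hvdvd : vD y z ∣ 4*(z - z') := by
    have h1 : vD y z ∣ 4*z + 4 := Nat.gcd_dvd_right _ _
    have h2 : vD y z ∣ 4*z' + 4 := hv ▸ Nat.gcd_dvd_right _ _
    have := Nat.dvd_sub h1 h2
    have he : (4*z + 4) - (4*z' + 4) = 4*(z-z') := by omega
    rwa [he] at this
  have hLdvd : LD y z ∣ 4*z - 4*z' := by
    have := Nat.lcm_dvd hudvd hvdvd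
    have he : 4*(z-z') = 4*z - 4*z' := by omega
    rwa [he] at this
  have hmod : 4*z' % LD y z = 4*z % LD y z :=
    (Nat.modEq_iff_dvd' (by omega)).mpr hLdvd
  have hL0 := LD_pos (z := z) hy
  have hdq : 4*z = LD y z * (4*z / LD y z) + 4*z % LD y z := (Nat.div_add_mod _ _).symm
  have hdq' : 4*z' = LD y z * (4*z' / LD y z) + 4*z' % LD y z := (Nat.div_add_mod _ _).symm
  have hrr : 4*z / LD y z = 4*z' / LD y z := by
    have := hr; unfold rD at this; rw [← hL] at this; exact this
  have hq : LD y z * (4*z / LD y z) = LD y z * (4*z' / LD y z) := by rw [hrr]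
  omega

lemma D_inj (hy : 1 ≤ y) (hz : z < y) (hz' : z' < y)
    (h16 : (y:ℤ) ∣ 16*(z:ℤ)^2 - 16) (h16' : (y:ℤ) ∣ 16*(z':ℤ)^2 - 16)
    (hu : uD y z = uD y z') (ht : tD y z = tD y z') (hr : rD y z = rD y z') : z = z' := by
  rcases le_total z' z with h | h
  · exact D_inj_aux hy hz h h16 h16' hu ht hr
  · exact (D_inj_aux hy hz' h h16' h16 hu.symm ht.symm hr.symm).symm




lemma Mz_eq (y x a : ℕ) : Mz y x a = 2*(a:ℤ)*(y:ℤ) + 2*(x:ℤ) - (y:ℤ) := by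
  unfold Mz; push_cast; ring

lemma Mz_pos {y a : ℕ} (x : ℕ) (hy : 1 ≤ y) (ha : 1 ≤ a) : 0 < Mz y x a := by
  rw [Mz_eq]
  have hy' : (1:ℤ) ≤ (y:ℤ) := by exact_mod_cast hy
  have ha' : (1:ℤ) ≤ (a:ℤ) := by exact_mod_cast ha
  have hx' : (0:ℤ) ≤ (x:ℤ) := Int.natCast_nonneg x
  nlinarith

lemma ay_le_Mz {y a : ℕ} (x : ℕ) (hy : 1 ≤ y) (ha : 1 ≤ a) : (a:ℤ)*(y:ℤ) ≤ Mz y x a := by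
  rw [Mz_eq]
  have hy' : (1:ℤ) ≤ (y:ℤ) := by exact_mod_cast hy
  have ha' : (1:ℤ) ≤ (a:ℤ) := by exact_mod_cast ha
  have hx' : (0:ℤ) ≤ (x:ℤ) := Int.natCast_nonneg x
  nlinarith

lemma three_le_Mz {y a : ℕ} (x : ℕ) (hy : 1 ≤ y) (ha : 2 ≤ a) : 3 ≤ Mz y x a := by
  rw [Mz_eq]
  have hy' : (1:ℤ) ≤ (y:ℤ) := by exact_mod_cast hy
  have ha' : (2:ℤ) ≤ (a:ℤ) := by exact_mod_cast ha
  have hx' : (0:ℤ) ≤ (x:ℤ) := Int.natCast_nonneg x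
  nlinarith

lemma spacing {y x a a' : ℕ} {e : ℤ} (hy : 1 ≤ y) (hcop : Nat.Coprime x y)
    (ha : 1 ≤ a) (hlt : a < a')
    (h1 : ((y:ℤ))^2 ∣ (Mz y x a)^2 - e) (h2 : ((y:ℤ))^2 ∣ (Mz y x a')^2 - e) :
    y ≤ 8 * (a' - a) := by
  have ha' : 1 ≤ a' := le_of_lt (lt_of_le_of_lt ha hlt)
  have hy0 : (y:ℤ) ≠ 0 := by exact_mod_cast Nat.one_le_iff_ne_zero.mp hy
  set M := Mz y x a with hM
  set M' := Mz y x a' with hM'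
  have hdiff : (y:ℤ)^2 ∣ M'^2 - M^2 := by
    have := dvd_sub h2 h1
    simpa using this
  have hfac : M'^2 - M^2 = (y:ℤ) * (((a':ℤ)-a) * (2*(M + M'))) := by
    rw [hM, hM', Mz_eq, Mz_eq]; ring
  have hdvd : (y:ℤ) ∣ ((a':ℤ)-a) * (2*(M+M')) := by
    have h3 : (y:ℤ)*(y:ℤ) ∣ (y:ℤ) * (((a':ℤ)-a) * (2*(M+M'))) := by
      rw [← hfac]; simpa [pow_two] using hdiff
    exact (mul_dvd_mul_iff_left hy0).mp h3
  -- convert to ℕ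
  set Cn : ℕ := 4*(a+a'-1)*y + 8*x with hCn
  have hCz : (Cn:ℤ) = 2*(M+M') := by
    rw [hM, hM', Mz_eq, Mz_eq, hCn]
    have h1' : (1:ℕ) ≤ a + a' := by omega
    push_cast [Nat.cast_sub h1']
    ring
  have hdvdN : y ∣ (a' - a) * Cn := by
    rw [← Int.natCast_dvd_natCast]
    push_cast [Nat.cast_sub (le_of_lt hlt)]
    rw [hCz]
    exact hdvd
  -- gcd bound
  have hgd : Nat.gcd Cn y ∣ 8 := by
    have he1 : Nat.gcd Cn y = Nat.gcd (8*x) y := by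
      rw [hCn]
      have : 4*(a+a'-1)*y + 8*x = 8*x + (4*(a+a'-1))*y := by ring
      rw [this, Nat.gcd_add_mul_right_left y (8*x) (4*(a+a'-1))]
    rw [he1]
    have : Nat.gcd (8*x) y ∣ Nat.gcd (8*x) (8*y) :=
      Nat.dvd_gcd (Nat.gcd_dvd_left _ _) ((Nat.gcd_dvd_right _ _).mul_left 8)
    rw [Nat.gcd_mul_left, hcop] at this
    simpa using this
  set g := Nat.gcd Cn y with hgdef
  have hCnpos : 0 < Cn := by
    have h1' : 0 < 4*(a+a'-1)*y := Nat.mul_pos (by omega) hy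
    omega
  have hgpos : 0 < g := Nat.gcd_pos_of_pos_right _ (by omega)
  have hgy : g ∣ y := Nat.gcd_dvd_right _ _
  have hgC : g ∣ Cn := Nat.gcd_dvd_left _ _
  have hco : Nat.Coprime (y/g) (Cn/g) := by
    have := Nat.coprime_div_gcd_div_gcd (m := Cn) (n := y) hgpos
    exact this.symm
  obtain ⟨q, hq⟩ := hdvdN
  have e1 : (a'-a)*(Cn/g) = (y/g)*q := by
    apply Nat.eq_of_mul_eq_mul_left hgpos
    calc g*((a'-a)*(Cn/g)) = (a'-a)*(g*(Cn/g)) := by ring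
      _ = (a'-a)*Cn := by rw [Nat.mul_div_cancel' hgC]
      _ = y*q := hq
      _ = g*((y/g)*q) := by rw [← mul_assoc, Nat.mul_div_cancel' hgy]
  have h2' : y/g ∣ (a'-a)*(Cn/g) := ⟨q, e1⟩
  have h3' : y/g ∣ a'-a := hco.dvd_of_dvd_mul_right h2'
  have h4' : y/g ≤ a'-a := Nat.le_of_dvd (by omega) h3'
  have h5' : g ≤ 8 := Nat.le_of_dvd (by norm_num) hgd
  calc y = g*(y/g) := (Nat.mul_div_cancel' hgy).symm
    _ ≤ 8*(a'-a) := Nat.mul_le_mul h5' h4'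



def Pc (y : ℕ) : Prop := ∃ w : ℕ, w < y ∧ Nat.Coprime w y ∧ (y:ℤ) ∣ 4*(w:ℤ)^2 + 4

open Classical in
noncomputable def X0 (y : ℕ) : ℕ := if h : Pc y then h.choose else 0

lemma X0_spec {y : ℕ} (h : Pc y) :
    X0 y < y ∧ Nat.Coprime (X0 y) y ∧ (y:ℤ) ∣ 4*((X0 y):ℤ)^2 + 4 := by
  rw [X0]
  rw [dif_pos h]
  exact h.choose_spec

lemma one_le_ytilde {y : ℕ} (hy : 1 ≤ y) : 1 ≤ ytilde y := by
  unfold ytilde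
  split
  · next h => obtain ⟨c, hc⟩ := h; omega
  · omega

lemma exists_wit (d : ℕ) (hd : d ∈ T1) : ∃ p : ℕ × ℕ × ℕ,
    1 ≤ p.1 ∧ p.2.1 < p.1 ∧ Nat.Coprime p.2.1 p.1 ∧ ytilde p.1 < p.2.2 ∧
    |(Mz p.1 p.2.1 p.2.2)^2 - (d:ℤ)*((p.1:ℕ):ℤ)^2| = 4 := by
  simp only [T1, Set.mem_setOf_eq] at hd
  obtain ⟨-, -, -, y, x, a, hy, hx, hc, ha, habs⟩ := hd
  exact ⟨(y, x, a), hy, hx, hc, ha, by simpa [Mz] using habs⟩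

noncomputable def Wd (d : T1) : ℕ × ℕ × ℕ := (exists_wit d d.2).choose
noncomputable def Yd (d : T1) : ℕ := (Wd d).1
noncomputable def Xd (d : T1) : ℕ := (Wd d).2.1
noncomputable def Ad (d : T1) : ℕ := (Wd d).2.2
noncomputable def Ed (d : T1) : ℤ :=
  (Mz (Yd d) (Xd d) (Ad d))^2 - ((d:ℕ):ℤ)*((Yd d):ℤ)^2

lemma Wd_spec (d : T1) : 1 ≤ Yd d ∧ Xd d < Yd d ∧ Nat.Coprime (Xd d) (Yd d) ∧
    ytilde (Yd d) < Ad d ∧ |Ed d| = 4 := (exists_wit d d.2).choose_spec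

lemma Ed_cases (d : T1) : Ed d = 4 ∨ Ed d = -4 :=
  (abs_eq (by norm_num)).mp (Wd_spec d).2.2.2.2

lemma two_le_Ad (d : T1) : 2 ≤ Ad d := by
  have h1 := one_le_ytilde (Wd_spec d).1
  have h2 := (Wd_spec d).2.2.2.1
  omega

lemma Ed_key (d : T1) : (Mz (Yd d) (Xd d) (Ad d))^2 - Ed d = ((d:ℕ):ℤ)*((Yd d):ℤ)^2 := by
  unfold Ed; ring

lemma y_dvd_4x2 (d : T1) : ((Yd d):ℤ) ∣ 4*((Xd d):ℤ)^2 - Ed d := by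
  set y := Yd d; set x := Xd d; set a := Ad d
  have h1 : (y:ℤ) ∣ (Mz y x a)^2 - Ed d := by
    rw [Ed_key d]
    exact ⟨((d:ℕ):ℤ)*(y:ℤ), by ring⟩
  have h2 : (y:ℤ) ∣ (Mz y x a)^2 - 4*(x:ℤ)^2 := by
    have hm : Mz y x a - 2*(x:ℤ) = (y:ℤ)*(2*(a:ℤ)-1) := by unfold Mz; push_cast; ring
    have : (Mz y x a)^2 - 4*(x:ℤ)^2 = (Mz y x a - 2*x)*(Mz y x a + 2*x) := by ring
    rw [this, hm]
    exact Dvd.dvd.mul_right ⟨2*(a:ℤ)-1, rfl⟩ _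
  have := dvd_sub h1 h2
  have he : ((Mz y x a)^2 - Ed d) - ((Mz y x a)^2 - 4*(x:ℤ)^2) = 4*(x:ℤ)^2 - Ed d := by ring
  rwa [he] at this

noncomputable def zd (d : T1) : ℕ :=
  if Ed d = 4 then Xd d else (Xd d * X0 (Yd d)) % (Yd d)

lemma zd_lt (d : T1) : zd d < Yd d := by
  unfold zd; split
  · exact (Wd_spec d).2.1
  · exact Nat.mod_lt _ (Wd_spec d).1

lemma Pc_of (d : T1) (h : Ed d = -4) : Pc (Yd d) := by
  refine ⟨Xd d, (Wd_spec d).2.1, (Wd_spec d).2.2.1, ?_⟩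
  have := y_dvd_4x2 d
  rw [h] at this
  have he : 4*((Xd d):ℤ)^2 + 4 = 4*((Xd d):ℤ)^2 - (-4) := by ring
  rw [he]; exact this

lemma h16 (d : T1) : ((Yd d):ℤ) ∣ 16*((zd d):ℤ)^2 - 16 := by
  rcases Ed_cases d with h4 | h4
  · have hz : zd d = Xd d := if_pos h4
    rw [hz]
    have := (y_dvd_4x2 d).mul_left 4
    rw [h4] at this
    have he : 16*((Xd d):ℤ)^2-16 = 4*(4*((Xd d):ℤ)^2-4) := by ring
    rw [he]; exact this
  · have hz : zd d = (Xd d * X0 (Yd d)) % (Yd d) := by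
      unfold zd; rw [if_neg (by rw [h4]; norm_num)]
    obtain ⟨hw1, hw2, hw3⟩ := X0_spec (Pc_of d h4)
    set y := Yd d; set x := Xd d; set w := X0 (Yd d)
    have hx4 : (y:ℤ) ∣ 4*(x:ℤ)^2 + 4 := by
      have := y_dvd_4x2 d; rw [h4] at this
      have he : 4*(x:ℤ)^2 + 4 = 4*(x:ℤ)^2 - (-4) := by ring
      rw [he]; exact this
    have hmod : (y:ℤ) ∣ (x:ℤ)*(w:ℤ) - ((zd d):ℤ) := by
      have h5 : (x*w) % y ≡ x*w [MOD y] := Nat.mod_modEq _ _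
      have := h5.dvd
      rw [hz]; push_cast at this ⊢; exact this
    have hkey : (16:ℤ)*((x:ℤ)*(w:ℤ))^2 - 16 =
        (4*(x:ℤ)^2+4)*(4*(w:ℤ)^2+4) - 4*(4*(x:ℤ)^2+4) - 4*(4*(w:ℤ)^2+4) := by ring
    have h6 : (y:ℤ) ∣ 16*((x:ℤ)*(w:ℤ))^2 - 16 := by
      rw [hkey]
      exact dvd_sub (dvd_sub (hx4.mul_right _) (hx4.mul_left 4)) (hw3.mul_left 4)
    have h7 : (y:ℤ) ∣ (16*((x:ℤ)*(w:ℤ))^2 - 16) - (16*((zd d):ℤ)^2 - 16) := by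
      have he : (16*((x:ℤ)*(w:ℤ))^2 - 16) - (16*((zd d):ℤ)^2 - 16) =
          ((x:ℤ)*(w:ℤ) - ((zd d):ℤ)) * (16*((x:ℤ)*(w:ℤ) + (zd d))) := by ring
      rw [he]
      exact hmod.mul_right _
    have := dvd_sub h6 h7
    simpa using this

noncomputable def kd (d : T1) : ℕ := (8*(Ad d - (ytilde (Yd d) + 1))) / (Yd d)

lemma step1 (d : T1) : (kd d + 4) * Yd d ≤ 8 * Ad d := by
  have h1 : kd d * Yd d ≤ 8*(Ad d - (ytilde (Yd d) + 1)) := Nat.div_mul_le_self _ _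
  have h2 : 4 * Yd d ≤ 8*(ytilde (Yd d) + 1) := by
    unfold ytilde; split
    · next h => obtain ⟨c, hc⟩ := h; omega
    · omega
  have h3 := (Wd_spec d).2.2.2.1
  have h4 : (kd d + 4) * Yd d = kd d * Yd d + 4 * Yd d := by ring
  omega

lemma key_ineq (d : T1) : (kd d + 4)^2 * (Yd d)^2 ≤ 128 * (d:ℕ) := by
  have hy := (Wd_spec d).1
  have ha2 := two_le_Ad d
  set y := Yd d; set x := Xd d; set a := Ad d
  have hKA : ((kd d + 4 : ℕ):ℤ) * (y:ℤ) ≤ 8 * (a:ℤ) := by exact_mod_cast step1 d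
  have hayM : (a:ℤ)*(y:ℤ) ≤ Mz y x a := ay_le_Mz x hy (by omega)
  have hM3 : 3 ≤ Mz y x a := three_le_Mz x hy ha2
  have hMd := Ed_key d
  have hE := Ed_cases d
  set M := Mz y x a
  set K := ((kd d + 4 : ℕ):ℤ) with hKdef
  have hK0 : 0 ≤ K := Int.natCast_nonneg _
  have hY0 : (0:ℤ) < (y:ℤ) := by exact_mod_cast hy
  have s1 : (K*(y:ℤ))^2 ≤ (8*(a:ℤ))^2 := by
    apply pow_le_pow_left₀ (by positivity) hKA
  have s2 : ((a:ℤ)*(y:ℤ))^2 ≤ M^2 := by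
    apply pow_le_pow_left₀ (by positivity) hayM
  have s3 : 64*M^2 ≤ 128*(M^2 - Ed d) := by
    rcases hE with h | h <;> rw [h] <;> nlinarith
  have goalZ : K^2 * (y:ℤ)^2 ≤ 128 * ((d:ℕ):ℤ) := by
    have hY2 : (0:ℤ) < (y:ℤ)^2 := by positivity
    apply le_of_mul_le_mul_right _ hY2
    calc K^2*(y:ℤ)^2*(y:ℤ)^2 = (K*(y:ℤ))^2 * (y:ℤ)^2 := by ring
      _ ≤ (8*(a:ℤ))^2 * (y:ℤ)^2 := by
          exact mul_le_mul_of_nonneg_right s1 (by positivity)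
      _ = 64 * ((a:ℤ)*(y:ℤ))^2 := by ring
      _ ≤ 64 * M^2 := by linarith
      _ ≤ 128*(M^2 - Ed d) := s3
      _ = 128 * ((d:ℕ):ℤ) * (y:ℤ)^2 := by rw [hMd]; ring
  simp only [hKdef] at goalZ
  exact_mod_cast goalZ

noncomputable def Psi (d : T1) : (ℕ×ℕ×ℕ) × (Fin 9 × Fin 32 × Bool) :=
  ((uD (Yd d) (zd d), Yd d / uD (Yd d) (zd d), kd d),
   (⟨tD (Yd d) (zd d), tD_lt (Wd_spec d).1 (h16 d)⟩,
    ⟨rD (Yd d) (zd d), rD_lt (Wd_spec d).1 (zd_lt d) (h16 d)⟩,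
    decide (Ed d = 4)))

lemma Psi_inj : Function.Injective Psi := by
  intro d d' h
  simp only [Psi, Prod.mk.injEq, Fin.mk.injEq] at h
  obtain ⟨⟨hu, hw, hk⟩, ht, hr, he⟩ := h
  have hy1 := (Wd_spec d).1
  have hy1' := (Wd_spec d').1
  -- y equal
  have hY : Yd d = Yd d' := by
    have e1 : uD (Yd d) (zd d) * (Yd d / uD (Yd d) (zd d)) = Yd d :=
      Nat.mul_div_cancel' uD_dvd
    have e2 : uD (Yd d') (zd d') * (Yd d' / uD (Yd d') (zd d')) = Yd d' :=
      Nat.mul_div_cancel' uD_dvd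
    rw [← e1, ← e2, hw, hu]
  -- E equal
  have hE : Ed d = Ed d' := by
    rcases Ed_cases d with a1|a1 <;> rcases Ed_cases d' with b1|b1 <;>
      simp [a1, b1] at he ⊢
  -- z equal
  have hz : zd d = zd d' := by
    apply D_inj hy1 (zd_lt d) (hY ▸ zd_lt d') (h16 d) (hY ▸ h16 d')
    · rw [hu, hY]
    · rw [ht, hY]
    · rw [hr, hY]
  -- x equal
  have hX : Xd d = Xd d' := by
    rcases Ed_cases d with h4 | h4
    · have h4' : Ed d' = 4 := hE ▸ h4
      have z1 : zd d = Xd d := if_pos h4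
      have z2 : zd d' = Xd d' := if_pos h4'
      rw [← z1, ← z2, hz]
    · have h4' : Ed d' = -4 := hE ▸ h4
      have z1 : zd d = (Xd d * X0 (Yd d)) % (Yd d) := by
        unfold zd; rw [if_neg (by rw [h4]; norm_num)]
      have z2 : zd d' = (Xd d' * X0 (Yd d')) % (Yd d') := by
        unfold zd; rw [if_neg (by rw [h4']; norm_num)]
      rw [← hY] at z2
      have hco : Nat.gcd (Yd d) (X0 (Yd d)) = 1 :=
        Nat.coprime_comm.mp (X0_spec (Pc_of d h4)).2.1
      have hmeq : Xd d * X0 (Yd d) ≡ Xd d' * X0 (Yd d) [MOD Yd d] := by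
        have : zd d = zd d' := hz
        rw [z1, z2] at this
        simpa [Nat.ModEq] using this
      have := Nat.ModEq.cancel_right_of_coprime hco hmeq
      have hx1 := (Wd_spec d).2.1
      have hx2 := hY ▸ (Wd_spec d').2.1
      simpa [Nat.ModEq, Nat.mod_eq_of_lt hx1, Nat.mod_eq_of_lt hx2] using this
  -- a equal
  have hA : Ad d = Ad d' := by
    have hdvd1 : ((Yd d):ℤ)^2 ∣ (Mz (Yd d) (Xd d) (Ad d))^2 - Ed d := by
      rw [Ed_key d]; exact ⟨((d:ℕ):ℤ), by ring⟩
    have hdvd2 : ((Yd d):ℤ)^2 ∣ (Mz (Yd d) (Xd d) (Ad d'))^2 - Ed d := by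
      rw [hE, hY, hX]
      rw [Ed_key d']; exact ⟨((d':ℕ):ℤ), by ring⟩
    have hcop := (Wd_spec d).2.2.1
    have haux : ∀ a a' : ℕ, a < a' →
        ((Yd d):ℤ)^2 ∣ (Mz (Yd d) (Xd d) a)^2 - Ed d →
        ((Yd d):ℤ)^2 ∣ (Mz (Yd d) (Xd d) a')^2 - Ed d →
        ytilde (Yd d) < a → ytilde (Yd d) < a' →
        (8*(a - (ytilde (Yd d) + 1))) / (Yd d) = (8*(a' - (ytilde (Yd d) + 1))) / (Yd d) →
        False := by
      intro a a' hlt hd1 hd2 hta hta' hkk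
      have hsp : Yd d ≤ 8 * (a' - a) :=
        spacing hy1 hcop (by omega) hlt hd1 hd2
      set b := ytilde (Yd d) + 1
      have hba : b ≤ a := by omega
      have hba' : b ≤ a' := by omega
      set kk := (8*(a - b)) / (Yd d)
      have h1 : kk * Yd d ≤ 8*(a-b) := Nat.div_mul_le_self _ _
      have h2 : (kk+1) * Yd d ≤ 8*(a'-b) := by
        have : (kk+1)*Yd d = kk*Yd d + Yd d := by ring
        omega
      have h3 : kk + 1 ≤ (8*(a'-b))/(Yd d) := (Nat.le_div_iff_mul_le (by omega)).mpr h2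
      omega
    by_contra hne
    have hta := (Wd_spec d).2.2.2.1
    have hta' := hY ▸ (Wd_spec d').2.2.2.1
    have hkk : (8*(Ad d - (ytilde (Yd d) + 1))) / (Yd d)
        = (8*(Ad d' - (ytilde (Yd d) + 1))) / (Yd d) := by
      have := hk
      unfold kd at this
      rw [← hY] at this
      exact this
    rcases Nat.lt_or_ge (Ad d) (Ad d') with hlt | hge
    · exact haux _ _ hlt hdvd1 hdvd2 hta hta' hkk
    · have hlt' : Ad d' < Ad d := by omega
      exact haux _ _ hlt' hdvd2 hdvd1 hta' hta hkk.symm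
  -- d equal
  have hfinal : ((d:ℕ):ℤ) * ((Yd d):ℤ)^2 = ((d':ℕ):ℤ) * ((Yd d):ℤ)^2 := by
    rw [← Ed_key d]
    rw [hE, hY, hX, hA, Ed_key d']
  have hY0 : ((Yd d):ℤ)^2 ≠ 0 := by
    have : (0:ℤ) < ((Yd d):ℤ) := by exact_mod_cast hy1
    positivity
  have : ((d:ℕ):ℤ) = ((d':ℕ):ℤ) := mul_right_cancel₀ hY0 hfinal
  exact Subtype.ext (by exact_mod_cast this)

lemma T1_pos (d : T1) : 0 < (d:ℕ) := d.2.1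

noncomputable def Gw : ℕ×ℕ×ℕ → ℝ := fun p =>
  (1/(p.1:ℝ)^2) * ((1/(p.2.1:ℝ)^2) * (128/((p.2.2:ℝ)+4)^2))

lemma summable_Gw : Summable Gw := by
  have h1 : Summable (fun n : ℕ => 1/(n:ℝ)^2) :=
    Real.summable_one_div_nat_pow.mpr one_lt_two
  have h3 : Summable (fun n : ℕ => 128/((n:ℝ)+4)^2) := by
    have h2 := (h1.mul_left 128).comp_injective (add_left_injective 4)
    apply h2.congr
    intro n
    simp only [Function.comp]
    push_cast
    ring
  have h23 : Summable (fun q : ℕ×ℕ => (1/(q.1:ℝ)^2) * (128/((q.2:ℝ)+4)^2)) := by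
    apply h1.mul_of_nonneg h3
    · intro n; positivity
    · intro n; positivity
  have hG := h1.mul_of_nonneg h23 (fun n => by positivity) (fun q => by positivity)
  exact hG

noncomputable def Hw : (ℕ×ℕ×ℕ) × (Fin 9 × Fin 32 × Bool) → ℝ := fun p => Gw p.1 * 1

lemma summable_Hw : Summable Hw := by
  have hfin : Summable (fun _ : Fin 9 × Fin 32 × Bool => (1:ℝ)) := Summable.of_finite
  exact summable_Gw.mul_of_nonneg hfin (fun p => by unfold Gw; positivity) (fun q => by norm_num)

lemma summable_T1 : Summable (fun d : T1 => 1/((d:ℕ):ℝ)) := by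
  have hs := summable_Hw.comp_injective Psi_inj
  apply Summable.of_nonneg_of_le (fun d => by positivity) ?_ hs
  intro d
  show 1/((d:ℕ):ℝ) ≤ Hw (Psi d)
  have hy1 := (Wd_spec d).1
  have hu_pos : 0 < uD (Yd d) (zd d) := uD_pos hy1
  have hw_pos : 0 < Yd d / uD (Yd d) (zd d) :=
    Nat.div_pos (Nat.le_of_dvd (by omega) uD_dvd) hu_pos
  have huw : uD (Yd d) (zd d) * (Yd d / uD (Yd d) (zd d)) = Yd d :=
    Nat.mul_div_cancel' uD_dvd
  have hdpos : 0 < (d:ℕ) := T1_pos d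
  set u := uD (Yd d) (zd d) with hudef
  set w := Yd d / u with hwdef
  set k := kd d with hkdef2
  have key := key_ineq d
  have hu0 : ((u:ℝ)) ≠ 0 := by positivity
  have hw0 : ((w:ℝ)) ≠ 0 := by positivity
  have hY0 : (0:ℝ) < ((Yd d):ℝ) := by exact_mod_cast hy1
  have hHw : Hw (Psi d) = 128 / (((k:ℝ)+4)^2 * ((Yd d):ℝ)^2) := by
    show (1/(u:ℝ)^2) * ((1/(w:ℝ)^2) * (128/((k:ℝ)+4)^2)) * 1 = _
    have hc : ((Yd d):ℝ) = (u:ℝ)*(w:ℝ) := by exact_mod_cast huw.symm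
    rw [hc]
    field_simp
  rw [hHw]
  rw [div_le_div_iff₀ (by exact_mod_cast hdpos) (by positivity)]
  have hcast : (((k+4)^2*(Yd d)^2 : ℕ):ℝ) ≤ ((128*(d:ℕ) : ℕ):ℝ) := by exact_mod_cast key
  push_cast at hcast ⊢
  nlinarith [hcast]

end Stmt18

/-- there is a constant `C` bounding `Σ_{d ∈ T¹} d^{-s}` for all real `s > 1`;
in particular `Σ_{d ∈ T¹} 1/d` converges, and
`Σ_{d ≡ 1 (4), d non-square} d^{-s} - Σ_{d ≡ 1 (4), d non-square, d ∉ T¹} d^{-s}` remains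
bounded as `s → 1⁺`. -/
theorem stmt_18 :
    (∃ C : ℝ, ∀ s : ℝ, 1 < s → ∑' d : T1, ((d : ℕ) : ℝ) ^ (-s) ≤ C) ∧
    Summable (fun d : T1 => 1 / ((d : ℕ) : ℝ)) ∧
    (∃ C : ℝ, ∀ s : ℝ, 1 < s →
      |(∑' d : {d : ℕ | 0 < d ∧ ¬ IsSquare d ∧ d % 4 = 1}, ((d : ℕ) : ℝ) ^ (-s)) -
        ∑' d : {d : ℕ | 0 < d ∧ ¬ IsSquare d ∧ d % 4 = 1 ∧ d ∉ T1}, ((d : ℕ) : ℝ) ^ (-s)| ≤ C) := by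
  classical
  have hsum := Stmt18.summable_T1
  set C : ℝ := ∑' d : T1, 1/((d:ℕ):ℝ) with hC
  have hone : ∀ d : T1, 1 ≤ ((d:ℕ):ℝ) := fun d => by
    have := Stmt18.T1_pos d
    exact_mod_cast this
  have hterm : ∀ s : ℝ, 1 < s → ∀ d : T1, ((d:ℕ):ℝ)^(-s) ≤ 1/((d:ℕ):ℝ) := by
    intro s hs d
    have h1 : ((d:ℕ):ℝ)^(-s) ≤ ((d:ℕ):ℝ)^(-1:ℝ) :=
      Real.rpow_le_rpow_of_exponent_le (hone d) (by linarith)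
    rwa [Real.rpow_neg_one, ← one_div] at h1
  have hsum_s : ∀ s : ℝ, 1 < s → Summable (fun d : T1 => ((d:ℕ):ℝ)^(-s)) := fun s hs =>
    Summable.of_nonneg_of_le (fun d => Real.rpow_nonneg (by positivity) _) (hterm s hs) hsum
  have hbound : ∀ s : ℝ, 1 < s → ∑' d : T1, ((d:ℕ):ℝ)^(-s) ≤ C := fun s hs =>
    Summable.tsum_le_tsum (hterm s hs) (hsum_s s hs) hsum
  refine ⟨⟨C, hbound⟩, hsum, ⟨C, ?_⟩⟩
  intro s hs
  set f : ℕ → ℝ := fun n => (n:ℝ)^(-s) with hf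
  have hfnn : ∀ n, 0 ≤ f n := fun n => Real.rpow_nonneg (by positivity) _
  have hfsum : Summable f := Real.summable_nat_rpow.mpr (by linarith)
  set SA : Set ℕ := {d : ℕ | 0 < d ∧ ¬ IsSquare d ∧ d % 4 = 1} with hSA
  set SB : Set ℕ := {d : ℕ | 0 < d ∧ ¬ IsSquare d ∧ d % 4 = 1 ∧ d ∉ T1} with hSB
  have hsubA : Summable (SA.indicator f) := hfsum.indicator _
  have hsubB : Summable (SB.indicator f) := hfsum.indicator _
  have hsubT : Summable (T1.indicator f) := hfsum.indicator _
  have hT1A : ∀ n, n ∈ T1 → n ∈ SA := fun n hn => ⟨hn.1, hn.2.1, hn.2.2.1⟩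
  have hident : SA.indicator f = fun n => SB.indicator f n + T1.indicator f n := by
    funext n
    by_cases hT : n ∈ T1
    · have hA : n ∈ SA := hT1A n hT
      have hB : n ∉ SB := fun hB => hB.2.2.2 hT
      simp [Set.indicator, hA, hB, hT]
    · by_cases hA : n ∈ SA
      · have hB : n ∈ SB := ⟨hA.1, hA.2.1, hA.2.2, hT⟩
        simp [Set.indicator, hA, hB, hT]
      · have hB : n ∉ SB := fun hB => hA ⟨hB.1, hB.2.1, hB.2.2.1⟩
        simp [Set.indicator, hA, hB, hT]
  have htsum : ∑' n, SA.indicator f n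
      = (∑' n, SB.indicator f n) + ∑' n, T1.indicator f n := by
    rw [hident]
    exact Summable.tsum_add hsubB hsubT
  have e1 : ∑' d : SA, f d = ∑' n, SA.indicator f n := tsum_subtype SA f
  have e2 : ∑' d : SB, f d = ∑' n, SB.indicator f n := tsum_subtype SB f
  have e3 : ∑' d : T1, f d = ∑' n, T1.indicator f n := tsum_subtype T1 f
  have hgoal : (∑' d : SA, f d) - (∑' d : SB, f d) = ∑' d : T1, f d := by
    rw [e1, e2, e3, htsum]; ring
  calc |(∑' d : SA, f d) - (∑' d : SB, f d)| = |∑' d : T1, f d| := by rw [hgoal]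
    _ = ∑' d : T1, f d := abs_of_nonneg (tsum_nonneg (fun d => hfnn _))
    _ ≤ C := hbound s hs
end
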